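/- arXiv:1012.1222 — 8 statements merged into one kernel-verified Lean document; each statement's English description precedes it below -/
import Mathlib

section
/- Any non-empty subshift of finite type in Q^(Z^2) (Q a finite alphabet) contains a quasi-periodic configuration, i.e., a configuration c such that every finite pattern appearing in c appears in every sufficiently large square pattern of c. -/
/-- A configuration of the discrete plane. -/
def Config (Q : Type*) := ℤ × ℤ → Q

/-- A pattern: a finite domain together with colors (only values on `dom` matter). -/
structure Pattern (Q : Type*) where
  dom : Finset (ℤ × ℤ)
  val : ℤ × ℤ → Q

/-- The square domain `[-n,n]^2`. -/
noncomputable def square (n : ℕ) : Finset (ℤ × ℤ) := Finset.Icc (-(n:ℤ), -(n:ℤ)) ((n:ℤ), (n:ℤ))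

/-- The rectangle `[a,b] × [c,d]`. -/
noncomputable def rect (a b c d : ℤ) : Finset (ℤ × ℤ) := Finset.Icc (a, c) (b, d)

/-- The pattern of `c` with domain `D`, shifted by `v`. -/
def subPattern {Q : Type*} (c : Config Q) (v : ℤ × ℤ) (D : Finset (ℤ × ℤ)) : Pattern Q :=
  ⟨D, fun x => c (v + x)⟩

/-- `P` appears in the configuration `c`. -/
def Pattern.appearsIn {Q : Type*} (P : Pattern Q) (c : Config Q) : Prop :=
  ∃ v : ℤ × ℤ, ∀ x ∈ P.dom, c (v + x) = P.val x

/-- `P` appears in the pattern `M`. -/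
def Pattern.appearsInPat {Q : Type*} (P M : Pattern Q) : Prop :=
  ∃ v : ℤ × ℤ, ∀ x ∈ P.dom, v + x ∈ M.dom ∧ M.val (v + x) = P.val x

/-- `c` is a valid tiling for the set of forbidden patterns `F`. -/
def ValidFor {Q : Type*} (F : Set (Pattern Q)) (c : Config Q) : Prop :=
  ∀ P ∈ F, ¬ P.appearsIn c

/-- `c` is quasi-periodic: every pattern appearing in `c` appears in every
sufficiently large square pattern of `c`. -/
def QuasiPeriodic {Q : Type*} (c : Config Q) : Prop :=
  ∀ P : Pattern Q, P.appearsIn c →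
    ∃ n : ℕ, ∀ v : ℤ × ℤ, P.appearsInPat (subPattern c v (square n))

def shiftC {Q : Type*} (v : ℤ × ℤ) (f : ℤ × ℤ → Q) : ℤ × ℤ → Q := fun x => f (v + x)

lemma appears_shift {Q : Type*} (P : Pattern Q) (f : ℤ × ℤ → Q) (v : ℤ × ℤ)
    (h : P.appearsIn (shiftC v f)) : P.appearsIn f := by
  obtain ⟨w, hw⟩ := h
  exact ⟨v + w, fun x hx => by simpa [shiftC, add_assoc] using hw x hx⟩

lemma valid_shift {Q : Type*} (F : Set (Pattern Q)) (f : ℤ × ℤ → Q) (v : ℤ × ℤ)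
    (h : ValidFor F f) : ValidFor F (shiftC v f) :=
  fun P hP hap => h P hP (appears_shift P f v hap)

section top
variable {Q : Type} [TopologicalSpace Q] [DiscreteTopology Q]

lemma isClopen_match (P : Pattern Q) (v : ℤ × ℤ) :
    IsClopen {f : ℤ × ℤ → Q | ∀ x ∈ P.dom, f (v + x) = P.val x} := by
  have h : {f : ℤ × ℤ → Q | ∀ x ∈ P.dom, f (v + x) = P.val x}
      = ⋂ x ∈ P.dom, {f : ℤ × ℤ → Q | f (v + x) = P.val x} := by ext f; simp
  rw [h]
  exact isClopen_biInter_finset fun x _ =>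
    (isClopen_discrete {P.val x}).preimage (continuous_apply (v + x))

lemma isClosed_notAppears (P : Pattern Q) :
    IsClosed {f : ℤ × ℤ → Q | ¬ P.appearsIn f} := by
  have h : {f : ℤ × ℤ → Q | ¬ P.appearsIn f}
      = ⋂ v : ℤ × ℤ, {f : ℤ × ℤ → Q | ∀ x ∈ P.dom, f (v + x) = P.val x}ᶜ := by
    ext f; simp [Pattern.appearsIn]
  rw [h]
  exact isClosed_iInter fun v => (isClopen_match P v).compl.isClosed

lemma isClosed_valid (F : Set (Pattern Q)) :
    IsClosed {f : ℤ × ℤ → Q | ValidFor F f} := by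
  have h : {f : ℤ × ℤ → Q | ValidFor F f}
      = ⋂ P ∈ F, {f : ℤ × ℤ → Q | ¬ P.appearsIn f} := by
    ext f; simp [ValidFor]
  rw [h]
  exact isClosed_biInter fun P _ => isClosed_notAppears P

lemma isOpen_window (P : Pattern Q) (n : ℕ) :
    IsOpen {f : ℤ × ℤ → Q | ∃ w : ℤ × ℤ, ∀ x ∈ P.dom,
      w + x ∈ square n ∧ f (w + x) = P.val x} := by
  have h : {f : ℤ × ℤ → Q | ∃ w : ℤ × ℤ, ∀ x ∈ P.dom,
        w + x ∈ square n ∧ f (w + x) = P.val x}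
      = ⋃ w : ℤ × ℤ, ⋂ x ∈ P.dom,
          ({f : ℤ × ℤ → Q | f (w + x) = P.val x} ∩ {_f : ℤ × ℤ → Q | w + x ∈ square n}) := by
    ext f
    simp only [Set.mem_setOf_eq, Set.mem_iUnion, Set.mem_iInter, Set.mem_inter_iff]
    exact ⟨fun ⟨w, hw⟩ => ⟨w, fun x hx => ⟨(hw x hx).2, (hw x hx).1⟩⟩,
           fun ⟨w, hw⟩ => ⟨w, fun x hx => ⟨(hw x hx).2, (hw x hx).1⟩⟩⟩
  rw [h]
  refine isOpen_iUnion fun w => isOpen_biInter_finset fun x _ => IsOpen.inter ?_ ?_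
  · exact ((isClopen_discrete {P.val x}).preimage (continuous_apply (w + x))).isOpen
  · by_cases hx : w + x ∈ square n
    · simp [hx]
    · simp [hx]
end top

lemma square_mono {m n : ℕ} (h : m ≤ n) : square m ⊆ square n := by
  apply Finset.Icc_subset_Icc <;>
    simp [Prod.le_def] <;> exact_mod_cast h


theorem stmt0 {Q : Type} [Fintype Q] (F : Set (Pattern Q)) (hF : F.Finite)
    (hne : ∃ c : Config Q, ValidFor F c) :
    ∃ c : Config Q, ValidFor F c ∧ QuasiPeriodic c := by
  classical
  letI : TopologicalSpace Q := ⊥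
  haveI : DiscreteTopology Q := ⟨rfl⟩
  obtain ⟨c₀, hc₀⟩ := hne
  set X : Set (ℤ × ℤ → Q) := {f | ValidFor F f} with hXdef
  set S : Set (Set (ℤ × ℤ → Q)) :=
    {A | A.Nonempty ∧ IsClosed A ∧ A ⊆ X ∧ ∀ f ∈ A, ∀ v : ℤ × ℤ, shiftC v f ∈ A} with hSdef
  have hXS : X ∈ S :=
    ⟨⟨c₀, hc₀⟩, isClosed_valid F, subset_rfl, fun f hf v => valid_shift F f v hf⟩
  have hchain : ∀ C ⊆ S, IsChain (· ⊆ ·) C → C.Nonempty → ∃ lb ∈ S, ∀ s ∈ C, lb ⊆ s := by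
    intro C hCS hC hCne
    refine ⟨⋂₀ C, ⟨?_, ?_, ?_, ?_⟩, fun s hs => Set.sInter_subset_of_mem hs⟩
    · haveI := hCne.to_subtype
      refine IsCompact.nonempty_sInter_of_directed_nonempty_isCompact_isClosed ?_
        (fun U hU => (hCS hU).1) (fun U hU => (hCS hU).2.1.isCompact)
        (fun U hU => (hCS hU).2.1)
      intro a ha b hb
      rcases eq_or_ne a b with rfl | hab
      · exact ⟨a, ha, subset_rfl, subset_rfl⟩
      · rcases hC ha hb hab with h | h
        · exact ⟨a, ha, subset_rfl, h⟩
        · exact ⟨b, hb, h, subset_rfl⟩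
    · exact isClosed_sInter fun U hU => (hCS hU).2.1
    · obtain ⟨U, hU⟩ := hCne
      exact (Set.sInter_subset_of_mem hU).trans (hCS hU).2.2.1
    · intro f hf v U hU
      exact (hCS hU).2.2.2 f (hf U hU) v
  obtain ⟨M, -, hM⟩ := zorn_superset_nonempty S hchain X hXS
  obtain ⟨⟨c, hcM⟩, hMcl, hMsubX, hMinv⟩ := hM.prop
  -- every pattern of c appears in every element of M
  have key : ∀ P : Pattern Q, P.appearsIn c → ∀ d ∈ M, P.appearsIn d := by
    intro P hP d hdM
    by_contra hdP
    set Y : Set (ℤ × ℤ → Q) := {f | f ∈ M ∧ ¬ P.appearsIn f} with hYdef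
    have hYS : Y ∈ S := by
      refine ⟨⟨d, hdM, hdP⟩, ?_, fun f hf => hMsubX hf.1, ?_⟩
      · exact hMcl.inter (isClosed_notAppears P)
      · intro f hf v
        exact ⟨hMinv f hf.1 v, fun hap => hf.2 (appears_shift P f v hap)⟩
    have hMY : M ⊆ Y := hM.2 hYS fun f hf => hf.1
    exact (hMY hcM).2 hP
  -- uniform window
  have key2 : ∀ P : Pattern Q, P.appearsIn c → ∃ n : ℕ, ∀ d ∈ M, ∃ w : ℤ × ℤ,
      ∀ x ∈ P.dom, w + x ∈ square n ∧ d (w + x) = P.val x := by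
    intro P hP
    by_contra h
    push_neg at h
    set B : ℕ → Set (ℤ × ℤ → Q) := fun n =>
      {f | f ∈ M ∧ ¬ ∃ w : ℤ × ℤ, ∀ x ∈ P.dom, w + x ∈ square n ∧ f (w + x) = P.val x}
      with hBdef
    have hBcl : ∀ n, IsClosed (B n) := fun n =>
      hMcl.inter (isOpen_window P n).isClosed_compl
    have hBne : ∀ n, (B n).Nonempty := by
      intro n
      obtain ⟨d, hdM, hd⟩ := h n
      refine ⟨d, hdM, ?_⟩
      rintro ⟨w, hw⟩
      obtain ⟨x, hx, hx2⟩ := hd w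
      exact hx2 (hw x hx).1 (hw x hx).2
    have hBanti : ∀ m n : ℕ, m ≤ n → B n ⊆ B m := by
      intro m n hmn f hf
      refine ⟨hf.1, ?_⟩
      rintro ⟨w, hw⟩
      exact hf.2 ⟨w, fun x hx => ⟨square_mono hmn (hw x hx).1, (hw x hx).2⟩⟩
    have hInter : (⋂ n, B n).Nonempty :=
      IsCompact.nonempty_iInter_of_directed_nonempty_isCompact_isClosed B
        (fun i j => ⟨max i j, hBanti i _ (le_max_left i j), hBanti j _ (le_max_right i j)⟩)
        hBne (fun n => (hBcl n).isCompact) hBcl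
    obtain ⟨d, hd⟩ := hInter
    simp only [Set.mem_iInter] at hd
    obtain ⟨w, hw⟩ := key P hP d (hd 0).1
    set n : ℕ := P.dom.sup fun x => (w + x).1.natAbs ⊔ (w + x).2.natAbs with hn
    apply (hd n).2
    refine ⟨w, fun x hx => ⟨?_, hw x hx⟩⟩
    have h1 : (w + x).1.natAbs ⊔ (w + x).2.natAbs ≤ n := Finset.le_sup (f := fun x => (w + x).1.natAbs ⊔ (w + x).2.natAbs) hx
    have h2 : (w + x).1.natAbs ≤ n := le_trans le_sup_left h1
    have h3 : (w + x).2.natAbs ≤ n := le_trans le_sup_right h1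
    simp only [square, Finset.mem_Icc, Prod.le_def]
    omega
  refine ⟨c, hMsubX hcM, ?_⟩
  intro P hP
  obtain ⟨n, hn⟩ := key2 P hP
  refine ⟨n, fun v => ?_⟩
  obtain ⟨w, hw⟩ := hn (shiftC v c) (hMinv c hcM v)
  exact ⟨w, fun x hx => ⟨(hw x hx).1, (hw x hx).2⟩⟩
end

section
/- If a finite set of forbidden patterns F defines a tileset such that every tiling valid for F is quasi-periodic, then for every pattern P appearing in some valid tiling there exists an integer n such that in every valid tiling containing P, the pattern P appears in every square subpattern of the tiling with domain a translate of [-n,n]^2. -/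
/-- Sup-norm of a vector. -/
def normInf (p : ℤ × ℤ) : ℕ := max p.1.natAbs p.2.natAbs

lemma mem_square_iff (x : ℤ × ℤ) (n : ℕ) :
    x ∈ square n ↔ x.1.natAbs ≤ n ∧ x.2.natAbs ≤ n := by
  simp only [square, Finset.mem_Icc, Prod.le_def]
  omega

/-- One can move `a` by a step of size `≤ s` towards `0`, decreasing `|a|` by `s` (truncated). -/
lemma shrink (a : ℤ) (s : ℕ) :
    ∃ t : ℤ, t.natAbs ≤ s ∧ (a + t).natAbs ≤ a.natAbs - s := by
  rcases le_or_gt a.natAbs s with h | h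
  · exact ⟨-a, by omega, by omega⟩
  · rcases le_or_gt 0 a with h0 | h0
    · exact ⟨-(s : ℤ), by omega, by omega⟩
    · exact ⟨(s : ℤ), by omega, by omega⟩

/-- Validity is shift-invariant. -/
lemma validFor_shift {Q : Type*} {F : Set (Pattern Q)} {c : Config Q}
    (h : ValidFor F c) (t : ℤ × ℤ) : ValidFor F (fun x => c (t + x)) := by
  rintro P' hP' ⟨u, hu⟩
  refine h P' hP' ⟨t + u, fun x hx => ?_⟩
  rw [add_assoc]
  exact hu x hx

set_option maxHeartbeats 1000000 in
/-- If every valid tiling for `F` is quasi-periodic, then every pattern appearing in some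
valid tiling appears, in every valid tiling containing it, in every square subpattern
with domain a translate of `[-n,n]^2`. -/
theorem stmt1 {Q : Type} [Fintype Q] (F : Set (Pattern Q)) (hF : F.Finite)
    (hqp : ∀ c : Config Q, ValidFor F c → QuasiPeriodic c)
    (P : Pattern Q) (hP : ∃ c : Config Q, ValidFor F c ∧ P.appearsIn c) :
    ∃ n : ℕ, ∀ c : Config Q, ValidFor F c → P.appearsIn c →
      ∀ v : ℤ × ℤ, P.appearsInPat (subPattern c v (square n)) := by
  classical
  by_cases hdom : P.dom = ∅
  · exact ⟨0, fun c _ _ v => ⟨0, by simp [hdom]⟩⟩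
  by_contra hcon
  push_neg at hcon
  choose c hval happ v hv using hcon
  -- `k` : radius of a square containing the domain of `P`
  set k : ℕ := P.dom.sup normInf with hkdef
  have hk : ∀ x ∈ P.dom, normInf x ≤ k := fun x hx => Finset.le_sup hx
  obtain ⟨x0, hx0⟩ : ∃ x, x ∈ P.dom := Finset.nonempty_iff_ne_empty.2 hdom
  -- occurrences of `P` in the `n`-th (shifted) configuration
  set occ : ℕ → (ℤ × ℤ) → Prop := fun n z => ∀ x ∈ P.dom, c n (v n + z + x) = P.val x
    with hoccdef
  have hocc0 : ∀ n, ∃ z, occ n z := by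
    intro n
    obtain ⟨w0, hw0⟩ := happ n
    refine ⟨w0 - v n, fun x hx => ?_⟩
    have harg : v n + (w0 - v n) + x = w0 + x := by abel
    rw [harg]
    exact hw0 x hx
  have hex : ∀ n, ∃ r : ℕ, ∃ z, normInf z ≤ r ∧ occ n z := by
    intro n
    obtain ⟨z, hz⟩ := hocc0 n
    exact ⟨normInf z, z, le_rfl, hz⟩
  -- minimal-norm occurrence
  set R : ℕ → ℕ := fun n => Nat.find (hex n) with hRdef
  have hspec : ∀ n, ∃ z, normInf z ≤ R n ∧ occ n z := fun n => Nat.find_spec (hex n)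
  choose w hwR hwocc using hspec
  have hmin : ∀ n z, occ n z → R n ≤ normInf z := by
    intro n z hz
    exact Nat.find_le ⟨z, le_rfl, hz⟩
  clear_value R
  -- the minimal norm is large (since `P` misses the central `n`-square)
  have hRn : ∀ n, n ≤ R n + k := by
    intro n
    by_contra hle
    push_neg at hle
    refine hv n ⟨w n, fun x hx => ?_⟩
    have h1 : normInf (w n + x) ≤ R n + k := by
      have h2 := hwR n
      have h3 := hk x hx
      simp only [normInf, Prod.fst_add, Prod.snd_add] at h2 h3 ⊢
      clear * - h2 h3 hle
      omega
    constructor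
    · show w n + x ∈ square n
      rw [mem_square_iff]
      simp only [normInf] at h1
      clear * - h1 hle
      omega
    · show c n (v n + (w n + x)) = P.val x
      have harg : v n + (w n + x) = v n + w n + x := by abel
      rw [harg]
      exact hwocc n x hx
  -- recentered configurations
  set e' : ℕ → Config Q := fun n x => c n (v n + w n + x) with he'def
  have hocc_e : ∀ n, ∀ x ∈ P.dom, e' n x = P.val x := fun n x hx => hwocc n x hx
  have hval_e : ∀ n, ValidFor F (e' n) := fun n => validFor_shift (hval n) _
  -- ultrafilter limit
  set U : Ultrafilter ℕ := Ultrafilter.of Filter.atTop with hUdef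
  have hUat : ∀ m : ℕ, {n | m ≤ n} ∈ U := fun m =>
    Ultrafilter.of_le Filter.atTop (Filter.mem_atTop m)
  have hxq : ∀ x : ℤ × ℤ, ∃ q : Q, {n | e' n x = q} ∈ U := by
    intro x
    by_contra h
    push_neg at h
    have h2 : ∀ q : Q, {n | e' n x ≠ q} ∈ U := by
      intro q
      have := (Ultrafilter.compl_mem_iff_notMem (s := {n | e' n x = q})).2 (h q)
      exact this
    have h3 : (⋂ q : Q, {n : ℕ | e' n x ≠ q}) ∈ U := Filter.iInter_mem.2 h2
    have h4 : (⋂ q : Q, {n : ℕ | e' n x ≠ q}) = ∅ := by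
      ext n
      simp only [Set.mem_iInter, Set.mem_setOf_eq, Set.mem_empty_iff_false, iff_false,
        not_forall, not_not]
      exact ⟨e' n x, rfl⟩
    rw [h4] at h3
    exact Ultrafilter.empty_notMem h3
  choose e he using hxq
  -- agreement on finite sets happens on an ultrafilter set
  have hagree : ∀ S : Finset (ℤ × ℤ), {n | ∀ x ∈ S, e' n x = e x} ∈ U := by
    intro S
    have h1 : (⋂ x ∈ (S : Set (ℤ × ℤ)), {n : ℕ | e' n x = e x}) ∈ U :=
      (Filter.biInter_mem S.finite_toSet).2 fun x _ => he x
    refine Filter.mem_of_superset h1 ?_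
    intro n hn x hx
    exact Set.mem_iInter₂.1 hn x hx
  -- the limit is valid
  have hval_lim : ValidFor F e := by
    rintro P' hP' ⟨u, hu⟩
    obtain ⟨n, hn⟩ := Ultrafilter.nonempty_of_mem (hagree (P'.dom.image (fun x => u + x)))
    refine hval_e n P' hP' ⟨u, fun x hx => ?_⟩
    rw [hn (u + x) (Finset.mem_image_of_mem _ hx)]
    exact hu x hx
  -- `P` appears in the limit
  have happ_lim : P.appearsIn e := by
    obtain ⟨n, hn⟩ := Ultrafilter.nonempty_of_mem (hagree P.dom)
    refine ⟨0, fun x hx => ?_⟩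
    rw [zero_add, ← hn x hx]
    exact hocc_e n x hx
  -- quasi-periodicity of the limit
  obtain ⟨m, hm⟩ := hqp e hval_lim P happ_lim
  set s : ℕ := m + k + 1 with hsdef
  set T : ℕ := s + m + 2 * k with hTdef
  obtain ⟨n, hnA, hnB⟩ :
      ∃ n, (∀ x ∈ square T, e' n x = e x) ∧ s + k + 1 ≤ n := by
    have h1 : {n | ∀ x ∈ square T, e' n x = e x} ∩ {n | s + k + 1 ≤ n} ∈ U :=
      Filter.inter_mem (hagree (square T)) (hUat (s + k + 1))
    obtain ⟨n, hn1, hn2⟩ := Ultrafilter.nonempty_of_mem h1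
    exact ⟨n, hn1, hn2⟩
  have hR : s + 1 ≤ R n := by
    have h1 := hRn n
    clear * - h1 hnB hsdef
    omega
  -- a step towards the origin from the minimal occurrence
  obtain ⟨t1, ht1a, ht1b⟩ := shrink (w n).1 s
  obtain ⟨t2, ht2a, ht2b⟩ := shrink (w n).2 s
  set vv : ℤ × ℤ := (t1, t2) with hvvdef
  clear_value s T vv
  obtain ⟨u, hu⟩ := hm vv
  -- bound on the witness `u`
  have hu1 : u.1.natAbs ≤ m + k ∧ u.2.natAbs ≤ m + k := by
    have h1 := (hu x0 hx0).1
    simp only [subPattern] at h1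
    rw [mem_square_iff] at h1
    have h2 := hk x0 hx0
    simp only [normInf, Prod.fst_add, Prod.snd_add] at h1 h2
    clear * - h1 h2
    omega
  -- `P` occurs in `e' n` at `vv + u`, close to the origin
  have hz : occ n (w n + (vv + u)) := by
    simp only [hoccdef]
    intro x hx
    have harg : v n + (w n + (vv + u)) + x = v n + w n + (vv + u + x) := by abel
    rw [harg]
    show e' n (vv + u + x) = P.val x
    have hb : vv + u + x ∈ square T := by
      rw [mem_square_iff]
      have h3 := hk x hx
      simp only [normInf, hvvdef, Prod.fst_add, Prod.snd_add] at h3 ⊢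
      clear * - h3 ht1a ht2a hu1 hR hnB hsdef hTdef
      omega
    rw [hnA _ hb]
    have h4 := (hu x hx).2
    simp only [subPattern] at h4
    have harg2 : vv + u + x = vv + (u + x) := by abel
    rw [harg2]
    exact h4
  -- contradiction with minimality
  have h5 := hmin n _ hz
  have h6 : normInf (w n + (vv + u)) < R n := by
    have hw1 : (w n).1.natAbs ≤ R n ∧ (w n).2.natAbs ≤ R n := by
      have := hwR n
      simp only [normInf] at this
      omega
    simp only [normInf, hvvdef, Prod.fst_add, Prod.snd_add]
    clear * - hw1 ht1b ht2b hu1 hR hsdef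
    omega
  clear * - h5 h6
  omega
end

section
/- Suppose a tileset defined by a finite set F of forbidden patterns admits only quasi-periodic tilings. Then for every pattern P with domain [-n,n]^2 that appears in some valid tiling, there exists an integer m such that every locally valid pattern R with domain [-n-m,n+m]^2 (containing no forbidden pattern of F) whose central [-n,n]^2 restriction equals P contains another occurrence of P in each of the four corner subpatterns R|[-n-m,-n]^2, R|[-n-m,-n]×[n,n+m], R|[n,n+m]×[-n-m,-n], and R|[n,n+m]^2. -/
/-- A pattern is locally valid for `F` if no forbidden pattern of `F` appears inside it. -/
def LocallyValid {Q : Type*} (F : Set (Pattern Q)) (R : Pattern Q) : Prop :=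
  ∀ Pf ∈ F, ¬ Pf.appearsInPat R

/-- The four-corners property: every locally valid pattern `R` on `[-n-m,n+m]^2` whose
central `[-n,n]^2` restriction is `P` contains `P` in each of the four corner subpatterns. -/
def FourCorners {Q : Type*} (F : Set (Pattern Q)) (P : Pattern Q) (n m : ℕ) : Prop :=
  ∀ R : Pattern Q, R.dom = square (n + m) → LocallyValid F R →
    (∀ x ∈ square n, R.val x = P.val x) →
      (P.appearsInPat ⟨rect (-((n:ℤ)+(m:ℤ))) (-(n:ℤ)) (-((n:ℤ)+(m:ℤ))) (-(n:ℤ)), R.val⟩ ∧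
       P.appearsInPat ⟨rect (-((n:ℤ)+(m:ℤ))) (-(n:ℤ)) (n:ℤ) ((n:ℤ)+(m:ℤ)), R.val⟩ ∧
       P.appearsInPat ⟨rect (n:ℤ) ((n:ℤ)+(m:ℤ)) (-((n:ℤ)+(m:ℤ))) (-(n:ℤ)), R.val⟩ ∧
       P.appearsInPat ⟨rect (n:ℤ) ((n:ℤ)+(m:ℤ)) (n:ℤ) ((n:ℤ)+(m:ℤ)), R.val⟩)



lemma mem_square {x : ℤ × ℤ} {n : ℕ} :
    x ∈ square n ↔ -(n:ℤ) ≤ x.1 ∧ x.1 ≤ n ∧ -(n:ℤ) ≤ x.2 ∧ x.2 ≤ n := by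
  cases x
  simp only [square, Finset.mem_Icc, Prod.mk_le_mk]
  omega

lemma appearsInPat_mono {Q : Type*} {P M M' : Pattern Q} (hdom : M.dom ⊆ M'.dom)
    (hval : ∀ y ∈ M.dom, M'.val y = M.val y) :
    P.appearsInPat M → P.appearsInPat M' := by
  rintro ⟨v, hv⟩
  exact ⟨v, fun x hx => ⟨hdom (hv x hx).1, ((hval _ (hv x hx).1).trans (hv x hx).2)⟩⟩

/-- endpoints of a corner interval, selected by a Bool sign. -/
def clo (n m : ℕ) (e : Bool) : ℤ := if e then (n:ℤ) else -((n:ℤ)+m)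
def chi (n m : ℕ) (e : Bool) : ℤ := if e then (n:ℤ)+m else -(n:ℤ)
def ccen (n N : ℕ) (e : Bool) : ℤ := if e then (n:ℤ)+N else -((n:ℤ)+N)

lemma clo_anti {n m m' : ℕ} (h : m ≤ m') (e : Bool) : clo n m' e ≤ clo n m e := by
  cases e <;> simp only [clo, if_true, if_false, Bool.false_eq_true] <;> omega

lemma chi_mono {n m m' : ℕ} (h : m ≤ m') (e : Bool) : chi n m e ≤ chi n m' e := by
  cases e <;> simp only [chi, if_true, if_false, Bool.false_eq_true] <;> omega

lemma corner_exists {Q : Type} [Fintype Q] (F : Set (Pattern Q))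
    (hqp : ∀ c : Config Q, ValidFor F c → QuasiPeriodic c)
    (n : ℕ) (P : Pattern Q) (hdom : P.dom = square n)
    (hP : ∃ c : Config Q, ValidFor F c ∧ P.appearsIn c) (ex ey : Bool) :
    ∃ m : ℕ, ∀ R : Pattern Q, R.dom = square (n + m) → LocallyValid F R →
      (∀ x ∈ square n, R.val x = P.val x) →
      P.appearsInPat ⟨Finset.Icc (clo n m ex, clo n m ey) (chi n m ex, chi n m ey), R.val⟩ := by
  by_contra hcon
  push_neg at hcon
  choose R hRdom hRvalid hRcen hRnot using hcon
  obtain ⟨U, hU⟩ : ∃ U : Ultrafilter ℕ, ↑U ≤ (Filter.atTop : Filter ℕ) :=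
    ⟨Ultrafilter.of _, Ultrafilter.of_le _⟩
  set c : ℕ → ℤ × ℤ → Q := fun m => (R m).val with hc
  -- limit along the ultrafilter
  have hlim : ∀ x : ℤ × ℤ, ∃ q : Q, {m | c m x = q} ∈ U := by
    intro x
    by_contra h
    push_neg at h
    have hh : (⋂ q : Q, {m | c m x = q}ᶜ) ∈ U :=
      Filter.iInter_mem.2 fun q => Ultrafilter.compl_mem_iff_notMem.2 (h q)
    obtain ⟨m, hm⟩ := U.nonempty_of_mem hh
    simp only [Set.mem_iInter, Set.mem_compl_iff, Set.mem_setOf_eq] at hm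
    exact hm (c m x) rfl
  choose d hd using hlim
  -- agreement on finite sets
  have hagr : ∀ S : Finset (ℤ × ℤ), {m | ∀ x ∈ S, c m x = d x} ∈ U := by
    intro S
    have hh : (⋂ x ∈ (S : Set (ℤ × ℤ)), {m | c m x = d x}) ∈ U :=
      (Filter.biInter_mem S.finite_toSet).2 fun x _ => hd x
    refine Filter.mem_of_superset hh ?_
    intro m hm
    simp only [Set.mem_iInter, Set.mem_setOf_eq] at hm ⊢
    exact fun x hx => hm x hx
  -- sets in U are unbounded
  have hbig : ∀ A : Set ℕ, A ∈ U → ∀ M : ℕ, ∃ m, m ∈ A ∧ M ≤ m := by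
    intro A hA M
    have h2 : {b : ℕ | M ≤ b} ∈ U := hU (Filter.mem_atTop M)
    obtain ⟨m, hm⟩ := U.nonempty_of_mem (Filter.inter_mem hA h2)
    exact ⟨m, hm.1, hm.2⟩
  -- the limit configuration is valid
  have hvalid : ValidFor F d := by
    rintro Pf hPf ⟨v, hv⟩
    set S : Finset (ℤ × ℤ) := Pf.dom.image (fun x => v + x) with hS
    obtain ⟨B, hB⟩ : ∃ B : ℕ, ∀ y ∈ S, y ∈ square B := by
      refine ⟨S.sup (fun p => p.1.natAbs ⊔ p.2.natAbs), fun y hy => ?_⟩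
      have h0 : y.1.natAbs ⊔ y.2.natAbs ≤ S.sup (fun p => p.1.natAbs ⊔ p.2.natAbs) :=
        Finset.le_sup (f := fun p => p.1.natAbs ⊔ p.2.natAbs) hy
      have h1 : y.1.natAbs ≤ S.sup (fun p => p.1.natAbs ⊔ p.2.natAbs) :=
        le_trans le_sup_left h0
      have h2 : y.2.natAbs ≤ S.sup (fun p => p.1.natAbs ⊔ p.2.natAbs) :=
        le_trans le_sup_right h0
      rw [mem_square]; omega
    obtain ⟨m, hm, hmB⟩ := hbig _ (hagr S) B
    refine hRvalid m Pf hPf ⟨v, fun x hx => ?_⟩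
    have hvx : v + x ∈ S := Finset.mem_image_of_mem _ hx
    constructor
    · rw [hRdom m, mem_square]
      have := (mem_square).1 (hB _ hvx)
      omega
    · exact (hm _ hvx).trans (hv x hx)
  -- P appears in d
  have hPd : P.appearsIn d := by
    refine ⟨0, fun x hx => ?_⟩
    obtain ⟨m, hm, -⟩ := hbig _ (hagr {x}) 0
    have h1 : c m x = d x := hm x (Finset.mem_singleton_self x)
    have h2 : c m x = P.val x := hRcen m x (hdom ▸ hx)
    rw [zero_add]
    exact h1.symm.trans h2
  -- quasi-periodicity of d
  obtain ⟨N, hN⟩ := hqp d hvalid P hPd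
  obtain ⟨w, hw⟩ := hN (ccen n N ex, ccen n N ey)
  set u : ℤ × ℤ := (ccen n N ex, ccen n N ey) + w with hu
  have hkey : ∀ x ∈ square n, d (u + x) = P.val x ∧
      -(N:ℤ) ≤ (w + x).1 ∧ (w + x).1 ≤ N ∧ -(N:ℤ) ≤ (w + x).2 ∧ (w + x).2 ≤ N := by
    intro x hx
    have h := hw x (hdom ▸ hx)
    have h1 := (mem_square (n := N)).1 h.1
    refine ⟨?_, h1.1, h1.2.1, h1.2.2.1, h1.2.2.2⟩
    have h2 : d ((ccen n N ex, ccen n N ey) + (w + x)) = P.val x := h.2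
    rw [hu, add_assoc]
    exact h2
  -- pick a large index agreeing with d on the occurrence
  obtain ⟨m, hm, hmN⟩ := hbig _ (hagr ((square n).image (fun x => u + x))) (2 * N)
  refine hRnot m ⟨u, fun x hx => ?_⟩
  have hx' : x ∈ square n := hdom ▸ hx
  obtain ⟨hval, hb1, hb2, hb3, hb4⟩ := hkey x hx'
  have hux1 : (u + x).1 = ccen n N ex + (w + x).1 := by
    simp [hu, Prod.fst_add]; ring
  have hux2 : (u + x).2 = ccen n N ey + (w + x).2 := by
    simp [hu, Prod.snd_add]; ring
  constructor
  · show u + x ∈ Finset.Icc (clo n m ex, clo n m ey) (chi n m ex, chi n m ey)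
    rw [Finset.mem_Icc, Prod.mk_le_mk, Prod.mk_le_mk]
    cases ex <;> cases ey <;>
      simp only [clo, chi, ccen, if_true, if_false, Bool.false_eq_true] at hux1 hux2 ⊢ <;>
      omega
  · show c m (u + x) = P.val x
    have : u + x ∈ (square n).image (fun x => u + x) := Finset.mem_image_of_mem _ hx'
    exact (hm _ this).trans hval

/-- If a tileset admits only quasi-periodic tilings, then every pattern on `[-n,n]^2`
appearing in some valid tiling satisfies the four-corners property for some `m`. -/
theorem stmt2 {Q : Type} [Fintype Q] (F : Set (Pattern Q)) (hF : F.Finite)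
    (hqp : ∀ c : Config Q, ValidFor F c → QuasiPeriodic c)
    (n : ℕ) (P : Pattern Q) (hdom : P.dom = square n)
    (hP : ∃ c : Config Q, ValidFor F c ∧ P.appearsIn c) :
    ∃ m : ℕ, FourCorners F P n m := by
  obtain ⟨m1, h1⟩ := corner_exists F hqp n P hdom hP false false
  obtain ⟨m2, h2⟩ := corner_exists F hqp n P hdom hP false true
  obtain ⟨m3, h3⟩ := corner_exists F hqp n P hdom hP true false
  obtain ⟨m4, h4⟩ := corner_exists F hqp n P hdom hP true true
  refine ⟨m1 ⊔ m2 ⊔ m3 ⊔ m4, ?_⟩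
  set m : ℕ := m1 ⊔ m2 ⊔ m3 ⊔ m4 with hmdef
  intro R hRdom hRvalid hRcen
  have key : ∀ (exb eyb : Bool) (mi : ℕ), mi ≤ m →
      (∀ R' : Pattern Q, R'.dom = square (n + mi) → LocallyValid F R' →
        (∀ x ∈ square n, R'.val x = P.val x) →
        P.appearsInPat
          ⟨Finset.Icc (clo n mi exb, clo n mi eyb) (chi n mi exb, chi n mi eyb), R'.val⟩) →
      P.appearsInPat ⟨Finset.Icc (clo n m exb, clo n m eyb) (chi n m exb, chi n m eyb), R.val⟩ := by
    intro exb eyb mi hmi hcor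
    have hsub : square (n + mi) ⊆ square (n + m) := by
      intro y hy
      rw [mem_square] at hy ⊢
      push_cast at hy ⊢
      omega
    have hlv : LocallyValid F (⟨square (n + mi), R.val⟩ : Pattern Q) := by
      intro Pf hPf hap
      refine hRvalid Pf hPf
        (appearsInPat_mono (M := ⟨square (n + mi), R.val⟩) (M' := R) ?_ (fun y _ => rfl) hap)
      intro y hy
      rw [hRdom]
      exact hsub hy
    have happ := hcor ⟨square (n + mi), R.val⟩ rfl hlv (fun x hx => hRcen x hx)
    refine appearsInPat_mono
      (M := ⟨Finset.Icc (clo n mi exb, clo n mi eyb) (chi n mi exb, chi n mi eyb), R.val⟩)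
      (M' := ⟨Finset.Icc (clo n m exb, clo n m eyb) (chi n m exb, chi n m eyb), R.val⟩)
      ?_ (fun y _ => rfl) happ
    exact Finset.Icc_subset_Icc
      (Prod.mk_le_mk.2 ⟨clo_anti hmi exb, clo_anti hmi eyb⟩)
      (Prod.mk_le_mk.2 ⟨chi_mono hmi exb, chi_mono hmi eyb⟩)
  have e1 : rect (-((n:ℤ)+(m:ℤ))) (-(n:ℤ)) (-((n:ℤ)+(m:ℤ))) (-(n:ℤ)) =
      Finset.Icc (clo n m false, clo n m false) (chi n m false, chi n m false) := by
    simp [rect, clo, chi]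
  have e2 : rect (-((n:ℤ)+(m:ℤ))) (-(n:ℤ)) (n:ℤ) ((n:ℤ)+(m:ℤ)) =
      Finset.Icc (clo n m false, clo n m true) (chi n m false, chi n m true) := by
    simp [rect, clo, chi]
  have e3 : rect (n:ℤ) ((n:ℤ)+(m:ℤ)) (-((n:ℤ)+(m:ℤ))) (-(n:ℤ)) =
      Finset.Icc (clo n m true, clo n m false) (chi n m true, chi n m false) := by
    simp [rect, clo, chi]
  have e4 : rect (n:ℤ) ((n:ℤ)+(m:ℤ)) (n:ℤ) ((n:ℤ)+(m:ℤ)) =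
      Finset.Icc (clo n m true, clo n m true) (chi n m true, chi n m true) := by
    simp [rect, clo, chi]
  refine ⟨?_, ?_, ?_, ?_⟩
  · rw [e1]
    exact key false false m1 ((le_sup_left.trans le_sup_left).trans le_sup_left) h1
  · rw [e2]
    exact key false true m2 ((le_sup_right.trans le_sup_left).trans le_sup_left) h2
  · rw [e3]
    exact key true false m3 (le_sup_right.trans le_sup_left) h3
  · rw [e4]
    exact key true true m4 le_sup_right h4
end

section
/- If a tileset defined by a finite (or recursive, or recursively enumerable) set of forbidden patterns F admits only quasi-periodic tilings, then there exists a total computable function q : ℕ → ℕ such that for every valid tiling c and every n, the quasi-periodicity function of c at n is at most q(n); i.e., every pattern of c with domain [-n,n]^2 appears in every pattern of c with domain [-q(n),q(n)]^2. -/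
namespace QP
open Primrec

/-- bounded forall -/
def ball (N : ℕ) (f : ℕ → Bool) : Bool := (List.range N).all f
/-- bounded exists -/
def bex (N : ℕ) (f : ℕ → Bool) : Bool := (List.range N).any f

theorem ball_iff {N f} : ball N f = true ↔ ∀ i, i < N → f i = true := by
  simp [ball, List.all_eq_true, List.mem_range]

theorem bex_iff {N f} : bex N f = true ↔ ∃ i, i < N ∧ f i = true := by
  simp [bex, List.any_eq_true, List.mem_range]

private theorem all_eq_foldr (p : ℕ → Bool) (l : List ℕ) :
    l.all p = l.foldr (fun b s => p b && s) true := by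
  induction l with
  | nil => rfl
  | cons h t ih => simp [List.all_cons, ih]

private theorem any_eq_foldr (p : ℕ → Bool) (l : List ℕ) :
    l.any p = l.foldr (fun b s => p b || s) false := by
  induction l with
  | nil => rfl
  | cons h t ih => simp [List.any_cons, ih]

theorem primrec_ball {α} [Primcodable α] {g : α → ℕ} {f : α → ℕ → Bool}
    (hg : Primrec g) (hf : Primrec₂ f) : Primrec fun a => ball (g a) (f a) := by
  have h := Primrec.list_foldr (f := fun a => List.range (g a)) (g := fun _ => true)
    (h := fun a (p : ℕ × Bool) => f a p.1 && p.2)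
    (Primrec.list_range.comp hg) (Primrec.const true)
    ((Primrec.and.comp (hf.comp Primrec.fst (Primrec.fst.comp Primrec.snd))
      (Primrec.snd.comp Primrec.snd)).to₂)
  exact h.of_eq fun a => (all_eq_foldr (f a) (List.range (g a))).symm

theorem primrec_bex {α} [Primcodable α] {g : α → ℕ} {f : α → ℕ → Bool}
    (hg : Primrec g) (hf : Primrec₂ f) : Primrec fun a => bex (g a) (f a) := by
  have h := Primrec.list_foldr (f := fun a => List.range (g a)) (g := fun _ => false)
    (h := fun a (p : ℕ × Bool) => f a p.1 || p.2)
    (Primrec.list_range.comp hg) (Primrec.const false)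
    ((Primrec.or.comp (hf.comp Primrec.fst (Primrec.fst.comp Primrec.snd))
      (Primrec.snd.comp Primrec.snd)).to₂)
  exact h.of_eq fun a => (any_eq_foldr (f a) (List.range (g a))).symm

theorem primrec_list_all {α β : Type} [Primcodable α] (L : List β) {f : β → α → Bool}
    (hf : ∀ b ∈ L, Primrec (f b)) : Primrec fun a => L.all fun b => f b a := by
  induction L with
  | nil => exact (Primrec.const true).of_eq (by simp)
  | cons h t ih =>
      have := Primrec.and.comp (hf h (by simp)) (ih fun b hb => hf b (List.mem_cons_of_mem _ hb))
      exact this.of_eq (by simp [List.all_cons])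

private theorem primrec_pow : Primrec₂ ((· ^ ·) : ℕ → ℕ → ℕ) :=
  Primrec₂.unpaired'.1 Nat.Primrec.pow

/-- digit `(i,j)` (base `k`) of the number `a`, in a grid of side `S`. -/
def colB (k S a i j : ℕ) : ℕ := a / k ^ (i * S + j) % k

def cellB (k r : ℕ) (c : ℕ × ℕ × ℕ) (m a v : ℕ) : Bool :=
  decide (2*r ≤ v / (4*m+1+2*r) + c.1) && decide (v / (4*m+1+2*r) + c.1 < 4*m+1+2*r) &&
  decide (2*r ≤ v % (4*m+1+2*r) + c.2.1) && decide (v % (4*m+1+2*r) + c.2.1 < 4*m+1+2*r) &&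
  (colB k (4*m+1) a (v / (4*m+1+2*r) + c.1 - 2*r) (v % (4*m+1+2*r) + c.2.1 - 2*r) == c.2.2)

def locValidB (k r : ℕ) (LN : List (List (ℕ × ℕ × ℕ))) (m a : ℕ) : Bool :=
  ball ((4*m+1+2*r)*(4*m+1+2*r)) fun v => LN.all fun T => ! (T.all fun c => cellB k r c m a v)

def patB (k n m a : ℕ) : Bool :=
  ball ((2*(m+1-n)+1)*(2*(m+1-n)+1)) fun p =>
    bex ((2*(m-n)+1)*(2*(m-n)+1)) fun w =>
      ball ((2*n+1)*(2*n+1)) fun x =>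
        colB k (4*m+1) a (p/(2*(m+1-n)+1) + x/(2*n+1) + (m-1))
            (p%(2*(m+1-n)+1) + x%(2*n+1) + (m-1)) ==
        colB k (4*m+1) a (w/(2*(m-n)+1) + x/(2*n+1) + m) (w%(2*(m-n)+1) + x%(2*n+1) + m)

def checkB (k r : ℕ) (LN : List (List (ℕ × ℕ × ℕ))) (n m : ℕ) : Bool :=
  decide (n+1 ≤ m) && ball (k ^ ((4*m+1)*(4*m+1))) (fun a => !(locValidB k r LN m a) || patB k n m a)



section PrimrecProofs

variable {α : Type} [Primcodable α]

theorem primrec_colB (k : ℕ) {S a i j : α → ℕ} (hS : Primrec S) (ha : Primrec a)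
    (hi : Primrec i) (hj : Primrec j) :
    Primrec fun z => colB k (S z) (a z) (i z) (j z) :=
  Primrec.nat_mod.comp
    (Primrec.nat_div.comp ha
      (primrec_pow.comp (Primrec.const k)
        (Primrec.nat_add.comp (Primrec.nat_mul.comp hi hS) hj)))
    (Primrec.const k)

theorem primrec_cellB (k r : ℕ) (c : ℕ × ℕ × ℕ) {m a v : α → ℕ}
    (hm : Primrec m) (ha : Primrec a) (hv : Primrec v) :
    Primrec fun z => cellB k r c (m z) (a z) (v z) := by
  have hV : Primrec fun z => 4 * m z + 1 + 2*r :=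
    Primrec.nat_add.comp
      (Primrec.nat_add.comp (Primrec.nat_mul.comp (Primrec.const 4) hm) (Primrec.const 1))
      (Primrec.const (2*r))
  have hvi : Primrec fun z => v z / (4 * m z + 1 + 2*r) := Primrec.nat_div.comp hv hV
  have hvj : Primrec fun z => v z % (4 * m z + 1 + 2*r) := Primrec.nat_mod.comp hv hV
  have hvi' : Primrec fun z => v z / (4 * m z + 1 + 2*r) + c.1 :=
    Primrec.nat_add.comp hvi (Primrec.const c.1)
  have hvj' : Primrec fun z => v z % (4 * m z + 1 + 2*r) + c.2.1 :=
    Primrec.nat_add.comp hvj (Primrec.const c.2.1)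
  have hS : Primrec fun z => 4 * m z + 1 :=
    Primrec.nat_add.comp (Primrec.nat_mul.comp (Primrec.const 4) hm) (Primrec.const 1)
  have h1 : Primrec fun z => decide (2*r ≤ v z / (4 * m z + 1 + 2*r) + c.1) :=
    (Primrec.nat_le.comp (Primrec.const (2*r)) hvi').decide
  have h2 : Primrec fun z => decide (v z / (4 * m z + 1 + 2*r) + c.1 < 4 * m z + 1 + 2*r) :=
    (Primrec.nat_lt.comp hvi' hV).decide
  have h3 : Primrec fun z => decide (2*r ≤ v z % (4 * m z + 1 + 2*r) + c.2.1) :=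
    (Primrec.nat_le.comp (Primrec.const (2*r)) hvj').decide
  have h4 : Primrec fun z => decide (v z % (4 * m z + 1 + 2*r) + c.2.1 < 4 * m z + 1 + 2*r) :=
    (Primrec.nat_lt.comp hvj' hV).decide
  have h5 : Primrec fun z =>
      (colB k (4 * m z + 1) (a z) (v z / (4 * m z + 1 + 2*r) + c.1 - 2*r)
        (v z % (4 * m z + 1 + 2*r) + c.2.1 - 2*r) == c.2.2) :=
    Primrec.beq.comp
      (primrec_colB k hS ha (Primrec.nat_sub.comp hvi' (Primrec.const (2*r)))
        (Primrec.nat_sub.comp hvj' (Primrec.const (2*r))))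
      (Primrec.const c.2.2)
  exact Primrec.and.comp (Primrec.and.comp (Primrec.and.comp (Primrec.and.comp h1 h2) h3) h4) h5

theorem primrec_locValidB (k r : ℕ) (LN : List (List (ℕ × ℕ × ℕ))) {m a : α → ℕ}
    (hm : Primrec m) (ha : Primrec a) :
    Primrec fun z => locValidB k r LN (m z) (a z) := by
  have hVx : Primrec fun z => 4 * m z + 1 + 2*r :=
    Primrec.nat_add.comp
      (Primrec.nat_add.comp (Primrec.nat_mul.comp (Primrec.const 4) hm) (Primrec.const 1))
      (Primrec.const (2*r))
  have inner : Primrec fun zv : α × ℕ =>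
      (LN.all fun T => ! (T.all fun c => cellB k r c (m zv.1) (a zv.1) zv.2)) := by
    refine primrec_list_all LN fun T hT => ?_
    refine Primrec.not.comp ?_
    refine primrec_list_all T fun c hc => ?_
    exact primrec_cellB k r c (hm.comp Primrec.fst) (ha.comp Primrec.fst) Primrec.snd
  have h := primrec_ball
    (f := fun z v => LN.all fun T => ! (T.all fun c => cellB k r c (m z) (a z) v))
    (Primrec.nat_mul.comp hVx hVx) (Primrec.to₂ inner)
  exact h.of_eq fun z => rfl

theorem primrec_patB (k : ℕ) {n m a : α → ℕ}
    (hn : Primrec n) (hm : Primrec m) (ha : Primrec a) :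
    Primrec fun z => patB k (n z) (m z) (a z) := by
  have hP : Primrec fun z => 2*((m z)+1-(n z))+1 :=
    Primrec.nat_add.comp
      (Primrec.nat_mul.comp (Primrec.const 2)
        (Primrec.nat_sub.comp (Primrec.nat_add.comp hm (Primrec.const 1)) hn))
      (Primrec.const 1)
  have hW : Primrec fun z => 2*((m z)-(n z))+1 :=
    Primrec.nat_add.comp
      (Primrec.nat_mul.comp (Primrec.const 2) (Primrec.nat_sub.comp hm hn)) (Primrec.const 1)
  have hX : Primrec fun z => 2*(n z)+1 :=
    Primrec.nat_add.comp (Primrec.nat_mul.comp (Primrec.const 2) hn) (Primrec.const 1)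
  have h3 : Primrec fun z : ((α × ℕ) × ℕ) × ℕ =>
      (colB k (4 * m z.1.1.1 + 1) (a z.1.1.1)
          (z.1.1.2/(2*(m z.1.1.1+1-n z.1.1.1)+1) + z.2/(2*n z.1.1.1+1) + (m z.1.1.1-1))
          (z.1.1.2%(2*(m z.1.1.1+1-n z.1.1.1)+1) + z.2%(2*n z.1.1.1+1) + (m z.1.1.1-1)) ==
       colB k (4 * m z.1.1.1 + 1) (a z.1.1.1)
          (z.1.2/(2*(m z.1.1.1-n z.1.1.1)+1) + z.2/(2*n z.1.1.1+1) + m z.1.1.1)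
          (z.1.2%(2*(m z.1.1.1-n z.1.1.1)+1) + z.2%(2*n z.1.1.1+1) + m z.1.1.1)) := by
    have hA : Primrec fun z : ((α × ℕ) × ℕ) × ℕ => z.1.1.1 :=
      Primrec.fst.comp (Primrec.fst.comp Primrec.fst)
    have hp : Primrec fun z : ((α × ℕ) × ℕ) × ℕ => z.1.1.2 :=
      Primrec.snd.comp (Primrec.fst.comp Primrec.fst)
    have hw : Primrec fun z : ((α × ℕ) × ℕ) × ℕ => z.1.2 := Primrec.snd.comp Primrec.fst
    have hx : Primrec fun z : ((α × ℕ) × ℕ) × ℕ => z.2 := Primrec.snd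
    have hm' := hm.comp hA
    have ha' := ha.comp hA
    have hP' := hP.comp hA
    have hW' := hW.comp hA
    have hX' := hX.comp hA
    have hS : Primrec fun z : ((α × ℕ) × ℕ) × ℕ => 4 * (m z.1.1.1) + 1 :=
      Primrec.nat_add.comp (Primrec.nat_mul.comp (Primrec.const 4) hm') (Primrec.const 1)
    have hm1 : Primrec fun z : ((α × ℕ) × ℕ) × ℕ => m z.1.1.1 - 1 :=
      Primrec.nat_sub.comp hm' (Primrec.const 1)
    exact Primrec.beq.comp
      (primrec_colB k hS ha'
        (Primrec.nat_add.comp (Primrec.nat_add.comp (Primrec.nat_div.comp hp hP')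
          (Primrec.nat_div.comp hx hX')) hm1)
        (Primrec.nat_add.comp (Primrec.nat_add.comp (Primrec.nat_mod.comp hp hP')
          (Primrec.nat_mod.comp hx hX')) hm1))
      (primrec_colB k hS ha'
        (Primrec.nat_add.comp (Primrec.nat_add.comp (Primrec.nat_div.comp hw hW')
          (Primrec.nat_div.comp hx hX')) hm')
        (Primrec.nat_add.comp (Primrec.nat_add.comp (Primrec.nat_mod.comp hw hW')
          (Primrec.nat_mod.comp hx hX')) hm'))
  have h2 : Primrec fun z : (α × ℕ) × ℕ =>
      ball ((2*n z.1.1+1)*(2*n z.1.1+1)) (fun x =>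
        colB k (4 * m z.1.1 + 1) (a z.1.1)
          (z.1.2/(2*(m z.1.1+1-n z.1.1)+1) + x/(2*n z.1.1+1) + (m z.1.1-1))
          (z.1.2%(2*(m z.1.1+1-n z.1.1)+1) + x%(2*n z.1.1+1) + (m z.1.1-1)) ==
        colB k (4 * m z.1.1 + 1) (a z.1.1)
          (z.2/(2*(m z.1.1-n z.1.1)+1) + x/(2*n z.1.1+1) + m z.1.1)
          (z.2%(2*(m z.1.1-n z.1.1)+1) + x%(2*n z.1.1+1) + m z.1.1)) := by
    have hXz : Primrec fun z : (α × ℕ) × ℕ => (2*n z.1.1+1)*(2*n z.1.1+1) := by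
      have := hX.comp (Primrec.fst.comp (Primrec.fst : Primrec fun z : (α × ℕ) × ℕ => z.1))
      exact Primrec.nat_mul.comp this this
    exact primrec_ball hXz (Primrec.to₂ h3)
  have h1 : Primrec fun z : α × ℕ =>
      bex ((2*(m z.1-n z.1)+1)*(2*(m z.1-n z.1)+1)) (fun w =>
        ball ((2*n z.1+1)*(2*n z.1+1)) (fun x =>
          colB k (4 * m z.1 + 1) (a z.1)
            (z.2/(2*(m z.1+1-n z.1)+1) + x/(2*n z.1+1) + (m z.1-1))
            (z.2%(2*(m z.1+1-n z.1)+1) + x%(2*n z.1+1) + (m z.1-1)) ==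
          colB k (4 * m z.1 + 1) (a z.1)
            (w/(2*(m z.1-n z.1)+1) + x/(2*n z.1+1) + m z.1)
            (w%(2*(m z.1-n z.1)+1) + x%(2*n z.1+1) + m z.1))) := by
    have hWz : Primrec fun z : α × ℕ => (2*(m z.1-n z.1)+1)*(2*(m z.1-n z.1)+1) := by
      have := hW.comp (Primrec.fst : Primrec fun z : α × ℕ => z.1)
      exact Primrec.nat_mul.comp this this
    exact primrec_bex hWz (Primrec.to₂ h2)
  have h0 : Primrec fun z : α =>
      ball ((2*(m z+1-n z)+1)*(2*(m z+1-n z)+1)) (fun p =>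
        bex ((2*(m z-n z)+1)*(2*(m z-n z)+1)) (fun w =>
          ball ((2*n z+1)*(2*n z+1)) (fun x =>
            colB k (4 * m z + 1) (a z)
              (p/(2*(m z+1-n z)+1) + x/(2*n z+1) + (m z-1))
              (p%(2*(m z+1-n z)+1) + x%(2*n z+1) + (m z-1)) ==
            colB k (4 * m z + 1) (a z)
              (w/(2*(m z-n z)+1) + x/(2*n z+1) + m z)
              (w%(2*(m z-n z)+1) + x%(2*n z+1) + m z)))) :=
    primrec_ball (Primrec.nat_mul.comp hP hP) (Primrec.to₂ h1)
  exact h0.of_eq fun z => rfl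

theorem primrec_checkB (k r : ℕ) (LN : List (List (ℕ × ℕ × ℕ))) :
    Primrec₂ (checkB k r LN) := by
  have hm : Primrec fun z : ℕ × ℕ => z.2 := Primrec.snd
  have hn : Primrec fun z : ℕ × ℕ => z.1 := Primrec.fst
  have h1 : Primrec fun z : ℕ × ℕ => decide (z.1 + 1 ≤ z.2) :=
    (Primrec.nat_le.comp (Primrec.nat_add.comp hn (Primrec.const 1)) hm).decide
  have hbound : Primrec fun z : ℕ × ℕ => k ^ ((4*z.2+1)*(4*z.2+1)) := by
    have hS : Primrec fun z : ℕ × ℕ => 4*z.2+1 :=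
      Primrec.nat_add.comp (Primrec.nat_mul.comp (Primrec.const 4) hm) (Primrec.const 1)
    exact primrec_pow.comp (Primrec.const k) (Primrec.nat_mul.comp hS hS)
  have hin : Primrec fun z : (ℕ × ℕ) × ℕ =>
      (!(locValidB k r LN z.1.2 z.2) || patB k z.1.1 z.1.2 z.2) :=
    Primrec.or.comp
      (Primrec.not.comp (primrec_locValidB k r LN (Primrec.snd.comp Primrec.fst) Primrec.snd))
      (primrec_patB k (Primrec.fst.comp Primrec.fst) (Primrec.snd.comp Primrec.fst) Primrec.snd)
  have hb : Primrec fun z : ℕ × ℕ =>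
      ball (k ^ ((4*z.2+1)*(4*z.2+1)))
        (fun a => !(locValidB k r LN z.2 a) || patB k z.1 z.2 a) :=
    primrec_ball hbound (Primrec.to₂ hin)
  have h := Primrec.and.comp h1 hb
  exact Primrec.to₂ (h.of_eq fun z => rfl)

end PrimrecProofs

theorem computable_find_of_check (k r : ℕ) (LN : List (List (ℕ × ℕ × ℕ)))
    (H : ∀ n, ∃ m, checkB k r LN n m = true) :
    ∃ q : ℕ → ℕ, Computable q ∧ ∀ n, checkB k r LN n (q n) = true := by
  refine ⟨fun n => Nat.find (H n), ?_, fun n => Nat.find_spec (H n)⟩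
  have hc : Computable₂ (checkB k r LN) := (primrec_checkB k r LN).to_comp
  have hp : Partrec fun n => Nat.rfind fun m => Part.some (checkB k r LN n m) :=
    Partrec.rfind hc.partrec₂
  refine hp.of_eq_tot fun n => ?_
  refine Nat.mem_rfind.2 ?_
  constructor
  · simpa using Nat.find_spec (H n)
  · intro m hm
    simpa using Nat.find_min (H n) hm

/-! ### basic square lemmas -/

theorem mem_square {z : ℤ × ℤ} {n : ℕ} :
    z ∈ square n ↔ -(n:ℤ) ≤ z.1 ∧ z.1 ≤ n ∧ -(n:ℤ) ≤ z.2 ∧ z.2 ≤ n := by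
  cases z with
  | mk a b =>
      simp only [square, Finset.mem_Icc, Prod.le_def]
      omega

/-! ### ultrafilter limits -/

noncomputable def U : Ultrafilter ℕ := Ultrafilter.of Filter.atTop

theorem mem_U_of_atTop {s : Set ℕ} (h : s ∈ Filter.atTop) : s ∈ U :=
  Ultrafilter.of_le Filter.atTop h

theorem U_ge (s : ℕ) : {m : ℕ | s ≤ m} ∈ U :=
  mem_U_of_atTop (Filter.mem_atTop s)

theorem exists_ultralim {β : Type*} [Finite β] (g : ℕ → β) : ∃ b, {m | g m = b} ∈ U := by
  by_contra h
  push_neg at h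
  have h' : ∀ b, {m | g m = b}ᶜ ∈ U := fun b =>
    (Ultrafilter.compl_mem_iff_notMem).2 (h b)
  have : ⋂ b, {m | g m = b}ᶜ ∈ U := Filter.iInter_mem.2 h'
  obtain ⟨m, hm⟩ := Ultrafilter.nonempty_of_mem this
  simp only [Set.mem_iInter, Set.mem_compl_iff, Set.mem_setOf_eq] at hm
  exact hm (g m) rfl

noncomputable def ulim {β : Type*} [Finite β] (g : ℕ → β) : β :=
  (exists_ultralim g).choose

theorem ulim_spec {β : Type*} [Finite β] (g : ℕ → β) : {m | g m = ulim g} ∈ U :=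
  (exists_ultralim g).choose_spec

theorem exists_mem_U_of_union {s : Set ℕ} (hs : s ∈ U) {ι : Type*} (I : Finset ι)
    (t : ι → Set ℕ) (hsub : s ⊆ ⋃ i ∈ I, t i) : ∃ i ∈ I, t i ∈ U := by
  by_contra h
  push_neg at h
  have h' : ∀ i ∈ I, (t i)ᶜ ∈ U := fun i hi =>
    (Ultrafilter.compl_mem_iff_notMem).2 (h i hi)
  have hI : ⋂ i ∈ I, (t i)ᶜ ∈ U := (Filter.biInter_finset_mem I).2 h'
  obtain ⟨m, hm⟩ := Ultrafilter.nonempty_of_mem (Filter.inter_mem hs hI)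
  obtain ⟨hm1, hm2⟩ := hm
  simp only [Set.mem_iInter, Set.mem_compl_iff] at hm2
  obtain ⟨T, hT⟩ := Set.mem_iUnion.1 (hsub hm1)
  obtain ⟨hT1, hT2⟩ := Set.mem_iUnion.1 hT
  exact hm2 T hT1 hT2

/-- the pointwise ultrafilter limit of a sequence of configurations -/
noncomputable def climU {Q : Type} [Fintype Q] (f : ℕ → Config Q) : Config Q :=
  fun z => ulim (fun m => f m z)

theorem climU_agree {Q : Type} [Fintype Q] (f : ℕ → Config Q) (A : Finset (ℤ × ℤ)) :
    {m | ∀ z ∈ A, f m z = climU f z} ∈ U := by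
  have : ⋂ z ∈ A, {m | f m z = climU f z} ∈ U :=
    (Filter.biInter_finset_mem A).2 fun z _ => ulim_spec (fun m => f m z)
  refine Filter.mem_of_superset this ?_
  intro m hm z hz
  simp only [Set.mem_iInter] at hm
  exact hm z hz

/-! ### digit encoding -/


theorem digit_sum_lt {k : ℕ} (hk : 0 < k) (R : ℕ) (d : ℕ → ℕ) (hd : ∀ t, d t < k) :
    (∑ s ∈ Finset.range R, k ^ s * d s) < k ^ R := by
  induction R with
  | zero => simpa using hk
  | succ R ih =>
      rw [Finset.sum_range_succ, pow_succ]
      have h1 : k ^ R * (d R + 1) ≤ k ^ R * k :=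
        Nat.mul_le_mul_left _ (Nat.succ_le_of_lt (hd R))
      rw [Nat.mul_add, Nat.mul_one] at h1
      omega

private theorem sum_shift {k : ℕ} (R' : ℕ) (d : ℕ → ℕ) :
    (∑ s ∈ Finset.range R', k ^ (s + 1) * d (s + 1)) =
      k * ∑ s ∈ Finset.range R', k ^ s * d (s + 1) := by
  rw [Finset.mul_sum]
  refine Finset.sum_congr rfl fun s _ => ?_
  ring

theorem digit_extract {k : ℕ} (hk : 0 < k) :
    ∀ (t R : ℕ) (d : ℕ → ℕ), (∀ s, d s < k) → t < R →
      (∑ s ∈ Finset.range R, k ^ s * d s) / k ^ t % k = d t := by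
  intro t
  induction t with
  | zero =>
      intro R d hd hR
      obtain ⟨R', rfl⟩ := Nat.exists_eq_succ_of_ne_zero (by omega : R ≠ 0)
      rw [Finset.sum_range_succ', sum_shift, pow_zero, one_mul, Nat.div_one, Nat.mul_add_mod]
      exact Nat.mod_eq_of_lt (hd 0)
  | succ t ih =>
      intro R d hd hR
      obtain ⟨R', rfl⟩ := Nat.exists_eq_succ_of_ne_zero (by omega : R ≠ 0)
      rw [Finset.sum_range_succ', sum_shift, pow_zero, one_mul]
      rw [pow_succ', ← Nat.div_div_eq_div_mul]
      have hdiv : (k * (∑ s ∈ Finset.range R', k ^ s * d (s + 1)) + d 0) / k =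
          ∑ s ∈ Finset.range R', k ^ s * d (s + 1) := by
        rw [Nat.mul_add_div hk, Nat.div_eq_of_lt (hd 0)]
        omega
      rw [hdiv]
      exact ih R' (fun s => d (s + 1)) (fun s => hd (s + 1)) (by omega)

/-! ### semantic versions of the check -/

section Semantics

variable {Q : Type} [Fintype Q] [DecidableEq Q]

/-- `g` has no forbidden pattern fully inside `square N`. -/
def LocOK (F : Set (Pattern Q)) (g : Config Q) (N : ℕ) : Prop :=
  ∀ T ∈ F, ∀ v : ℤ × ℤ, ¬ (∀ x ∈ T.dom, (v + x) ∈ square N ∧ g (v + x) = T.val x)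

/-- `φ` (with effective domain `square n`) appears in the central `m`-window of `g`. -/
def Window (g : Config Q) (n : ℕ) (φ : ℤ × ℤ → Q) (m : ℕ) : Prop :=
  ∃ w : ℤ × ℤ, ∀ x ∈ square n, (w + x) ∈ square m ∧ g (w + x) = φ x

/-- semantic content of the check `checkB`. -/
def CheckSem (F : Set (Pattern Q)) (n m : ℕ) : Prop :=
  n + 1 ≤ m ∧ ∀ g : Config Q, LocOK F g (2*m) →
    ∀ p : ℤ × ℤ, p ∈ square (m+1-n) → Window g n (fun x => g (p + x)) m

variable {k : ℕ} (e : Q ≃ Fin k) (r : ℕ)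

/-- encoding of a forbidden pattern as numeric cells -/
noncomputable def encP (T : Pattern Q) : List (ℕ × ℕ × ℕ) :=
  T.dom.toList.map fun z => ((z.1 + (r:ℤ)).toNat, (z.2 + (r:ℤ)).toNat, (e (T.val z) : ℕ))

/-- encoding of the `square (2*m)` part of a configuration as a number -/
def encA (g : Config Q) (m : ℕ) : ℕ :=
  ∑ t ∈ Finset.range ((4*m+1)*(4*m+1)),
    k ^ t * (e (g (((t / (4*m+1) : ℕ) : ℤ) - 2*m, ((t % (4*m+1) : ℕ) : ℤ) - 2*m)) : ℕ)

/-- decoding of a number into a configuration -/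
noncomputable def gA (hk : 0 < k) (m a : ℕ) : Config Q :=
  fun z => e.symm ⟨colB k (4*m+1) a (z.1 + 2*m).toNat (z.2 + 2*m).toNat % k, Nat.mod_lt _ hk⟩

theorem encA_lt (hk : 0 < k) (g : Config Q) (m : ℕ) :
    encA e g m < k ^ ((4*m+1)*(4*m+1)) :=
  digit_sum_lt hk _ _ fun _ => Fin.is_lt _

theorem colB_encA (hk : 0 < k) (g : Config Q) (m : ℕ) {i j : ℕ}
    (hi : i < 4*m+1) (hj : j < 4*m+1) :
    colB k (4*m+1) (encA e g m) i j = (e (g ((i : ℤ) - 2*m, (j : ℤ) - 2*m)) : ℕ) := by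
  have hS : 0 < 4*m+1 := by omega
  have hb : i * (4*m+1) + j < (4*m+1)*(4*m+1) := by
    calc i * (4*m+1) + j < i * (4*m+1) + (4*m+1) := by omega
      _ = (i+1) * (4*m+1) := by ring
      _ ≤ (4*m+1) * (4*m+1) := Nat.mul_le_mul_right _ (by omega)
  have h := digit_extract hk (i * (4*m+1) + j) ((4*m+1)*(4*m+1))
    (fun t => (e (g (((t / (4*m+1) : ℕ) : ℤ) - 2*m, ((t % (4*m+1) : ℕ) : ℤ) - 2*m)) : ℕ))
    (fun t => Fin.is_lt _) hb
  have h1 : (i * (4*m+1) + j) / (4*m+1) = i := by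
    rw [Nat.add_comm, Nat.add_mul_div_right _ _ hS, Nat.div_eq_of_lt hj]
    omega
  have h2 : (i * (4*m+1) + j) % (4*m+1) = j := by
    rw [Nat.add_comm, Nat.add_mul_mod_self_right]
    exact Nat.mod_eq_of_lt hj
  simpa only [encA, colB, h1, h2] using h

theorem gA_pt (hk : 0 < k) (m a : ℕ) {i j : ℕ}
    (hi : i < 4*m+1) (hj : j < 4*m+1) :
    (e (gA e hk m a ((i : ℤ) - 2*m, (j : ℤ) - 2*m)) : ℕ) = colB k (4*m+1) a i j := by
  have h1 : (((i : ℤ) - 2*m) + 2*m).toNat = i := by omega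
  have h2 : (((j : ℤ) - 2*m) + 2*m).toNat = j := by omega
  show (e (e.symm _) : ℕ) = _
  rw [Equiv.apply_symm_apply]
  show colB k (4*m+1) a (((i : ℤ) - 2*m) + 2*m).toNat (((j : ℤ) - 2*m) + 2*m).toNat % k = _
  rw [h1, h2, colB, Nat.mod_mod_of_dvd _ dvd_rfl]

/-! pairing helpers -/

theorem pair_code_lt {B i j : ℕ} (hi : i < B) (hj : j < B) : B * i + j < B * B :=
  calc B * i + j < B * i + B := by omega
    _ = B * (i+1) := by ring
    _ ≤ B * B := Nat.mul_le_mul_left _ (by omega)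

theorem pair_code_div {B i j : ℕ} (hB : 0 < B) (hj : j < B) : (B * i + j) / B = i := by
  rw [Nat.mul_add_div hB, Nat.div_eq_of_lt hj]
  omega

theorem pair_code_mod {B i j : ℕ} (hj : j < B) : (B * i + j) % B = j := by
  rw [Nat.mul_add_mod]
  exact Nat.mod_eq_of_lt hj

theorem code_fst_lt {B v : ℕ} (hB : 0 < B) (hv : v < B * B) : v / B < B :=
  Nat.div_lt_of_lt_mul hv

theorem code_snd_lt {B v : ℕ} (hB : 0 < B) : v % B < B := Nat.mod_lt _ hB

end Semantics

section Bridge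

variable {Q : Type} [Fintype Q] [DecidableEq Q] {k : ℕ} (e : Q ≃ Fin k)

theorem e_inj {a b : Q} (h : (e a : ℕ) = (e b : ℕ)) : a = b :=
  e.injective (Fin.val_injective h)

variable (r : ℕ) {F : Set (Pattern Q)}

theorem bridge_to_sem (hk : 0 < k)
    (hr : ∀ T ∈ F, ∀ x ∈ T.dom, x ∈ square r)
    {LN : List (List (ℕ × ℕ × ℕ))} (hLN : ∀ l, l ∈ LN ↔ ∃ T ∈ F, l = encP e r T)
    {n m : ℕ} (hchk : checkB k r LN n m = true) : CheckSem F n m := by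
  rw [checkB, Bool.and_eq_true, decide_eq_true_eq, ball_iff] at hchk
  obtain ⟨hnm, hball⟩ := hchk
  refine ⟨hnm, fun g hg p hp => ?_⟩
  have ha : encA e g m < k ^ ((4*m+1)*(4*m+1)) := encA_lt e hk g m
  have h2 := hball (encA e g m) ha
  rw [Bool.or_eq_true, Bool.not_eq_true'] at h2
  -- Step 1: local validity of the encoded configuration
  have hlv : locValidB k r LN m (encA e g m) = true := by
    rw [locValidB, ball_iff]
    intro vv hvv
    rw [List.all_eq_true]
    intro T' hT'
    rw [Bool.not_eq_true']
    by_contra hne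
    have hall : T'.all (fun c => cellB k r c m (encA e g m) vv) = true := by
      cases h : T'.all (fun c => cellB k r c m (encA e g m) vv)
      · exact absurd h hne
      · rfl
    rw [List.all_eq_true] at hall
    obtain ⟨T, hTF, rfl⟩ := (hLN T').1 hT'
    set vi := vv / (4*m+1+2*r) with hvi
    set vj := vv % (4*m+1+2*r) with hvj
    refine hg T hTF ((vi : ℤ) - 2*m - r, (vj : ℤ) - 2*m - r) fun x hx => ?_
    have hxr := hr T hTF x hx
    rw [mem_square] at hxr
    have hc := hall ((x.1 + (r:ℤ)).toNat, (x.2 + (r:ℤ)).toNat, (e (T.val x) : ℕ))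
      (List.mem_map.2 ⟨x, Finset.mem_toList.2 hx, rfl⟩)
    rw [cellB] at hc
    simp only [Bool.and_eq_true, decide_eq_true_eq, beq_iff_eq] at hc
    obtain ⟨⟨⟨⟨g1, g2⟩, g3⟩, g4⟩, g5⟩ := hc
    have hib : vi + (x.1 + (r:ℤ)).toNat - 2*r < 4*m+1 := by omega
    have hjb : vj + (x.2 + (r:ℤ)).toNat - 2*r < 4*m+1 := by omega
    have hcol := colB_encA e hk g m hib hjb
    rw [g5] at hcol
    have hpt : (((vi + (x.1 + (r:ℤ)).toNat - 2*r : ℕ) : ℤ) - 2*m,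
        ((vj + (x.2 + (r:ℤ)).toNat - 2*r : ℕ) : ℤ) - 2*m) =
        ((vi : ℤ) - 2*m - r, (vj : ℤ) - 2*m - r) + x := by
      have e1 : ((vi + (x.1 + (r:ℤ)).toNat - 2*r : ℕ) : ℤ) - 2*m
          = ((vi : ℤ) - 2*m - r) + x.1 := by omega
      have e2 : ((vj + (x.2 + (r:ℤ)).toNat - 2*r : ℕ) : ℤ) - 2*m
          = ((vj : ℤ) - 2*m - r) + x.2 := by omega
      rw [Prod.ext_iff]
      exact ⟨e1, e2⟩
    rw [hpt] at hcol
    constructor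
    · rw [mem_square]
      rcases x with ⟨x1, x2⟩
      simp only [Prod.fst_add, Prod.snd_add]
      constructor
      · simp only [Prod.fst] at *; omega
      · refine ⟨?_, ?_, ?_⟩ <;> simp only [Prod.snd, Prod.fst] at * <;> omega
    · exact (e_inj e hcol.symm)
  -- Step 2: use patB
  have hpat : patB k n m (encA e g m) = true := by
    rcases h2 with h2 | h2
    · rw [hlv] at h2; exact absurd h2 (by simp)
    · exact h2
  rw [patB, ball_iff] at hpat
  rw [mem_square] at hp
  set P := 2*(m+1-n)+1 with hP
  set W := 2*(m-n)+1 with hW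
  set X := 2*n+1 with hX
  set pi := (p.1 + ((m+1-n : ℕ) : ℤ)).toNat with hpi
  set pj := (p.2 + ((m+1-n : ℕ) : ℤ)).toNat with hpj
  have hpiP : pi < P := by omega
  have hpjP : pj < P := by omega
  have hPpos : 0 < P := by omega
  have hppb := hpat (P * pi + pj) (pair_code_lt hpiP hpjP)
  rw [bex_iff] at hppb
  obtain ⟨ww, hww, hwx⟩ := hppb
  rw [ball_iff] at hwx
  set wi := ww / W with hwi
  set wj := ww % W with hwj
  have hWpos : 0 < W := by omega
  have hwiW : wi < W := code_fst_lt hWpos hww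
  have hwjW : wj < W := code_snd_lt hWpos
  refine ⟨((wi : ℤ) - (m-n : ℕ), (wj : ℤ) - (m-n : ℕ)), fun x hx => ?_⟩
  rw [mem_square] at hx
  set xi := (x.1 + (n : ℤ)).toNat with hxi
  set xj := (x.2 + (n : ℤ)).toNat with hxj
  have hxiX : xi < X := by omega
  have hxjX : xj < X := by omega
  have hXpos : 0 < X := by omega
  have hcb := hwx (X * xi + xj) (pair_code_lt hxiX hxjX)
  rw [beq_iff_eq] at hcb
  rw [pair_code_div hPpos hpjP, pair_code_mod hpjP, pair_code_div hXpos hxjX,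
    pair_code_mod hxjX] at hcb
  -- left side is g (p + x), right side is g (w + x)
  have hibl : pi + xi + (m-1) < 4*m+1 := by omega
  have hjbl : pj + xj + (m-1) < 4*m+1 := by omega
  have hibr : wi + xi + m < 4*m+1 := by omega
  have hjbr : wj + xj + m < 4*m+1 := by omega
  have hcoll := colB_encA e hk g m hibl hjbl
  have hcolr := colB_encA e hk g m hibr hjbr
  rw [hcoll, hcolr] at hcb
  have hptl : (((pi + xi + (m-1) : ℕ) : ℤ) - 2*m, ((pj + xj + (m-1) : ℕ) : ℤ) - 2*m)
      = p + x := by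
    rw [Prod.ext_iff]
    constructor
    · simp only [Prod.fst_add]; omega
    · simp only [Prod.snd_add]; omega
  have hptr : (((wi + xi + m : ℕ) : ℤ) - 2*m, ((wj + xj + m : ℕ) : ℤ) - 2*m)
      = ((wi : ℤ) - (m-n : ℕ), (wj : ℤ) - (m-n : ℕ)) + x := by
    rw [Prod.ext_iff]
    constructor
    · simp only [Prod.fst_add]; omega
    · simp only [Prod.snd_add]; omega
  rw [hptl, hptr] at hcb
  obtain ⟨a1, a2, a3, a4⟩ := hx
  have hwis : wi ≤ 2*(m-n) := by
    rw [hW] at hwiW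
    exact Nat.lt_succ_iff.mp hwiW
  have hwjs : wj ≤ 2*(m-n) := by
    rw [hW] at hwjW
    exact Nat.lt_succ_iff.mp hwjW
  constructor
  · rw [mem_square]
    simp only [Prod.fst_add, Prod.snd_add]
    clear hcb hwx hpat hcoll hcolr hptl hptr hww h2 hball ha hlv hpiP hpjP hxiX hxjX
      hibl hjbl hibr hjbr hpi hpj hxi hxj hwi hwj hwiW hwjW hp
    clear_value wi wj xi xj pi pj
    refine ⟨by omega, by omega, by omega, by omega⟩
  · exact (e_inj e hcb).symm

theorem bridge_from_sem (hk : 0 < k)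
    (hr : ∀ T ∈ F, ∀ x ∈ T.dom, x ∈ square r)
    {LN : List (List (ℕ × ℕ × ℕ))} (hLN : ∀ l, l ∈ LN ↔ ∃ T ∈ F, l = encP e r T)
    {n m : ℕ} (hsem : CheckSem F n m) : checkB k r LN n m = true := by
  obtain ⟨hnm, hmain⟩ := hsem
  rw [checkB, Bool.and_eq_true, decide_eq_true_eq, ball_iff]
  refine ⟨hnm, fun a ha => ?_⟩
  rw [Bool.or_eq_true, Bool.not_eq_true']
  by_cases hlv : locValidB k r LN m a = true
  swap
  · left
    cases h : locValidB k r LN m a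
    · rfl
    · exact absurd h hlv
  right
  rw [locValidB, ball_iff] at hlv
  -- the decoded configuration is locally valid
  have hgok : LocOK F (gA e hk m a) (2*m) := by
    intro T hTF v hmatch
    by_cases hdom : T.dom.Nonempty
    case neg =>
      have h0 := hlv 0 (Nat.mul_pos (by omega) (by omega))
      rw [List.all_eq_true] at h0
      have hmem := (hLN (encP e r T)).2 ⟨T, hTF, rfl⟩
      have hx := h0 _ hmem
      rw [Bool.not_eq_true'] at hx
      have hTnil : encP e r T = [] := by
        have hde : T.dom = ∅ := Finset.not_nonempty_iff_eq_empty.1 hdom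
        rw [encP, hde, Finset.toList_empty]
        rfl
      rw [hTnil] at hx
      simp at hx
    case pos =>
      obtain ⟨x0, hx0⟩ := hdom
      have hv0 := hmatch x0 hx0
      have hx0r := hr T hTF x0 hx0
      rw [mem_square] at hx0r
      have hv0s := hv0.1
      rw [mem_square] at hv0s
      simp only [Prod.fst_add, Prod.snd_add] at hv0s
      set vi := (v.1 + 2*(m:ℤ) + r).toNat with hvi
      set vj := (v.2 + 2*(m:ℤ) + r).toNat with hvj
      have hviV : vi < 4*m+1+2*r := by omega
      have hvjV : vj < 4*m+1+2*r := by omega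
      have hV := hlv ((4*m+1+2*r) * vi + vj) (pair_code_lt hviV hvjV)
      rw [List.all_eq_true] at hV
      have hmem := (hLN (encP e r T)).2 ⟨T, hTF, rfl⟩
      have hTall := hV _ hmem
      rw [Bool.not_eq_true'] at hTall
      have hcells : (encP e r T).all
          (fun c => cellB k r c m a ((4*m+1+2*r) * vi + vj)) = true := by
        rw [List.all_eq_true]
        intro c hc
        rw [encP, List.mem_map] at hc
        obtain ⟨x, hxl, rfl⟩ := hc
        rw [Finset.mem_toList] at hxl
        have hxm := hmatch x hxl
        have hxr := hr T hTF x hxl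
        rw [mem_square] at hxr
        obtain ⟨hxs, hxv⟩ := hxm
        rw [mem_square] at hxs
        simp only [Prod.fst_add, Prod.snd_add] at hxs
        rw [cellB, pair_code_div (by omega) hvjV, pair_code_mod hvjV]
        simp only [Bool.and_eq_true, decide_eq_true_eq, beq_iff_eq]
        refine ⟨⟨⟨⟨by omega, by omega⟩, by omega⟩, by omega⟩, ?_⟩
        have hib : vi + (x.1 + (r:ℤ)).toNat - 2*r < 4*m+1 := by omega
        have hjb : vj + (x.2 + (r:ℤ)).toNat - 2*r < 4*m+1 := by omega
        have hpt := gA_pt e hk m a hib hjb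
        have hpe : ((((vi + (x.1 + (r:ℤ)).toNat - 2*r : ℕ) : ℤ) - 2*m,
            ((vj + (x.2 + (r:ℤ)).toNat - 2*r : ℕ) : ℤ) - 2*m) : ℤ × ℤ) = v + x := by
          rw [Prod.ext_iff]
          constructor
          · simp only [Prod.fst_add]; omega
          · simp only [Prod.snd_add]; omega
        rw [hpe, hxv] at hpt
        exact hpt.symm
      rw [hcells] at hTall
      cases hTall
  -- now use the semantic check
  rw [patB, ball_iff]
  intro pp hpp
  set Pq := 2*(m+1-n)+1 with hPq
  have hPpos : 0 < Pq := by omega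
  set pi := pp / Pq with hpi
  set pj := pp % Pq with hpj
  have hpiP : pi < Pq := code_fst_lt hPpos hpp
  have hpjP : pj < Pq := code_snd_lt hPpos
  clear_value pi pj
  clear hpi hpj
  have hpmem : (((pi:ℤ) - (m+1-n : ℕ), (pj:ℤ) - (m+1-n : ℕ)) : ℤ × ℤ) ∈ square (m+1-n) := by
    rw [mem_square]
    refine ⟨by omega, by omega, by omega, by omega⟩
  obtain ⟨w, hw⟩ := hmain (gA e hk m a) hgok _ hpmem
  have hwn : (((n:ℤ), (n:ℤ)) : ℤ × ℤ) ∈ square n := by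
    rw [mem_square]; refine ⟨by omega, by omega, by omega, by omega⟩
  have hwn' : ((-(n:ℤ), -(n:ℤ)) : ℤ × ℤ) ∈ square n := by
    rw [mem_square]; refine ⟨by omega, by omega, by omega, by omega⟩
  have hb1 := (hw _ hwn).1
  have hb2 := (hw _ hwn').1
  rw [mem_square] at hb1 hb2
  simp only [Prod.fst_add, Prod.snd_add] at hb1 hb2
  set wi := (w.1 + ((m-n : ℕ) : ℤ)).toNat with hwi
  set wj := (w.2 + ((m-n : ℕ) : ℤ)).toNat with hwj
  set Wq := 2*(m-n)+1 with hWq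
  have hwiW : wi < Wq := by omega
  have hwjW : wj < Wq := by omega
  rw [bex_iff]
  refine ⟨Wq * wi + wj, pair_code_lt hwiW hwjW, ?_⟩
  rw [ball_iff]
  intro xx hxx
  set Xq := 2*n+1 with hXq
  have hXpos : 0 < Xq := by omega
  set xi := xx / Xq with hxi
  set xj := xx % Xq with hxj
  have hxiX : xi < Xq := code_fst_lt hXpos hxx
  have hxjX : xj < Xq := code_snd_lt hXpos
  clear_value xi xj
  clear hxi hxj
  have hxmem : (((xi:ℤ) - n, (xj:ℤ) - n) : ℤ × ℤ) ∈ square n := by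
    rw [mem_square]
    refine ⟨by omega, by omega, by omega, by omega⟩
  obtain ⟨hws, hwv⟩ := hw _ hxmem
  rw [pair_code_div (by omega : 0 < Wq) hwjW, pair_code_mod hwjW, beq_iff_eq]
  have hibl : pi + xi + (m-1) < 4*m+1 := by omega
  have hjbl : pj + xj + (m-1) < 4*m+1 := by omega
  have hibr : wi + xi + m < 4*m+1 := by omega
  have hjbr : wj + xj + m < 4*m+1 := by omega
  have hl := gA_pt e hk m a hibl hjbl
  have hrr := gA_pt e hk m a hibr hjbr
  have hptl : ((((pi + xi + (m-1) : ℕ) : ℤ) - 2*m, ((pj + xj + (m-1) : ℕ) : ℤ) - 2*m) : ℤ × ℤ)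
      = ((pi:ℤ) - (m+1-n : ℕ), (pj:ℤ) - (m+1-n : ℕ)) + ((xi:ℤ) - n, (xj:ℤ) - n) := by
    rw [Prod.ext_iff]
    constructor
    · simp only [Prod.fst_add]; omega
    · simp only [Prod.snd_add]; omega
  have hptr : ((((wi + xi + m : ℕ) : ℤ) - 2*m, ((wj + xj + m : ℕ) : ℤ) - 2*m) : ℤ × ℤ)
      = w + ((xi:ℤ) - n, (xj:ℤ) - n) := by
    rw [Prod.ext_iff]
    constructor
    · simp only [Prod.fst_add]; omega
    · simp only [Prod.snd_add]; omega
  rw [hptl] at hl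
  rw [hptr] at hrr
  rw [← hl, ← hrr, hwv]

end Bridge

section Sound

variable {Q : Type} [Fintype Q] [DecidableEq Q] {F : Set (Pattern Q)}

theorem good_step {c : Config Q} (hc : ValidFor F c) {n m : ℕ}
    (hsem : CheckSem F n m) (φ : ℤ × ℤ → Q)
    {wa wb : ℤ × ℤ} (h1 : (wa.1 - wb.1).natAbs ≤ 1) (h2 : (wa.2 - wb.2).natAbs ≤ 1)
    (hg : Window (fun z => c (wa + z)) n φ m) : Window (fun z => c (wb + z)) n φ m := by
  obtain ⟨hnm, hmain⟩ := hsem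
  obtain ⟨w', hw'⟩ := hg
  have hok : LocOK F (fun z => c (wb + z)) (2*m) := by
    intro T hT v hmatch
    refine hc T hT ⟨wb + v, fun x hx => ?_⟩
    have h : c (wb + (v + x)) = T.val x := (hmatch x hx).2
    rwa [← add_assoc] at h
  have hmemn : (((n:ℤ), (n:ℤ)) : ℤ × ℤ) ∈ square n := by
    rw [mem_square]; refine ⟨by omega, by omega, by omega, by omega⟩
  have hmemn' : ((-(n:ℤ), -(n:ℤ)) : ℤ × ℤ) ∈ square n := by
    rw [mem_square]; refine ⟨by omega, by omega, by omega, by omega⟩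
  have hq1 := (hw' _ hmemn).1
  have hq2 := (hw' _ hmemn').1
  rw [mem_square] at hq1 hq2
  simp only [Prod.fst_add, Prod.snd_add] at hq1 hq2
  have hp : ((wa - wb) + w') ∈ square (m+1-n) := by
    rw [mem_square]
    simp only [Prod.fst_add, Prod.snd_add, Prod.fst_sub, Prod.snd_sub]
    refine ⟨by omega, by omega, by omega, by omega⟩
  obtain ⟨w2, hw2⟩ := hmain _ hok _ hp
  refine ⟨w2, fun x hx => ⟨(hw2 x hx).1, ?_⟩⟩
  have hv : c (wb + (w2 + x)) = c (wb + (((wa - wb) + w') + x)) := (hw2 x hx).2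
  show c (wb + (w2 + x)) = φ x
  rw [hv]
  have hpt : wb + (((wa - wb) + w') + x) = wa + (w' + x) := by ring
  rw [hpt]
  exact (hw' x hx).2

theorem good_walk {c : Config Q} (hc : ValidFor F c) {n m : ℕ}
    (hsem : CheckSem F n m) (φ : ℤ × ℤ → Q) :
    ∀ (d : ℕ) (wa wb : ℤ × ℤ), (wa.1 - wb.1).natAbs ≤ d → (wa.2 - wb.2).natAbs ≤ d →
      Window (fun z => c (wa + z)) n φ m → Window (fun z => c (wb + z)) n φ m := by
  intro d
  induction d with
  | zero =>
      intro wa wb h1 h2 hg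
      have : wa = wb := Prod.ext_iff.2 ⟨by omega, by omega⟩
      rwa [this] at hg
  | succ d ih =>
      intro wa wb h1 h2 hg
      set w1 : ℤ × ℤ := (wa.1 - max (-1) (min 1 (wa.1 - wb.1)),
        wa.2 - max (-1) (min 1 (wa.2 - wb.2))) with hw1
      have s1 : (wa.1 - w1.1).natAbs ≤ 1 := by rw [hw1]; omega
      have s2 : (wa.2 - w1.2).natAbs ≤ 1 := by rw [hw1]; omega
      have d1 : (w1.1 - wb.1).natAbs ≤ d := by rw [hw1]; omega
      have d2 : (w1.2 - wb.2).natAbs ≤ d := by rw [hw1]; omega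
      exact ih w1 wb d1 d2 (good_step hc hsem φ s1 s2 hg)

theorem sem_sound {n m : ℕ} (hsem : CheckSem F n m) (c : Config Q) (hc : ValidFor F c)
    (P : Pattern Q) (hdom : P.dom = square n) (happ : P.appearsIn c) (v : ℤ × ℤ) :
    P.appearsInPat (subPattern c v (square m)) := by
  obtain ⟨u, hu⟩ := happ
  rw [hdom] at hu
  have base : Window (fun z => c (u + z)) n P.val m := by
    refine ⟨0, fun x hx => ?_⟩
    rw [zero_add]
    rw [mem_square] at hx
    obtain ⟨hnm, _⟩ := hsem
    constructor
    · rw [mem_square]; refine ⟨by omega, by omega, by omega, by omega⟩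
    · exact hu x (by rw [mem_square]; exact hx)
  have hwin := good_walk hc hsem P.val ((u.1 - v.1).natAbs ⊔ (u.2 - v.2).natAbs) u v
    (le_max_left _ _) (le_max_right _ _) base
  obtain ⟨w, hw⟩ := hwin
  refine ⟨w, fun x hx => ?_⟩
  rw [hdom] at hx
  exact hw x hx

end Sound

section Terminate

variable {Q : Type} [Fintype Q] [DecidableEq Q] [Nonempty Q] {F : Set (Pattern Q)}

/-- sup norm on `ℤ × ℤ` -/
def nrm (v : ℤ × ℤ) : ℕ := max v.1.natAbs v.2.natAbs

theorem exists_min_nrm {S : Set (ℤ × ℤ)} (h : S.Nonempty) :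
    ∃ v ∈ S, ∀ v' ∈ S, nrm v ≤ nrm v' := by
  classical
  have h' : ∃ s : ℕ, ∃ v ∈ S, nrm v = s := ⟨nrm h.choose, h.choose, h.choose_spec, rfl⟩
  obtain ⟨v, hv, hvs⟩ := Nat.find_spec h'
  refine ⟨v, hv, fun v' hv' => ?_⟩
  rw [hvs]
  exact Nat.find_min' h' ⟨v', hv', rfl⟩

theorem exists_square_bound (A : Finset (ℤ × ℤ)) : ∃ s : ℕ, ∀ x ∈ A, x ∈ square s := by
  refine ⟨A.sup nrm, fun x hx => ?_⟩
  have h := Finset.le_sup (f := nrm) hx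
  have h1 : x.1.natAbs ≤ A.sup nrm := le_trans (le_max_left _ _) h
  have h2 : x.2.natAbs ≤ A.sup nrm := le_trans (le_max_right _ _) h
  rw [mem_square]
  omega

theorem sem_terminates
    (hqp : ∀ c : Config Q, ValidFor F c → QuasiPeriodic c) (n : ℕ) :
    ∃ m, CheckSem F n m := by
  by_contra hbad
  push_neg at hbad
  have hsel : ∀ m : ℕ, ∃ (g : Config Q) (p : ℤ × ℤ),
      n+1 ≤ m → (LocOK F g (2*m) ∧ p ∈ square (m+1-n) ∧
        ¬ Window g n (fun x => g (p + x)) m) := by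
    intro m
    by_cases hm : n+1 ≤ m
    · have h := hbad m
      rw [CheckSem] at h
      push_neg at h
      obtain ⟨g, hgok, p, hp, hnw⟩ := h hm
      exact ⟨g, p, fun _ => ⟨hgok, hp, hnw⟩⟩
    · exact ⟨fun _ => Classical.arbitrary Q, 0, fun h => absurd h hm⟩
  choose g p hgp using hsel
  set φ : ℤ × ℤ → Q := fun x => ulim (fun m => g m (p m + x)) with hφ
  have hSφ : {m | ∀ x ∈ square n, g m (p m + x) = φ x} ∈ U :=
    climU_agree (fun m z => g m (p m + z)) (square n)
  set S0 : Set ℕ := {m | n+1 ≤ m} ∩ {m | ∀ x ∈ square n, g m (p m + x) = φ x} with hS0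
  have hS0U : S0 ∈ U := Filter.inter_mem (U_ge (n+1)) hSφ
  set Occ : ℕ → Set (ℤ × ℤ) := fun m =>
    {v | ∀ x ∈ square n, (v + x) ∈ square (2*m) ∧ g m (v + x) = φ x} with hOcc
  have hpOcc : ∀ m ∈ S0, p m ∈ Occ m := by
    intro m hm
    obtain ⟨hm1, hm2⟩ := hm
    simp only [hOcc, Set.mem_setOf_eq]
    intro x hx
    refine ⟨?_, hm2 x hx⟩
    have hpm := (hgp m hm1).2.1
    rw [mem_square] at hpm hx ⊢
    simp only [Prod.fst_add, Prod.snd_add]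
    have hm1' : n + 1 ≤ m := hm1
    refine ⟨by omega, by omega, by omega, by omega⟩
  have hmin : ∀ m : ℕ, ∃ uu : ℤ × ℤ, m ∈ S0 → (uu ∈ Occ m ∧ ∀ v ∈ Occ m, nrm uu ≤ nrm v) := by
    intro m
    by_cases hm : m ∈ S0
    · obtain ⟨uu, hu1, hu2⟩ := exists_min_nrm ⟨p m, hpOcc m hm⟩
      exact ⟨uu, fun _ => ⟨hu1, hu2⟩⟩
    · exact ⟨0, fun h => absurd h hm⟩
  choose u hu using hmin
  by_cases hA : ∃ C : ℕ, {m | m ∈ S0 ∧ nrm (u m) ≤ C} ∈ U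
  · -- Case A : bounded nearest occurrences
    obtain ⟨C, hC⟩ := hA
    obtain ⟨vb, hvbsq, hvb⟩ := exists_mem_U_of_union hC (square C)
      (fun v => {m | (m ∈ S0 ∧ nrm (u m) ≤ C) ∧ u m = v}) (by
        intro m hm
        refine Set.mem_iUnion.2 ⟨u m, Set.mem_iUnion.2 ⟨?_, ⟨hm, rfl⟩⟩⟩
        rw [mem_square]
        have := hm.2
        unfold nrm at this
        refine ⟨by omega, by omega, by omega, by omega⟩)
    have hocc : ∀ x ∈ square n, climU g (vb + x) = φ x := by
      intro x hx
      have hag := climU_agree g ((square n).image (fun y => vb + y))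
      obtain ⟨m, hm⟩ := Ultrafilter.nonempty_of_mem (Filter.inter_mem hvb hag)
      obtain ⟨⟨hmS0C, hum⟩, hagm⟩ := hm
      have hOccm := (hu m hmS0C.1).1
      rw [hum] at hOccm
      have h1 := (hOccm x hx).2
      have h2 := hagm (vb + x) (Finset.mem_image_of_mem _ hx)
      rw [← h2]
      exact h1
    have hnowin : ∀ κ : ℕ,
        ¬ ∃ w : ℤ × ℤ, ∀ x ∈ square n, (w + x) ∈ square κ ∧ climU g (w + x) = φ x := by
      rintro κ ⟨w, hw⟩
      have hag := climU_agree g ((square n).image (fun y => w + y))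
      obtain ⟨m, hm⟩ := Ultrafilter.nonempty_of_mem
        (Filter.inter_mem (Filter.inter_mem hvb hag) (U_ge κ))
      obtain ⟨⟨⟨hmS0C, _⟩, hagm⟩, hκ⟩ := hm
      have hmS0 := hmS0C.1
      have hnw := (hgp m hmS0.1).2.2
      refine hnw ⟨w, fun x hx => ?_⟩
      obtain ⟨hs, hval⟩ := hw x hx
      constructor
      · rw [mem_square] at hs ⊢
        have hκ' : κ ≤ m := hκ
        refine ⟨by omega, by omega, by omega, by omega⟩
      · have h2 := hagm (w + x) (Finset.mem_image_of_mem _ hx)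
        rw [h2, hval]
        exact (hmS0.2 x hx).symm
    refine hnowin (nrm vb + n) ⟨vb, fun x hx => ⟨?_, hocc x hx⟩⟩
    rw [mem_square] at hx ⊢
    simp only [Prod.fst_add, Prod.snd_add]
    unfold nrm
    refine ⟨by omega, by omega, by omega, by omega⟩
  · -- Case B : nearest occurrences escape to infinity
    push_neg at hA
    have hSB : ∀ C : ℕ, {m | m ∈ S0 ∧ C < nrm (u m)} ∈ U := by
      intro C
      have h2 : {m | nrm (u m) ≤ C} ∉ U := by
        intro hmem
        refine hA C (Filter.mem_of_superset (Filter.inter_mem hS0U hmem) ?_)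
        rintro m ⟨hm1, hm2⟩
        exact ⟨hm1, hm2⟩
      have h3 := (Ultrafilter.compl_mem_iff_notMem).2 h2
      refine Filter.mem_of_superset (Filter.inter_mem hS0U h3) ?_
      rintro m ⟨hm1, hm2⟩
      refine ⟨hm1, ?_⟩
      simpa using hm2
    set gsh : ℕ → Config Q := fun m z => g m (u m + z) with hgsh
    have hφe : ∀ x ∈ square n, climU gsh x = φ x := by
      intro x hx
      have hag := climU_agree gsh ({x} : Finset (ℤ × ℤ))
      obtain ⟨m, hm⟩ := Ultrafilter.nonempty_of_mem (Filter.inter_mem hS0U hag)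
      obtain ⟨hmS0, hagm⟩ := hm
      have hOccm := (hu m hmS0).1
      have h1 := (hOccm x hx).2
      have h2 := hagm x (Finset.mem_singleton_self x)
      rw [← h2]
      exact h1
    have hun : ∀ m ∈ S0, nrm (u m) ≤ m+1-n := by
      intro m hmS0
      have hmin2 := (hu m hmS0).2 (p m) (hpOcc m hmS0)
      have hp2 := (hgp m hmS0.1).2.1
      rw [mem_square] at hp2
      unfold nrm at *
      omega
    have heval : ValidFor F (climU gsh) := by
      intro T hT happ
      obtain ⟨v, hv⟩ := happ
      obtain ⟨r0, hr0⟩ := exists_square_bound T.dom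
      have hag := climU_agree gsh (T.dom.image (fun y => v + y))
      obtain ⟨m, hm⟩ := Ultrafilter.nonempty_of_mem
        (Filter.inter_mem (Filter.inter_mem hS0U hag) (U_ge (nrm v + r0 + n + 2)))
      obtain ⟨⟨hmS0, hagm⟩, hbig⟩ := hm
      refine (hgp m hmS0.1).1 T hT (u m + v) fun x hx => ?_
      have hum := hun m hmS0
      have hbig' : nrm v + r0 + n + 2 ≤ m := hbig
      have hm1' : n + 1 ≤ m := hmS0.1
      constructor
      · have hxb := hr0 x hx
        rw [mem_square] at hxb ⊢
        simp only [Prod.fst_add, Prod.snd_add]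
        unfold nrm at hum hbig'
        refine ⟨by omega, by omega, by omega, by omega⟩
      · have h2 := hagm (v + x) (Finset.mem_image_of_mem _ hx)
        have h3 := hv x hx
        have h4 : g m (u m + v + x) = gsh m (v + x) := by
          rw [hgsh, add_assoc]
        rw [h4, h2, h3]
    have hpφ : (⟨square n, φ⟩ : Pattern Q).appearsIn (climU gsh) :=
      ⟨0, fun x hx => by rw [zero_add]; exact hφe x hx⟩
    obtain ⟨K, hK⟩ := hqp (climU gsh) heval ⟨square n, φ⟩ hpφ
    set R : ℕ := K + n + 1 with hR
    have hag := climU_agree gsh (square (R + K + n + n + 1))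
    obtain ⟨m, hm⟩ := Ultrafilter.nonempty_of_mem
      (Filter.inter_mem (hSB R) hag)
    obtain ⟨⟨hmS0, hRu⟩, hagm⟩ := hm
    have hm1' : n + 1 ≤ m := hmS0.1
    set t : ℤ × ℤ := (-(max (-(R:ℤ)) (min (u m).1 R)), -(max (-(R:ℤ)) (min (u m).2 R))) with ht
    have ht1 : t.1 = -(max (-(R:ℤ)) (min (u m).1 R)) := rfl
    have ht2 : t.2 = -(max (-(R:ℤ)) (min (u m).2 R)) := rfl
    obtain ⟨w, hw⟩ := hK t
    have hw0 : ((0:ℤ), (0:ℤ)) ∈ square n := by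
      rw [mem_square]; refine ⟨by omega, by omega, by omega, by omega⟩
    have hwK : (w + ((0:ℤ), (0:ℤ))) ∈ square K := (hw _ hw0).1
    rw [mem_square] at hwK
    simp only [Prod.fst_add, Prod.snd_add] at hwK
    have hum := hun m hmS0
    -- the improved occurrence
    have hkeyval : ∀ x ∈ square n, g m (u m + (t + w) + x) = φ x := by
      intro x hx
      have h3' : (w + x) ∈ (subPattern (climU gsh) t (square K)).dom ∧
          (subPattern (climU gsh) t (square K)).val (w + x) = φ x := hw x hx
      have h3 : climU gsh (t + (w + x)) = φ x := h3'.2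
      have hxsq := hx
      rw [mem_square] at hxsq
      have hwx : (w + x) ∈ square K := h3'.1
      rw [mem_square] at hwx
      simp only [Prod.fst_add, Prod.snd_add] at hwx
      have hmem : (t + w + x) ∈ square (R + K + n + n + 1) := by
        rw [mem_square]
        simp only [Prod.fst_add, Prod.snd_add]
        refine ⟨by omega, by omega, by omega, by omega⟩
      have h2 := hagm (t + w + x) (by
        rw [mem_square] at hmem ⊢
        exact hmem)
      have h4 : g m (u m + (t + w) + x) = gsh m (t + w + x) := by
        rw [hgsh, add_assoc, add_assoc]
      rw [h4, h2]
      rw [← add_assoc] at h3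
      exact h3
    have hlt : nrm (u m + (t + w)) < nrm (u m) := by
      have hRu' : R < nrm (u m) := hRu
      unfold nrm at hRu' ⊢
      simp only [Prod.fst_add, Prod.snd_add]
      omega
    have hkey : (u m + (t + w)) ∈ Occ m := by
      simp only [hOcc, Set.mem_setOf_eq]
      intro x hx
      refine ⟨?_, hkeyval x hx⟩
      rw [mem_square] at hx ⊢
      simp only [Prod.fst_add, Prod.snd_add]
      have h5 : nrm (u m + (t + w)) < nrm (u m) := hlt
      unfold nrm at h5 hum
      simp only [Prod.fst_add, Prod.snd_add] at h5
      refine ⟨by omega, by omega, by omega, by omega⟩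
    have hfin := (hu m hmS0).2 _ hkey
    omega

end Terminate

end QP

/-- If a tileset given by a finite set of forbidden patterns admits only quasi-periodic
tilings, there is a total computable `q : ℕ → ℕ` bounding the quasi-periodicity function
of every valid tiling: every pattern of `c` with domain `[-n,n]^2` appears in every
pattern of `c` with domain (a translate of) `[-q n, q n]^2`. -/
theorem stmt4 {Q : Type} [Fintype Q] [DecidableEq Q] (F : Set (Pattern Q)) (hF : F.Finite)
    (hqp : ∀ c : Config Q, ValidFor F c → QuasiPeriodic c) :
    ∃ q : ℕ → ℕ, Computable q ∧
      ∀ c : Config Q, ValidFor F c → ∀ n : ℕ, ∀ P : Pattern Q,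
        P.dom = square n → P.appearsIn c →
          ∀ v : ℤ × ℤ, P.appearsInPat (subPattern c v (square (q n))) := by
  classical
  rcases isEmpty_or_nonempty Q with hQ | hQ
  · exact ⟨id, Computable.id, fun c _ => (hQ.false (c (0, 0))).elim⟩
  · have hk : 0 < Fintype.card Q := Fintype.card_pos
    set e : Q ≃ Fin (Fintype.card Q) := Fintype.equivFin Q with he
    set r : ℕ := hF.toFinset.sup (fun T => T.dom.sup QP.nrm) with hrdef
    have hr : ∀ T ∈ F, ∀ x ∈ T.dom, x ∈ square r := by
      intro T hT x hx
      have h1 : T.dom.sup QP.nrm ≤ r := by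
        rw [hrdef]
        exact Finset.le_sup (f := fun T : Pattern Q => T.dom.sup QP.nrm)
          (hF.mem_toFinset.2 hT)
      have h2 : QP.nrm x ≤ T.dom.sup QP.nrm := Finset.le_sup hx
      have h3 : x.1.natAbs ≤ r := le_trans (le_trans (le_max_left _ _) h2) h1
      have h4 : x.2.natAbs ≤ r := le_trans (le_trans (le_max_right _ _) h2) h1
      rw [QP.mem_square]
      omega
    set LN := hF.toFinset.toList.map (QP.encP e r) with hLNdef
    have hLN : ∀ l, l ∈ LN ↔ ∃ T ∈ F, l = QP.encP e r T := by
      intro l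
      constructor
      · intro hl
        rw [hLNdef, List.mem_map] at hl
        obtain ⟨T, hT, rfl⟩ := hl
        exact ⟨T, hF.mem_toFinset.1 (Finset.mem_toList.1 hT), rfl⟩
      · rintro ⟨T, hT, rfl⟩
        rw [hLNdef, List.mem_map]
        exact ⟨T, Finset.mem_toList.2 (hF.mem_toFinset.2 hT), rfl⟩
    have H : ∀ n, ∃ m, QP.checkB (Fintype.card Q) r LN n m = true := by
      intro n
      obtain ⟨m, hm⟩ := QP.sem_terminates hqp n
      exact ⟨m, QP.bridge_from_sem e r hk hr hLN hm⟩
    obtain ⟨q, hq, hcheck⟩ := QP.computable_find_of_check (Fintype.card Q) r LN H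
    refine ⟨q, hq, fun c hc n P hdom happ v => ?_⟩
    exact QP.sem_sound (QP.bridge_to_sem e r hk hr hLN (hcheck n)) c hc P hdom happ v
end

section
/- For every recursively enumerable set F of forbidden patterns over a finite alphabet Q in dimension 2, there exists a recursive (decidable) set F' of forbidden patterns defining the same set of valid configurations: a configuration avoids all patterns of F if and only if it avoids all patterns of F'. -/
/-- A code for a pattern over `Fin (k+1)`: a finite list of (position, color) pairs. -/
def PatCode (k : ℕ) := List ((ℤ × ℤ) × Fin (k + 1))

/-- Decoding a pattern code into a pattern. -/
def decodePat (k : ℕ) (l : PatCode k) : Pattern (Fin (k + 1)) :=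
  ⟨(l.map Prod.fst).toFinset,
   fun x => match l.find? (fun p => decide (p.1 = x)) with
     | some p => p.2
     | none => 0⟩

instance (k : ℕ) : Primcodable (PatCode k) :=
  inferInstanceAs (Primcodable (List ((ℤ × ℤ) × Fin (k + 1))))

namespace Stmt5Aux

open Primrec Nat.Partrec.Code

/-- The entry type of pattern codes. -/
abbrev E (k : ℕ) := (ℤ × ℤ) × Fin (k + 1)

/-- Does the machine `cde` halt on input `l` within `n` steps? -/
def chk (k : ℕ) (cde : Nat.Partrec.Code) (l : List (E k)) (n : ℕ) : Bool :=
  (evaln n cde (Encodable.encode l)).isSome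

/-- The "padded" part of the recursive forbidden set. -/
def fA (k : ℕ) (cde : Nat.Partrec.Code) (l : List (E k)) : Bool :=
  (List.range l.length).any fun m =>
    decide (l.drop (m + 1) = List.replicate (l.length - (m + 1)) l.headI) &&
      chk k cde (l.take (m + 1)) (l.length - (m + 1))

/-- The part of the recursive forbidden set coming from the empty pattern. -/
def fB (k : ℕ) (cde : Nat.Partrec.Code) (l : List (E k)) : Bool :=
  (!decide (l = [])) && decide (l = List.replicate l.length l.headI) &&
    decide (l.headI.1 = ((0 : ℤ), (0 : ℤ))) && chk k cde [] (l.length - 1)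

/-- The characteristic function of the recursive forbidden set. -/
def fF (k : ℕ) (cde : Nat.Partrec.Code) (l : List (E k)) : Bool :=
  fA k cde l || fB k cde l

section PrimrecLemmas

variable {α β : Type*} [Primcodable α] [Primcodable β]

theorem prim_drop : Primrec fun p : List β × ℕ => p.1.drop p.2 := by
  have h := Primrec.nat_rec' (f := fun p : List β × ℕ => p.2) (g := Prod.fst)
    (h := fun _ q => q.2.tail) Primrec.snd Primrec.fst
    ((Primrec.list_tail.comp (Primrec.snd.comp Primrec.snd)).to₂)
  refine h.of_eq ?_
  rintro ⟨l, n⟩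
  simp only
  induction n with
  | zero => rfl
  | succ n ih => simp [ih, List.tail_drop]

theorem prim_take : Primrec fun p : List β × ℕ => p.1.take p.2 := by
  have h : Primrec fun p : List β × ℕ =>
      ((p.1.reverse.drop (p.1.length - p.2)).reverse) :=
    Primrec.list_reverse.comp (prim_drop.comp
      ((Primrec.list_reverse.comp Primrec.fst).pair
        (Primrec.nat_sub.comp (Primrec.list_length.comp Primrec.fst) Primrec.snd)))
  refine h.of_eq ?_
  rintro ⟨l, n⟩
  rw [← List.reverse_take]
  simp

theorem prim_replicate : Primrec fun p : β × ℕ => List.replicate p.2 p.1 := by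
  have h : Primrec fun p : β × ℕ => (List.range p.2).map fun _ => p.1 :=
    Primrec.list_map (Primrec.list_range.comp Primrec.snd) ((Primrec.fst.comp Primrec.fst).to₂)
  refine h.of_eq ?_
  rintro ⟨a, n⟩
  simp [List.map_const']

theorem prim_any {f : α → List β} {p : α → β → Bool} (hf : Primrec f)
    (hp : Primrec₂ p) : Primrec fun a => (f a).any (p a) := by
  have h := Primrec.list_foldr (g := fun _ => false)
    (h := fun a (q : β × Bool) => p a q.1 || q.2) hf (Primrec.const false)
    (((Primrec.dom_bool₂ (· || ·)).comp (hp.comp Primrec.fst (Primrec.fst.comp Primrec.snd))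
      (Primrec.snd.comp Primrec.snd)).to₂)
  refine h.of_eq fun a => ?_
  induction f a with
  | nil => rfl
  | cons b t ih => simp [ih]

end PrimrecLemmas

theorem prim_chk (k : ℕ) (cde : Nat.Partrec.Code) :
    Primrec fun p : List (E k) × ℕ => chk k cde p.1 p.2 := by
  have h : Primrec fun p : List (E k) × ℕ =>
      evaln p.2 cde (Encodable.encode p.1) :=
    primrec_evaln.comp ((Primrec.snd.pair (Primrec.const cde)).pair
      (Primrec.encode.comp Primrec.fst))
  exact Primrec.option_isSome.comp h

theorem prim_fF (k : ℕ) (cde : Nat.Partrec.Code) : Primrec (fF k cde) := by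
  have hchk := prim_chk k cde
  have hA : Primrec (fA k cde) := by
    refine prim_any (Primrec.list_range.comp Primrec.list_length) ?_
    have msucc : Primrec fun p : List (E k) × ℕ => p.2 + 1 :=
      Primrec.succ.comp Primrec.snd
    have r : Primrec fun p : List (E k) × ℕ => p.1.length - (p.2 + 1) :=
      Primrec.nat_sub.comp (Primrec.list_length.comp Primrec.fst) msucc
    have dropP : Primrec fun p : List (E k) × ℕ => p.1.drop (p.2 + 1) :=
      prim_drop.comp (Primrec.fst.pair msucc)
    have repP : Primrec fun p : List (E k) × ℕ =>
        List.replicate (p.1.length - (p.2 + 1)) p.1.headI :=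
      prim_replicate.comp ((Primrec.list_headI.comp Primrec.fst).pair r)
    have takeP : Primrec fun p : List (E k) × ℕ => p.1.take (p.2 + 1) :=
      prim_take.comp (Primrec.fst.pair msucc)
    have eq1 : Primrec fun p : List (E k) × ℕ =>
        decide (p.1.drop (p.2 + 1) = List.replicate (p.1.length - (p.2 + 1)) p.1.headI) :=
      (Primrec.eq.comp dropP repP).decide
    have chk1 : Primrec fun p : List (E k) × ℕ =>
        chk k cde (p.1.take (p.2 + 1)) (p.1.length - (p.2 + 1)) :=
      hchk.comp (takeP.pair r)
    exact ((Primrec.dom_bool₂ (· && ·)).comp eq1 chk1).to₂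
  have hB : Primrec (fB k cde) := by
    have ne0 : Primrec fun l : List (E k) => !decide (l = []) :=
      (Primrec.dom_bool (!·)).comp (Primrec.eq.comp Primrec.id (Primrec.const [])).decide
    have eqrep : Primrec fun l : List (E k) =>
        decide (l = List.replicate l.length l.headI) :=
      (Primrec.eq.comp Primrec.id
        (prim_replicate.comp (Primrec.list_headI.pair Primrec.list_length))).decide
    have fc : Primrec fun l : List (E k) =>
        decide (l.headI.1 = ((0 : ℤ), (0 : ℤ))) :=
      (Primrec.eq.comp (Primrec.fst.comp Primrec.list_headI) (Primrec.const _)).decide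
    have chkB : Primrec fun l : List (E k) => chk k cde [] (l.length - 1) :=
      (prim_chk k cde).comp ((Primrec.const ([] : List (E k))).pair
        (Primrec.nat_sub.comp Primrec.list_length (Primrec.const 1)))
    exact (Primrec.dom_bool₂ (· && ·)).comp
      ((Primrec.dom_bool₂ (· && ·)).comp
        ((Primrec.dom_bool₂ (· && ·)).comp ne0 eqrep) fc) chkB
  exact (Primrec.dom_bool₂ (· || ·)).comp hA hB

/-- Padding does not change the decoded pattern. -/
theorem decode_pad (k : ℕ) (a : E k) (t : List (E k)) (n : ℕ) :
    decodePat k ((a :: t) ++ List.replicate n a : List (E k)) = decodePat k (a :: t) := by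
  unfold decodePat
  congr 1
  · ext x
    simp only [List.map_append, List.map_replicate, List.toFinset_append, Finset.mem_union,
      List.mem_toFinset, List.mem_replicate, List.map_cons, List.mem_cons]
    constructor
    · rintro (h | ⟨-, h⟩) <;> simp_all
    · intro h; left; exact h
  · funext x
    rw [List.find?_append]
    cases hfind : (a :: t).find? (fun p => decide (p.1 = x)) with
    | some p => simp [hfind]
    | none =>
      have ha : ¬ (a.1 = x) := by
        have := List.find?_eq_none.mp hfind a (by simp)
        simpa using this
      have hrep : (List.replicate n a).find? (fun p => decide (p.1 = x)) = none := by
        refine List.find?_eq_none.mpr fun p hp => ?_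
        rw [List.eq_of_mem_replicate hp]
        simpa using ha
      simp [hfind, hrep]

/-- The pattern decoded from the empty code appears in every configuration. -/
theorem empty_appears (k : ℕ) (c : Config (Fin (k + 1))) :
    (decodePat k ([] : List (E k))).appearsIn c :=
  ⟨(0, 0), by simp [decodePat]⟩

/-- The single-cell pattern carrying the color `c (0,0)` appears in `c`. -/
theorem singleCell_appears (k : ℕ) (c : Config (Fin (k + 1))) (n : ℕ) :
    (decodePat k (List.replicate (n + 1) (((0, 0) : ℤ × ℤ), c (0, 0)) : List (E k))).appearsIn
      c := by
  refine ⟨(0, 0), fun x hx => ?_⟩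
  simp only [decodePat, List.map_replicate, List.mem_toFinset, List.mem_replicate] at hx
  obtain ⟨-, rfl⟩ := hx
  simp [decodePat, List.replicate_succ]

end Stmt5Aux

open Stmt5Aux Nat.Partrec.Code in
/-- For every recursively enumerable set `F` of (codes of) forbidden patterns there is a
recursive set `F'` of (codes of) forbidden patterns defining the same set of valid
configurations. -/
theorem stmt5 (k : ℕ) (F : Set (PatCode k)) (hF : REPred (· ∈ F)) :
    ∃ F' : Set (PatCode k), ComputablePred (· ∈ F') ∧
      ∀ c : Config (Fin (k + 1)),
        ValidFor (decodePat k '' F) c ↔ ValidFor (decodePat k '' F') c := by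
  have hF₀ : REPred (fun l : List (E k) => l ∈ F) := hF
  obtain ⟨cde, hc⟩ := exists_code.1 hF₀
  -- the key semantic characterization of membership in `F`
  have hmem : ∀ l : List (E k), l ∈ F ↔ ∃ n, chk k cde l n = true := by
    intro l
    constructor
    · intro h
      have h1 : Encodable.encode () ∈ eval cde (Encodable.encode l) := by
        rw [hc]
        refine Part.mem_bind_iff.mpr ⟨l, ?_, ?_⟩
        · simp [Encodable.encodek]
        · exact Part.mem_map _ (Part.mem_assert h (Part.mem_some ()))
      obtain ⟨m, hm⟩ := evaln_complete.1 h1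
      exact ⟨m, by simp [chk, Option.isSome_iff_exists]; exact ⟨_, hm⟩⟩
    · rintro ⟨n, hn⟩
      simp only [chk, Option.isSome_iff_exists] at hn
      obtain ⟨y, hy⟩ := hn
      have h2 := evaln_sound (Option.mem_def.mpr hy)
      rw [hc] at h2
      obtain ⟨a, ha, hy2⟩ := Part.mem_bind_iff.mp h2
      rw [Encodable.encodek] at ha
      simp only [Part.coe_some, Part.mem_some_iff] at ha
      subst ha
      obtain ⟨u, hu, -⟩ := (Part.mem_map_iff _).mp hy2
      exact (Part.mem_assert_iff.mp hu).1
  refine ⟨{l : PatCode k | fF k cde l = true}, ?_, ?_⟩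
  · exact ComputablePred.computable_iff.mpr ⟨fF k cde, (prim_fF k cde).to_comp, rfl⟩
  · intro c
    constructor
    · -- valid for F implies valid for F'
      intro hv P hP
      obtain ⟨l', hl', rfl⟩ := hP
      have hl'' : fF k cde l' = true := hl'
      simp only [fF, Bool.or_eq_true] at hl''
      rcases hl'' with hA | hB
      · -- padded case
        simp only [fA, List.any_eq_true] at hA
        obtain ⟨m, hm, hcond⟩ := hA
        rw [List.mem_range] at hm
        rw [Bool.and_eq_true, decide_eq_true_eq] at hcond
        obtain ⟨hdrop, hchk⟩ := hcond
        have hne : (l' : List (E k)) ≠ [] := by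
          intro h; rw [h] at hm; simp at hm
        obtain ⟨a, t, rfl⟩ := List.exists_cons_of_ne_nil hne
        have htake : (a :: t : List (E k)).take (m + 1) = a :: t.take m := rfl
        have hl'eq : (a :: t : List (E k)) =
            (a :: t.take m) ++ List.replicate ((a :: t).length - (m + 1)) a := by
          conv_lhs => rw [← List.take_append_drop (m + 1) (a :: t)]
          rw [hdrop, htake]
          rfl
        have hF1 : (a :: t.take m : List (E k)) ∈ F := by
          rw [hmem]
          exact ⟨(a :: t).length - (m + 1), by rw [← htake]; exact hchk⟩
        have hdec : decodePat k (a :: t) = decodePat k (a :: t.take m) := by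
          conv_lhs => rw [hl'eq]
          exact decode_pad k a (t.take m) _
        rw [hdec]
        exact hv _ ⟨_, hF1, rfl⟩
      · -- empty-pattern case
        simp only [fB] at hB
        simp only [Bool.and_eq_true] at hB
        have hFempty : ([] : List (E k)) ∈ F := (hmem []).2 ⟨l'.length - 1, hB.2⟩
        exact absurd (empty_appears k c) (hv _ ⟨[], hFempty, rfl⟩)
    · -- valid for F' implies valid for F
      intro hv' P hP
      obtain ⟨l, hl, rfl⟩ := hP
      obtain ⟨n, hn⟩ := (hmem l).1 hl
      match l with
      | ([] : List (E k)) =>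
        -- the empty pattern appears everywhere; F' contains a pattern that appears in c
        exfalso
        set l' : List (E k) := List.replicate (n + 1) (((0, 0) : ℤ × ℤ), c (0, 0)) with hl'def
        have hmemF' : fF k cde l' = true := by
          rw [fF, Bool.or_eq_true]
          right
          have h1 : (!decide (l' = [])) = true := by simp [hl'def]
          have h2 : decide (l' = List.replicate l'.length l'.headI) = true := by
            simp [hl'def, List.replicate_succ]
          have h3 : decide (l'.headI.1 = ((0 : ℤ), (0 : ℤ))) = true := by
            simp [hl'def, List.replicate_succ]
          have h4 : chk k cde [] (l'.length - 1) = true := by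
            simpa [hl'def] using hn
          rw [fB, h1, h2, h3, h4]; rfl
        exact hv' _ ⟨l', hmemF', rfl⟩ (singleCell_appears k c n)
      | (a :: t : List (E k)) =>
        set l' : List (E k) := (a :: t) ++ List.replicate n a with hl'def
        have hmemF' : fF k cde l' = true := by
          rw [fF, Bool.or_eq_true]
          left
          rw [fA, List.any_eq_true]
          refine ⟨t.length, ?_, ?_⟩
          · rw [List.mem_range, hl'def]
            simp only [List.length_append, List.length_cons, List.length_replicate]
            omega
          · rw [Bool.and_eq_true, decide_eq_true_eq]
            have hlen : l'.length - (t.length + 1) = n := by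
              simp [hl'def]
            have hl1 : (a :: t : List (E k)).length = t.length + 1 := rfl
            constructor
            · rw [hl'def, ← hl1, List.drop_left, hl1, ← hl'def, hlen]
              have : l'.headI = a := by rw [hl'def]; rfl
              rw [this]
            · rw [hl'def, ← hl1, List.take_left, hl1, ← hl'def, hlen]
              exact hn
        have hdec : decodePat k l' = decodePat k (a :: t) := decode_pad k a t n
        have := hv' _ ⟨l', hmemF', rfl⟩
        rw [hdec] at this
        exact this
end

section
/- For any non-empty minimal effective one-dimensional subshift X ⊆ Σ^Z containing no periodic configuration, there exists a computable sequence (u_n) of finite words, each appearing in some configuration of X, such that no u_n is a prefix of any other u_m (for n ≠ m). -/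
/-- The word `w` occurs in the bi-infinite configuration `c` at position `i`. -/
def OccursAt {α : Type*} (w : List α) (c : ℤ → α) (i : ℤ) : Prop :=
  ∀ j : Fin w.length, c (i + (j : ℕ)) = w.get j

/-- The word `w` appears (somewhere) in `c`. -/
def AppearsIn {α : Type*} (w : List α) (c : ℤ → α) : Prop :=
  ∃ i : ℤ, OccursAt w c i

/-- `w` is in the language of the set of configurations `X`. -/
def InLang {α : Type*} (X : Set (ℤ → α)) (w : List α) : Prop :=
  ∃ c ∈ X, AppearsIn w c

/-- `X` is minimal: every word of its language appears in every configuration of `X`. -/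
def MinimalLang {α : Type*} (X : Set (ℤ → α)) : Prop :=
  ∀ w : List α, InLang X w → ∀ c ∈ X, AppearsIn w c

/-- The set of configurations avoiding every word of `Fw`. -/
def Avoiders {α : Type*} (Fw : Set (List α)) : Set (ℤ → α) :=
  {c | ∀ w ∈ Fw, ¬ AppearsIn w c}

/-- `c` is periodic (its shift orbit is finite). -/
def PeriodicConf {α : Type*} (c : ℤ → α) : Prop :=
  ∃ p : ℤ, p ≠ 0 ∧ ∀ i : ℤ, c (i + p) = c i

/-- `X` is shift-invariant. -/
def ShiftInv {α : Type*} (X : Set (ℤ → α)) : Prop :=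
  ∀ c ∈ X, (fun i => c (i + 1)) ∈ X ∧ (fun i => c (i - 1)) ∈ X

/-- `X` is a subshift: closed (for the product of discrete topologies) and
shift-invariant. -/
def IsSubshift {α : Type*} (X : Set (ℤ → α)) : Prop :=
  @IsClosed _ (@Pi.topologicalSpace ℤ (fun _ => α) (fun _ => ⊥)) X ∧ ShiftInv X


namespace S6

variable {α : Type*}

/-- get?-characterization of prefixes. -/
lemma prefix_iff_get? {w v : List α} :
    w <+: v ↔ ∀ j, j < w.length → v[j]? = w[j]? := by
  constructor
  · rintro ⟨r, rfl⟩ j hj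
    rw [List.getElem?_append_left hj]
  · intro h
    have hle : w.length ≤ v.length := by
      by_contra hlt
      push_neg at hlt
      have h1 := h v.length hlt
      rw [List.getElem?_eq_none_iff.2 le_rfl] at h1
      rw [eq_comm, List.getElem?_eq_none_iff] at h1
      omega
    rw [List.prefix_iff_eq_take]
    apply List.ext_getElem?
    intro j
    by_cases hj : j < w.length
    · rw [List.getElem?_take_of_lt hj, h j hj]
    · rw [List.getElem?_eq_none_iff.2 (le_of_not_gt hj), eq_comm, List.getElem?_eq_none_iff]
      simp only [List.length_take]
      omega

/-- get?-characterization of infixes. -/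
lemma infix_iff_get? {w v : List α} :
    w <:+: v ↔ ∃ d : ℕ, d + w.length ≤ v.length ∧
      ∀ j, j < w.length → v[(d + j)]? = w[j]? := by
  constructor
  · rintro ⟨t, r, rfl⟩
    refine ⟨t.length, by simp, fun j hj => ?_⟩
    rw [List.append_assoc, List.getElem?_append_right (by omega), Nat.add_sub_cancel_left,
      List.getElem?_append_left hj]
  · rintro ⟨d, hd, h⟩
    have hw : w = ((v.drop d).take w.length) := by
      apply List.ext_getElem?
      intro j
      by_cases hj : j < w.length
      · rw [List.getElem?_take_of_lt hj, List.getElem?_drop, h j hj]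
      · rw [List.getElem?_eq_none_iff.2 (le_of_not_gt hj), eq_comm, List.getElem?_eq_none_iff]
        simp only [List.length_take, List.length_drop]
        omega
    rw [hw]
    exact ((List.take_prefix _ _).isInfix).trans ((List.drop_suffix _ _).isInfix)

def win (c : ℤ → α) (i : ℤ) (n : ℕ) : List α := (List.range n).map fun t : ℕ => c (i + (t : ℤ))

@[simp] lemma win_length (c : ℤ → α) (i : ℤ) (n : ℕ) : (win c i n).length = n := by
  rw [win, List.length_map, List.length_range]

lemma win_get? (c : ℤ → α) (i : ℤ) (n : ℕ) (j : ℕ) (h : j < n) :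
    (win c i n)[j]? = some (c (i + j)) := by
  rw [win, List.getElem?_map, List.getElem?_range h, Option.map_some]

lemma win_append (c : ℤ → α) (i : ℤ) (m n : ℕ) :
    win c i (m + n) = win c i m ++ win c (i + m) n := by
  apply List.ext_getElem?
  intro j
  rcases lt_or_ge j m with h | h
  · rw [List.getElem?_append_left (by simpa using h), win_get? _ _ _ _ h, win_get? _ _ _ _ (by omega)]
  · rw [List.getElem?_append_right (by simpa using h), win_length]
    rcases lt_or_ge j (m + n) with h2 | h2
    · rw [win_get? _ _ _ _ h2, win_get? _ _ _ _ (by omega)]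
      congr 2
      push_cast [Int.ofNat_sub h]
      ring
    · rw [List.getElem?_eq_none_iff.2 (by simpa using h2), eq_comm, List.getElem?_eq_none_iff]
      simp only [win_length]; omega

lemma win_prefix (c : ℤ → α) (i : ℤ) {m n : ℕ} (h : m ≤ n) :
    win c i m <+: win c i n := by
  obtain ⟨d, rfl⟩ := Nat.exists_eq_add_of_le h
  rw [win_append]; exact List.prefix_append _ _

lemma occursAt_iff_win {w : List α} {c : ℤ → α} {i : ℤ} :
    OccursAt w c i ↔ win c i w.length = w := by
  constructor
  · intro h
    apply List.ext_getElem?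
    intro j
    by_cases hj : j < w.length
    · rw [win_get? _ _ _ _ hj, List.getElem?_eq_getElem hj]
      exact congrArg some (h ⟨j, hj⟩)
    · rw [List.getElem?_eq_none_iff.2 (by simpa using le_of_not_gt hj), eq_comm, List.getElem?_eq_none_iff]
      omega
  · intro h j
    have := congrArg (fun l => l[(j : ℕ)]?) h
    rw [win_get? _ _ _ _ j.isLt, List.getElem?_eq_getElem j.isLt] at this
    simpa [List.get_eq_getElem] using Option.some_injective _ this

lemma appears_iff_win {w : List α} {c : ℤ → α} :
    AppearsIn w c ↔ ∃ i : ℤ, win c i w.length = w := by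
  unfold AppearsIn; simp only [occursAt_iff_win]

lemma appears_of_infix_win {w : List α} {c : ℤ → α} {i : ℤ} {n : ℕ}
    (h : w <:+: win c i n) : AppearsIn w c := by
  rw [infix_iff_get?] at h
  obtain ⟨d, hd, h⟩ := h
  rw [win_length] at hd
  rw [appears_iff_win]
  refine ⟨i + d, ?_⟩
  apply List.ext_getElem?
  intro j
  by_cases hj : j < w.length
  · rw [win_get? _ _ _ _ hj, ← h j hj, win_get? _ _ _ _ (by omega)]
    congr 2; push_cast; ring
  · rw [List.getElem?_eq_none_iff.2 (by simpa using le_of_not_gt hj), eq_comm, List.getElem?_eq_none_iff]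
    omega

lemma win_infix_win (c : ℤ → α) (a : ℤ) (d n L : ℕ) (h : d + n ≤ L) :
    win c (a + d) n <:+: win c a L := by
  obtain ⟨e, rfl⟩ := Nat.exists_eq_add_of_le h
  rw [win_append c a (d + n) e, win_append c a d n]
  exact ⟨win c a d, win c (a + (d + n : ℕ)) e, rfl⟩

lemma inLang_win {X : Set (ℤ → α)} {c : ℤ → α} (hc : c ∈ X) (i : ℤ) (n : ℕ) :
    InLang X (win c i n) := by
  refine ⟨c, hc, ?_⟩
  rw [appears_iff_win]
  exact ⟨i, by rw [win_length]⟩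

lemma inLang_of_infix {X : Set (ℤ → α)} {w w' : List α} (h : w' <:+: w)
    (hw : InLang X w) : InLang X w' := by
  obtain ⟨c, hc, hap⟩ := hw
  rw [appears_iff_win] at hap
  obtain ⟨i, hi⟩ := hap
  exact ⟨c, hc, appears_of_infix_win (n := w.length) (by rw [hi]; exact h)⟩

lemma avoider_not_infix_win {Fw : Set (List α)} {c : ℤ → α} (hc : c ∈ Avoiders Fw)
    {f : List α} (hf : f ∈ Fw) (i : ℤ) (n : ℕ) : ¬ f <:+: win c i n :=
  fun h => hc f hf (appears_of_infix_win h)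

lemma win_eq_ofFn (c : ℤ → α) (i : ℤ) (n : ℕ) :
    win c i n = List.ofFn (fun j : Fin n => c (i + j)) := by
  apply List.ext_getElem?
  intro j
  by_cases hj : j < n
  · rw [win_get? _ _ _ _ hj, List.getElem?_ofFn]
    simp [hj]
  · rw [List.getElem?_eq_none_iff.2 (by simpa using le_of_not_gt hj), eq_comm, List.getElem?_eq_none_iff,
      List.length_ofFn]
    omega

end S6

namespace S6

/-! ### Boolean testers for prefix / infix -/

def occB {k : ℕ} (w v : List (Fin k)) (d : ℕ) : Bool :=
  (List.range w.length).all fun j => decide (v[(d + j)]? = w[j]?)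

def prefB {k : ℕ} (w v : List (Fin k)) : Bool := occB w v 0

def infB {k : ℕ} (w v : List (Fin k)) : Bool :=
  (List.range (v.length + 1)).any fun d => occB w v d

lemma occB_iff {k : ℕ} {w v : List (Fin k)} {d : ℕ} :
    occB w v d = true ↔ ∀ j, j < w.length → v[(d + j)]? = w[j]? := by
  unfold occB
  rw [List.all_eq_true]
  constructor
  · intro h j hj
    have := h j (List.mem_range.2 hj)
    exact of_decide_eq_true this
  · intro h j hj
    exact decide_eq_true (h j (List.mem_range.1 hj))

lemma prefB_iff {k : ℕ} {w v : List (Fin k)} : prefB w v = true ↔ w <+: v := by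
  rw [prefB, occB_iff, prefix_iff_get?]
  constructor
  · intro h j hj; have := h j hj; rwa [Nat.zero_add] at this
  · intro h j hj; rw [Nat.zero_add]; exact h j hj

lemma infB_iff {k : ℕ} {w v : List (Fin k)} : infB w v = true ↔ w <:+: v := by
  rw [infB, List.any_eq_true, infix_iff_get?]
  constructor
  · rintro ⟨d, hdm, hd⟩
    have hdv : d < v.length + 1 := List.mem_range.1 hdm
    rw [occB_iff] at hd
    have hle : d + w.length ≤ v.length := by
      by_contra hlt
      push_neg at hlt
      have hj : v.length - d < w.length := by omega
      have h1 := hd _ hj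
      rw [List.getElem?_eq_none_iff.2 (by omega), eq_comm, List.getElem?_eq_none_iff] at h1
      omega
    exact ⟨d, hle, hd⟩
  · rintro ⟨d, hle, hd⟩
    refine ⟨d, List.mem_range.2 (by omega), ?_⟩
    rw [occB_iff]
    exact hd

/-! ### Enumerating all words of a given length -/

def pw (k : ℕ) : ℕ → ℕ
  | 0 => 1
  | n + 1 => k * pw k n

def toF {k : ℕ} (hk : 0 < k) (x : ℕ) : Fin k := ⟨x % k, Nat.mod_lt x hk⟩

def wordOf {k : ℕ} (hk : 0 < k) (N m : ℕ) : List (Fin k) :=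
  (List.range N).map fun i => toF hk (m / pw k i)

def valOf {k : ℕ} (v : List (Fin k)) : ℕ := v.foldr (fun a acc => a.val + k * acc) 0

@[simp] lemma wordOf_length {k : ℕ} (hk : 0 < k) (N m : ℕ) :
    (wordOf hk N m).length = N := by
  rw [wordOf, List.length_map, List.length_range]

lemma valOf_lt {k : ℕ} (hk : 0 < k) (v : List (Fin k)) : valOf v < pw k v.length := by
  induction v with
  | nil => simp [valOf, pw]
  | cons a v ih =>
    have ha : a.val < k := a.isLt
    simp only [valOf, List.foldr_cons, List.length_cons, pw] at *
    nlinarith [ih]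

lemma wordOf_valOf {k : ℕ} (hk : 0 < k) (v : List (Fin k)) :
    wordOf hk v.length (valOf v) = v := by
  induction v with
  | nil => simp [wordOf]
  | cons a v ih =>
    have hM : valOf (a :: v) = a.val + k * valOf v := rfl
    rw [wordOf, List.length_cons, List.range_succ_eq_map, List.map_cons, List.map_map]
    congr 1
    · apply Fin.ext
      show valOf (a :: v) / pw k 0 % k = a.val
      rw [hM, pw, Nat.div_one, Nat.add_mul_mod_self_left, Nat.mod_eq_of_lt a.isLt]
    · have step : ∀ j : ℕ, valOf (a :: v) / pw k (j + 1) = valOf v / pw k j := by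
        intro j
        rw [hM, pw, ← Nat.div_div_eq_div_mul]
        congr 1
        rw [Nat.add_mul_div_left _ _ hk, Nat.div_eq_of_lt a.isLt, Nat.zero_add]
      calc List.map ((fun i => toF hk (valOf (a :: v) / pw k i)) ∘ Nat.succ) (List.range v.length)
          = List.map (fun i => toF hk (valOf v / pw k i)) (List.range v.length) := by
            apply List.map_congr_left
            intro j _
            show toF hk (valOf (a :: v) / pw k (j + 1)) = toF hk (valOf v / pw k j)
            rw [step]
        _ = v := ih

lemma exists_wordOf {k : ℕ} (hk : 0 < k) {v : List (Fin k)} {N : ℕ} (hv : v.length = N) :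
    ∃ m, m < pw k N ∧ wordOf hk N m = v := by
  subst hv
  exact ⟨valOf v, valOf_lt hk v, wordOf_valOf hk v⟩

/-! ### Stage-`st` approximation of the forbidden set -/

def badw (k : ℕ) (cd : Nat.Partrec.Code) (st : ℕ) : List (List (Fin k)) :=
  (List.range st).filterMap fun m =>
    (Encodable.decode (α := List (Fin k)) m).bind fun f =>
      if (Nat.Partrec.Code.evaln st cd (Encodable.encode f)).isSome then some f else none

lemma mem_badw {k : ℕ} {cd : Nat.Partrec.Code} {st : ℕ} {f : List (Fin k)} :
    f ∈ badw k cd st ↔ ∃ m < st, Encodable.decode (α := List (Fin k)) m = some f ∧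
      (Nat.Partrec.Code.evaln st cd (Encodable.encode f)).isSome := by
  rw [badw, List.mem_filterMap]
  simp only [List.mem_range, Option.bind_eq_some_iff]
  constructor
  · rintro ⟨m, hm, g, hd, hif⟩
    by_cases he : (Nat.Partrec.Code.evaln st cd (Encodable.encode g)).isSome
    · rw [if_pos he] at hif
      cases hif
      exact ⟨m, hm, hd, he⟩
    · rw [if_neg he] at hif; cases hif
  · rintro ⟨m, hm, hd, he⟩
    exact ⟨m, hm, f, hd, by rw [if_pos he]⟩

lemma badw_mono {k : ℕ} {cd : Nat.Partrec.Code} {st st' : ℕ} (h : st ≤ st')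
    {f : List (Fin k)} (hf : f ∈ badw k cd st) : f ∈ badw k cd st' := by
  rw [mem_badw] at hf ⊢
  obtain ⟨m, hm, hd, he⟩ := hf
  refine ⟨m, by omega, hd, ?_⟩
  rw [Option.isSome_iff_exists] at he ⊢
  obtain ⟨x, hx⟩ := he
  exact ⟨x, Nat.Partrec.Code.evaln_mono h hx⟩

/-! ### The certificate checker -/

def certB {k : ℕ} (hk : 0 < k) (cd : Nat.Partrec.Code) (N st : ℕ) (w : List (Fin k)) : Bool :=
  (List.range (pw k N)).all fun m =>
    infB w (wordOf hk N m) || (badw k cd st).any fun f => infB f (wordOf hk N m)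

lemma certB_iff {k : ℕ} (hk : 0 < k) (cd : Nat.Partrec.Code) (N st : ℕ) (w : List (Fin k)) :
    certB hk cd N st w = true ↔ ∀ v : List (Fin k), v.length = N →
      (w <:+: v ∨ ∃ f ∈ badw k cd st, f <:+: v) := by
  rw [certB, List.all_eq_true]
  constructor
  · intro h v hv
    obtain ⟨m, hm, rfl⟩ := exists_wordOf hk hv
    have := h m (List.mem_range.2 hm)
    rw [Bool.or_eq_true, infB_iff, List.any_eq_true] at this
    rcases this with h1 | ⟨f, hf, h2⟩
    · exact Or.inl h1
    · exact Or.inr ⟨f, hf, infB_iff.1 h2⟩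
  · intro h m _
    rw [Bool.or_eq_true, infB_iff, List.any_eq_true]
    rcases h (wordOf hk N m) (wordOf_length hk N m) with h1 | ⟨f, hf, h2⟩
    · exact Or.inl h1
    · exact Or.inr ⟨f, hf, infB_iff.2 h2⟩

/-! ### The step checker and fuelled search -/

@[reducible] def Blk (k : ℕ) := (List (Fin k) × Fin k × Fin k) × (ℕ × ℕ) × (ℕ × ℕ)

def okB {k : ℕ} (hk : 0 < k) (cd : Nat.Partrec.Code) (v : List (Fin k)) (x : ℕ) : Bool :=
  (Encodable.decode (α := Blk k) x).elim false fun p =>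
    prefB v p.1.1 && !(decide (p.1.2.1 = p.1.2.2)) &&
      certB hk cd p.2.1.1 p.2.1.2 (p.1.1 ++ [p.1.2.1]) &&
      certB hk cd p.2.2.1 p.2.2.2 (p.1.1 ++ [p.1.2.2])

def findB {k : ℕ} (hk : 0 < k) (cd : Nat.Partrec.Code) (v : List (Fin k)) : ℕ → Option ℕ
  | 0 => none
  | fuel + 1 => (findB hk cd v fuel).elim
      (if okB hk cd v fuel then some fuel else none) some

lemma findB_mono {k : ℕ} (hk : 0 < k) (cd : Nat.Partrec.Code) (v : List (Fin k))
    {fuel fuel' : ℕ} (h : fuel ≤ fuel') {x : ℕ} (hx : findB hk cd v fuel = some x) :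
    findB hk cd v fuel' = some x := by
  induction fuel' with
  | zero => exact (Nat.le_zero.1 h) ▸ hx
  | succ f ih =>
    rcases Nat.lt_or_ge fuel (f + 1) with h' | h'
    · have := ih (by omega)
      rw [findB, this]
      rfl
    · have : fuel = f + 1 := by omega
      rwa [← this]

lemma findB_none {k : ℕ} (hk : 0 < k) (cd : Nat.Partrec.Code) (v : List (Fin k))
    {fuel : ℕ} (h : ∀ z, z < fuel → okB hk cd v z = false) :
    findB hk cd v fuel = none := by
  induction fuel with
  | zero => rfl
  | succ f ih =>
    rw [findB, ih (fun z hz => h z (by omega))]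
    show (if okB hk cd v f then some f else none) = none
    rw [h f (by omega)]
    rfl

lemma findB_eq_find {k : ℕ} (hk : 0 < k) (cd : Nat.Partrec.Code) (v : List (Fin k))
    (h : ∃ x, okB hk cd v x = true) {fuel : ℕ} (hf : Nat.find h < fuel) :
    findB hk cd v fuel = some (Nat.find h) := by
  have h1 : findB hk cd v (Nat.find h + 1) = some (Nat.find h) := by
    have hnone : findB hk cd v (Nat.find h) = none := by
      apply findB_none
      intro z hz
      cases hok : okB hk cd v z with
      | false => rfl
      | true => exact absurd (Nat.find_le hok) (Nat.not_le.2 hz)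
    rw [findB, hnone]
    show (if okB hk cd v (Nat.find h) then some (Nat.find h) else none) = some (Nat.find h)
    rw [if_pos (Nat.find_spec h)]
  exact findB_mono hk cd v (by omega) h1

/-! ### The fuelled chain construction -/

def stepV {k : ℕ} (p : Blk k) : List (Fin k) := p.1.1 ++ [p.1.2.2]
def stepU {k : ℕ} (p : Blk k) : List (Fin k) := p.1.1 ++ [p.1.2.1]

def chainV {k : ℕ} (hk : 0 < k) (cd : Nat.Partrec.Code) (fuel : ℕ) : ℕ → Option (List (Fin k))
  | 0 => some []
  | n + 1 => (chainV hk cd fuel n).bind fun v => (findB hk cd v fuel).bind fun x =>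
      (Encodable.decode (α := Blk k) x).map stepV

def uF {k : ℕ} (hk : 0 < k) (cd : Nat.Partrec.Code) (n fuel : ℕ) : Option (List (Fin k)) :=
  (chainV hk cd fuel n).bind fun v => (findB hk cd v fuel).bind fun x =>
      (Encodable.decode (α := Blk k) x).map stepU

lemma chainV_mono {k : ℕ} (hk : 0 < k) (cd : Nat.Partrec.Code) {fuel fuel' : ℕ}
    (h : fuel ≤ fuel') (n : ℕ) {v : List (Fin k)}
    (hv : chainV hk cd fuel n = some v) : chainV hk cd fuel' n = some v := by
  induction n generalizing v with
  | zero => exact hv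
  | succ n ih =>
    rw [chainV] at hv ⊢
    rcases hc : chainV hk cd fuel n with _ | w
    · rw [hc] at hv; simp at hv
    · rw [hc] at hv
      rw [ih hc]
      simp only [Option.bind_some] at hv ⊢
      rcases hf : findB hk cd w fuel with _ | x
      · rw [hf] at hv; simp at hv
      · rw [hf] at hv
        rw [findB_mono hk cd w h hf]
        exact hv

lemma uF_mono {k : ℕ} (hk : 0 < k) (cd : Nat.Partrec.Code) {n fuel fuel' : ℕ}
    (h : fuel ≤ fuel') {u : List (Fin k)}
    (hu : uF hk cd n fuel = some u) : uF hk cd n fuel' = some u := by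
  rw [uF] at hu ⊢
  rcases hc : chainV hk cd fuel n with _ | v
  · rw [hc] at hu; simp at hu
  · rw [hc] at hu
    rw [chainV_mono hk cd h n hc]
    simp only [Option.bind_some] at hu ⊢
    rcases hf : findB hk cd v fuel with _ | x
    · rw [hf] at hu; simp at hu
    · rw [hf] at hu
      rw [findB_mono hk cd v h hf]
      exact hu

end S6

namespace S6

section PrimrecFacts

open Primrec

lemma all_eq_foldr {β : Type*} (l : List β) (p : β → Bool) :
    l.all p = l.foldr (fun b r => p b && r) true := by
  induction l with
  | nil => rfl
  | cons a l ih => rw [List.all_cons, List.foldr_cons, ih]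

lemma any_eq_foldr {β : Type*} (l : List β) (p : β → Bool) :
    l.any p = l.foldr (fun b r => p b || r) false := by
  induction l with
  | nil => rfl
  | cons a l ih => rw [List.any_cons, List.foldr_cons, ih]

lemma primrec_all {α β : Type} [Primcodable α] [Primcodable β]
    {f : α → List β} {g : α → β → Bool} (hf : Primrec f) (hg : Primrec₂ g) :
    Primrec fun a => (f a).all (g a) := by
  have hh : Primrec₂ (fun (a : α) (p : β × Bool) => g a p.1 && p.2) :=
    (dom_bool₂ (· && ·)).comp (hg.comp fst (fst.comp snd)) (snd.comp snd)
  exact (list_foldr hf (const true) hh).of_eq fun a => (all_eq_foldr _ _).symm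

lemma primrec_any {α β : Type} [Primcodable α] [Primcodable β]
    {f : α → List β} {g : α → β → Bool} (hf : Primrec f) (hg : Primrec₂ g) :
    Primrec fun a => (f a).any (g a) := by
  have hh : Primrec₂ (fun (a : α) (p : β × Bool) => g a p.1 || p.2) :=
    (dom_bool₂ (· || ·)).comp (hg.comp fst (fst.comp snd)) (snd.comp snd)
  exact (list_foldr hf (const false) hh).of_eq fun a => (any_eq_foldr _ _).symm

variable {k : ℕ} (hk : 0 < k) (cd : Nat.Partrec.Code)

lemma primrec_occB :
    Primrec fun q : (List (Fin k) × List (Fin k)) × ℕ => occB q.1.1 q.1.2 q.2 := by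
  apply primrec_all (list_range.comp (list_length.comp (fst.comp fst)))
  exact (Primrec.eq.comp
    ((list_getElem? (α := Fin k)).comp (snd.comp (fst.comp fst)) (nat_add.comp (snd.comp fst) snd))
    ((list_getElem? (α := Fin k)).comp (fst.comp (fst.comp fst)) snd)).decide

lemma primrec_prefB : Primrec₂ (prefB (k := k)) :=
  primrec_occB.comp (Primrec.pair Primrec.id (const 0))

lemma primrec_infB : Primrec₂ (infB (k := k)) := by
  apply primrec_any (list_range.comp (succ.comp (list_length.comp snd)))
  exact primrec_occB

lemma primrec_pw : Primrec (pw k) := by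
  have : Primrec fun n => Nat.rec (motive := fun _ => ℕ) 1 (fun _ ih => k * ih) n :=
    nat_rec₁ 1 (nat_mul.comp (const k) snd)
  apply this.of_eq
  intro n
  induction n with
  | zero => rfl
  | succ n ih => simp only [pw, ih]

lemma primrec_toF : Primrec (toF hk) := by
  rw [← fin_val_iff]
  exact (nat_mod.comp Primrec.id (const k)).of_eq fun x => rfl

lemma primrec_wordOf : Primrec₂ (wordOf hk) := by
  apply list_map (list_range.comp fst)
  exact (primrec_toF hk).comp (nat_div.comp (snd.comp fst) (primrec_pw.comp snd))

lemma primrec_badw : Primrec (badw k cd) := by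
  apply listFilterMap list_range
  have hcond : Primrec fun q : ℕ × ℕ =>
      ((Encodable.decode (α := List (Fin k)) q.2).map fun f =>
        (Nat.Partrec.Code.evaln q.1 cd (Encodable.encode f)).isSome) := by
    apply option_map (Primrec.decode.comp snd)
    exact option_isSome.comp (Nat.Partrec.Code.primrec_evaln.comp
      (Primrec.pair (Primrec.pair (fst.comp fst) (const cd)) (Primrec.encode.comp snd)))
  have : Primrec₂ fun (st : ℕ) (m : ℕ) =>
      (Encodable.decode (α := List (Fin k)) m).bind fun f =>
        bif (Nat.Partrec.Code.evaln st cd (Encodable.encode f)).isSome then some f else none := by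
    apply option_bind (Primrec.decode.comp snd)
    exact Primrec.cond
      (option_isSome.comp (Nat.Partrec.Code.primrec_evaln.comp
        (Primrec.pair (Primrec.pair (fst.comp fst) (const cd)) (Primrec.encode.comp snd))))
      (option_some.comp snd) (const none)
  apply this.of_eq
  intro st m
  rcases Encodable.decode (α := List (Fin k)) m with _ | f
  · rfl
  · show (bif (Nat.Partrec.Code.evaln st cd (Encodable.encode f)).isSome then some f else none) =
      (if (Nat.Partrec.Code.evaln st cd (Encodable.encode f)).isSome then some f else none)
    cases (Nat.Partrec.Code.evaln st cd (Encodable.encode f)).isSome <;> simp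

lemma primrec_certB :
    Primrec fun p : (ℕ × ℕ) × List (Fin k) => certB hk cd p.1.1 p.1.2 p.2 := by
  have hA : Primrec fun q : ((ℕ × ℕ) × List (Fin k)) × ℕ =>
      infB q.1.2 (wordOf hk q.1.1.1 q.2) :=
    primrec_infB.comp (snd.comp fst) ((primrec_wordOf hk).comp (fst.comp (fst.comp fst)) snd)
  have hB : Primrec fun q : ((ℕ × ℕ) × List (Fin k)) × ℕ =>
      (badw k cd q.1.1.2).any fun f => infB f (wordOf hk q.1.1.1 q.2) := by
    apply primrec_any ((primrec_badw cd).comp (snd.comp (fst.comp fst)))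
    exact primrec_infB.comp snd
      ((primrec_wordOf hk).comp (fst.comp (fst.comp (fst.comp fst))) (snd.comp fst))
  have H : Primrec fun p : (ℕ × ℕ) × List (Fin k) =>
      (List.range (pw k p.1.1)).all fun m =>
        infB p.2 (wordOf hk p.1.1 m) ||
          (badw k cd p.1.2).any fun f => infB f (wordOf hk p.1.1 m) :=
    primrec_all (list_range.comp ((primrec_pw (k := k)).comp (fst.comp fst)))
      ((dom_bool₂ (· || ·)).comp hA hB)
  exact H.of_eq fun p => rfl

lemma primrec_okB : Primrec₂ (okB hk cd) := by
  have hbig : Primrec₂ fun (a : List (Fin k) × ℕ) (p : Blk k) =>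
      (prefB a.1 p.1.1 && !(decide (p.1.2.1 = p.1.2.2)) &&
        certB hk cd p.2.1.1 p.2.1.2 (p.1.1 ++ [p.1.2.1]) &&
        certB hk cd p.2.2.1 p.2.2.2 (p.1.1 ++ [p.1.2.2]) : Bool) := by
    have t1 : Primrec fun q : (List (Fin k) × ℕ) × Blk k => prefB q.1.1 q.2.1.1 :=
      primrec_prefB.comp (fst.comp fst) (fst.comp (fst.comp snd))
    have t2 : Primrec fun q : (List (Fin k) × ℕ) × Blk k =>
        !(decide (q.2.1.2.1 = q.2.1.2.2)) :=
      Primrec.not.comp (Primrec.eq.comp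
        (fst.comp (snd.comp (fst.comp snd))) (snd.comp (snd.comp (fst.comp snd)))).decide
    have t3 : Primrec fun q : (List (Fin k) × ℕ) × Blk k =>
        certB hk cd q.2.2.1.1 q.2.2.1.2 (q.2.1.1 ++ [q.2.1.2.1]) :=
      (primrec_certB hk cd).comp (Primrec.pair
        (Primrec.pair (fst.comp (fst.comp (snd.comp snd))) (snd.comp (fst.comp (snd.comp snd))))
        (list_append.comp (fst.comp (fst.comp snd))
          (list_cons.comp (fst.comp (snd.comp (fst.comp snd))) (const []))))
    have t4 : Primrec fun q : (List (Fin k) × ℕ) × Blk k =>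
        certB hk cd q.2.2.2.1 q.2.2.2.2 (q.2.1.1 ++ [q.2.1.2.2]) :=
      (primrec_certB hk cd).comp (Primrec.pair
        (Primrec.pair (fst.comp (snd.comp (snd.comp snd))) (snd.comp (snd.comp (snd.comp snd))))
        (list_append.comp (fst.comp (fst.comp snd))
          (list_cons.comp (snd.comp (snd.comp (fst.comp snd))) (const []))))
    exact (dom_bool₂ (· && ·)).comp
      ((dom_bool₂ (· && ·)).comp ((dom_bool₂ (· && ·)).comp t1 t2) t3) t4
  have : Primrec₂ fun (v : List (Fin k)) (x : ℕ) =>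
      Option.casesOn (motive := fun _ => Bool) (Encodable.decode (α := Blk k) x) false fun p =>
        (prefB v p.1.1 && !(decide (p.1.2.1 = p.1.2.2)) &&
          certB hk cd p.2.1.1 p.2.1.2 (p.1.1 ++ [p.1.2.1]) &&
          certB hk cd p.2.2.1 p.2.2.2 (p.1.1 ++ [p.1.2.2]) : Bool) := by
    apply option_casesOn (Primrec.decode.comp snd) (const false)
    exact hbig.comp (Primrec.pair (fst.comp fst) (snd.comp fst)) snd
  have key : ∀ (v : List (Fin k)) (x : ℕ),
      (Option.casesOn (motive := fun _ => Bool) (Encodable.decode (α := Blk k) x) false fun p =>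
        (prefB v p.1.1 && !(decide (p.1.2.1 = p.1.2.2)) &&
          certB hk cd p.2.1.1 p.2.1.2 (p.1.1 ++ [p.1.2.1]) &&
          certB hk cd p.2.2.1 p.2.2.2 (p.1.1 ++ [p.1.2.2]) : Bool)) = okB hk cd v x := by
    intro v x
    rw [okB]
    cases Encodable.decode (α := Blk k) x <;> rfl
  apply Primrec.of_eq this
  rintro ⟨v, x⟩
  exact key v x

lemma primrec_findB : Primrec₂ (findB hk cd) := by
  have hg : Primrec₂ fun (v : List (Fin k)) (p : ℕ × Option ℕ) =>
      (Option.casesOn p.2 (bif okB hk cd v p.1 then some p.1 else none) some : Option ℕ) := by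
    apply option_casesOn (snd.comp snd)
    · exact Primrec.cond ((primrec_okB hk cd).comp fst (fst.comp snd))
        (option_some.comp (fst.comp snd)) (const none)
    · exact option_some.comp snd
  have H := Primrec.nat_rec (f := fun _ : List (Fin k) => (none : Option ℕ)) (const none) hg
  have key : ∀ (v : List (Fin k)) (fuel : ℕ),
      (Nat.rec (none : Option ℕ) (fun n IH =>
        (Option.casesOn IH (bif okB hk cd v n then some n else none) some : Option ℕ)) fuel)
      = findB hk cd v fuel := by
    intro v fuel
    induction fuel with
    | zero => rfl
    | succ f ih =>
      show (Option.casesOn (Nat.rec _ _ f : Option ℕ) _ _ : Option ℕ) = findB hk cd v (f + 1)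
      rw [ih, findB]
      rcases findB hk cd v f with _ | x
      · show (bif okB hk cd v f then some f else none) =
          (if okB hk cd v f then some f else none)
        cases okB hk cd v f <;> rfl
      · rfl
  apply Primrec.of_eq H
  rintro ⟨v, fuel⟩
  exact key v fuel

lemma primrec_stepV : Primrec (stepV (k := k)) :=
  list_append.comp (fst.comp fst) (list_cons.comp (snd.comp (snd.comp fst)) (const []))

lemma primrec_stepU : Primrec (stepU (k := k)) :=
  list_append.comp (fst.comp fst) (list_cons.comp (fst.comp (snd.comp fst)) (const []))

lemma primrec_inner (stp : Blk k → List (Fin k)) (hstp : Primrec stp) :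
    Primrec₂ fun (q : ℕ × ℕ) (v : List (Fin k)) =>
      (findB hk cd v q.1).bind fun x => (Encodable.decode (α := Blk k) x).map stp := by
  apply option_bind ((primrec_findB hk cd).comp snd (fst.comp fst))
  exact option_map (Primrec.decode.comp snd) (hstp.comp snd)

lemma primrec_chainV : Primrec₂ (chainV hk cd) := by
  have hg : Primrec₂ fun (fuel : ℕ) (p : ℕ × Option (List (Fin k))) =>
      p.2.bind fun v => (findB hk cd v fuel).bind fun x =>
        (Encodable.decode (α := Blk k) x).map stepV := by
    apply option_bind (snd.comp snd)
    exact (primrec_inner hk cd stepV primrec_stepV).comp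
      (Primrec.pair (fst.comp fst) (fst.comp fst)) snd
  have H := Primrec.nat_rec (f := fun _ : ℕ => (some [] : Option (List (Fin k)))) (const (some [])) hg
  have key : ∀ (fuel n : ℕ),
      (Nat.rec (some [] : Option (List (Fin k))) (fun _ IH =>
        IH.bind fun v => (findB hk cd v fuel).bind fun x =>
          (Encodable.decode (α := Blk k) x).map stepV) n)
      = chainV hk cd fuel n := by
    intro fuel n
    induction n with
    | zero => rfl
    | succ n ih =>
      show (Nat.rec _ _ n : Option (List (Fin k))).bind _ = chainV hk cd fuel (n + 1)
      rw [ih, chainV]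
  apply Primrec.of_eq H
  rintro ⟨fuel, n⟩
  exact key fuel n

lemma computable_uF : Computable₂ (uF hk cd) := by
  have : Primrec₂ (uF hk cd) := by
    have : Primrec fun p : ℕ × ℕ => (chainV hk cd p.2 p.1).bind fun v =>
        (findB hk cd v p.2).bind fun x => (Encodable.decode (α := Blk k) x).map stepU := by
      apply option_bind ((primrec_chainV hk cd).comp snd fst)
      exact (primrec_inner hk cd stepU primrec_stepU).comp
        (Primrec.pair (snd.comp fst) (snd.comp fst)) snd
    exact this.of_eq fun p => rfl
  exact this.to_comp

end PrimrecFacts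

end S6

namespace S6

section MainLemmas

variable {k : ℕ} (hk : 0 < k) (cd : Nat.Partrec.Code) {Fw : Set (List (Fin k))}

lemma badw_sound (hcd : ∀ f : List (Fin k), f ∈ Fw ↔
      ∃ y, y ∈ Nat.Partrec.Code.eval cd (Encodable.encode f))
    {st : ℕ} {f : List (Fin k)} (hf : f ∈ badw k cd st) : f ∈ Fw := by
  rw [mem_badw] at hf
  obtain ⟨m, _, _, hsome⟩ := hf
  rw [hcd f]
  rw [Option.isSome_iff_exists] at hsome
  obtain ⟨y, hy⟩ := hsome
  exact ⟨y, Nat.Partrec.Code.evaln_sound hy⟩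

lemma badw_complete (hcd : ∀ f : List (Fin k), f ∈ Fw ↔
      ∃ y, y ∈ Nat.Partrec.Code.eval cd (Encodable.encode f))
    {f : List (Fin k)} (hf : f ∈ Fw) : ∃ st, f ∈ badw k cd st := by
  rw [hcd f] at hf
  obtain ⟨y, hy⟩ := hf
  rw [Nat.Partrec.Code.evaln_complete] at hy
  obtain ⟨st0, hy⟩ := hy
  refine ⟨max (Encodable.encode f + 1) st0, ?_⟩
  rw [mem_badw]
  refine ⟨Encodable.encode f,
    lt_of_lt_of_le (Nat.lt_succ_self _) (le_max_left _ _), Encodable.encodek f, ?_⟩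
  rw [Option.isSome_iff_exists]
  exact ⟨y, Nat.Partrec.Code.evaln_mono (le_max_right _ _) hy⟩

lemma certB_sound (hcd : ∀ f : List (Fin k), f ∈ Fw ↔
      ∃ y, y ∈ Nat.Partrec.Code.eval cd (Encodable.encode f))
    {N st : ℕ} {w : List (Fin k)} (hc : certB hk cd N st w = true)
    {c : ℤ → Fin k} (hcav : c ∈ Avoiders Fw) (i : ℤ) : w <:+: win c i N := by
  have := (certB_iff hk cd N st w).1 hc (win c i N) (win_length c i N)
  rcases this with h | ⟨f, hfb, hfi⟩
  · exact h
  · exact absurd hfi (avoider_not_infix_win hcav (badw_sound cd hcd hfb) i N)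

lemma certB_inLang (hcd : ∀ f : List (Fin k), f ∈ Fw ↔
      ∃ y, y ∈ Nat.Partrec.Code.eval cd (Encodable.encode f))
    (hne : (Avoiders Fw).Nonempty)
    {N st : ℕ} {w : List (Fin k)} (hc : certB hk cd N st w = true) :
    InLang (Avoiders Fw) w := by
  obtain ⟨c, hcav⟩ := hne
  exact ⟨c, hcav, appears_of_infix_win (certB_sound hk cd hcd hc hcav 0)⟩

lemma pw_pos (N : ℕ) : 0 < pw k N → True := fun _ => trivial

lemma certB_complete (hcd : ∀ f : List (Fin k), f ∈ Fw ↔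
      ∃ y, y ∈ Nat.Partrec.Code.eval cd (Encodable.encode f))
    (hmin : MinimalLang (Avoiders Fw))
    {w : List (Fin k)} (hw : InLang (Avoiders Fw) w) :
    ∃ N st, certB hk cd N st w = true := by
  by_contra hno
  push_neg at hno
  -- Step 1: arbitrarily long words avoiding both `w` and all of `Fw`.
  have step1 : ∀ N : ℕ, ∃ v : List (Fin k), v.length = N ∧ ¬ w <:+: v ∧
      ∀ f ∈ Fw, ¬ f <:+: v := by
    intro N
    have h1 : ∀ st : ℕ, ∃ v : List (Fin k), v.length = N ∧ ¬ w <:+: v ∧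
        ∀ f ∈ badw k cd st, ¬ f <:+: v := by
      intro st
      have h2 : ¬ ∀ v : List (Fin k), v.length = N →
          (w <:+: v ∨ ∃ f ∈ badw k cd st, f <:+: v) :=
        fun hall => hno N st ((certB_iff hk cd N st w).2 hall)
      obtain ⟨v, hv⟩ := not_forall.1 h2
      rw [Classical.not_imp, not_or] at hv
      have hvf := hv.2.2
      push_neg at hvf
      exact ⟨v, hv.1, hv.2.1, hvf⟩
    choose g hg1 hg2 hg3 using h1
    have hgval : ∀ st, valOf (g st) < pw k N := by
      intro st
      have := valOf_lt hk (g st)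
      rwa [hg1 st] at this
    set G : ℕ → Fin (pw k N) := fun st => ⟨valOf (g st), hgval st⟩ with hG
    obtain ⟨y, hy⟩ := Finite.exists_infinite_fiber G
    have hginv : ∀ st ∈ G ⁻¹' {y}, g st = wordOf hk N y.val := by
      intro st hst
      have h4 : valOf (g st) = y.val := by
        have : G st = y := hst
        rw [hG] at this
        exact congrArg Fin.val this
      rw [← h4, ← hg1 st, wordOf_valOf hk (g st)]
    have hinf : (G ⁻¹' {y}).Infinite := Set.infinite_coe_iff.1 hy
    obtain ⟨st₁, hst₁, _⟩ := hinf.exists_gt 0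
    refine ⟨wordOf hk N y.val, wordOf_length hk N y.val, ?_, ?_⟩
    · rw [← hginv st₁ hst₁]; exact hg2 st₁
    · intro f hf
      obtain ⟨st0, hst0⟩ := badw_complete cd hcd hf
      obtain ⟨st, hstmem, hstgt⟩ := hinf.exists_gt st0
      rw [← hginv st hstmem]
      exact hg3 st f (badw_mono (le_of_lt hstgt) hst0)
  -- Step 2: compactness
  choose vN hlen hnw hnf using step1
  letI : TopologicalSpace (Fin k) := ⊥
  haveI : DiscreteTopology (Fin k) := ⟨rfl⟩
  set C : ℕ → Set (ℤ → Fin k) := fun N =>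
    {c | ¬ w <:+: win c (-(N:ℤ)) (2*N+1) ∧ ∀ f ∈ Fw, ¬ f <:+: win c (-(N:ℤ)) (2*N+1)} with hC
  have hC_closed : ∀ N, IsClosed (C N) := by
    intro N
    have heq : C N = (fun (c : ℤ → Fin k) (j : Fin (2*N+1)) => c (-(N:ℤ) + j)) ⁻¹'
        {g : Fin (2*N+1) → Fin k | ¬ w <:+: List.ofFn g ∧ ∀ f ∈ Fw, ¬ f <:+: List.ofFn g} := by
      ext c
      simp only [hC, Set.mem_preimage, Set.mem_setOf_eq, ← win_eq_ofFn]
    rw [heq]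
    exact (isClosed_discrete _).preimage (continuous_pi fun j => continuous_apply _)
  have hC_ne : ∀ N, (C N).Nonempty := by
    intro N
    set c₀ : ℤ → Fin k := fun x => (vN (2*N+1)).getD (x + N).toNat ⟨0, hk⟩ with hc₀
    have hwin : win c₀ (-(N:ℤ)) (2*N+1) = vN (2*N+1) := by
      apply List.ext_getElem?
      intro j
      by_cases hj : j < 2*N+1
      · rw [win_get? _ _ _ _ hj]
        have harg : ((-(N:ℤ) + j) + N).toNat = j := by omega
        rw [hc₀]
        show some ((vN (2*N+1)).getD ((-(N:ℤ) + j) + N).toNat ⟨0, hk⟩) = _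
        rw [harg]
        have hjlen : j < (vN (2*N+1)).length := by rw [hlen]; exact hj
        rw [List.getD_eq_getElem (hn := hjlen), List.getElem?_eq_getElem hjlen]
      · rw [List.getElem?_eq_none_iff.2 (by simpa using le_of_not_gt hj), eq_comm, List.getElem?_eq_none_iff,
          hlen]
        omega
    refine ⟨c₀, ?_, ?_⟩
    · rw [hwin]; exact hnw (2*N+1)
    · intro f hf; rw [hwin]; exact hnf (2*N+1) f hf
  have hC_anti : ∀ N, C (N+1) ⊆ C N := by
    intro N c hc
    have hinf : win c (-(N:ℤ)) (2*N+1) <:+: win c (-((N+1:ℕ):ℤ)) (2*(N+1)+1) := by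
      have := win_infix_win c (-((N+1:ℕ):ℤ)) 1 (2*N+1) (2*(N+1)+1) (by omega)
      have harg : -((N+1:ℕ):ℤ) + (1:ℕ) = -(N:ℤ) := by push_cast; ring
      rwa [harg] at this
    exact ⟨fun h => hc.1 (h.trans hinf), fun f hf h => hc.2 f hf (h.trans hinf)⟩
  have hcompact : IsCompact (C 0) := by
    haveI : CompactSpace (ℤ → Fin k) := by infer_instance
    exact (hC_closed 0).isCompact
  obtain ⟨c, hc⟩ := IsCompact.nonempty_iInter_of_sequence_nonempty_isCompact_isClosed
    C hC_anti hC_ne hcompact hC_closed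
  simp only [Set.mem_iInter] at hc
  have hbig : ∀ (i : ℤ) (n : ℕ), ¬ w <:+: win c i n ∧ ∀ f ∈ Fw, ¬ f <:+: win c i n := by
    intro i n
    set N : ℕ := i.natAbs + n with hN
    have hinf : win c i n <:+: win c (-(N:ℤ)) (2*N+1) := by
      have hd : ((i + N).toNat : ℤ) = i + N := by
        rw [Int.toNat_of_nonneg]
        omega
      have := win_infix_win c (-(N:ℤ)) (i + N).toNat n (2*N+1) (by omega)
      have harg : -(N:ℤ) + ((i + N).toNat : ℕ) = i := by
        rw [hd]; ring
      rwa [harg] at this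
    exact ⟨fun h => (hc N).1 (h.trans hinf), fun f hf h => (hc N).2 f hf (h.trans hinf)⟩
  have hcav : c ∈ Avoiders Fw := by
    intro f hf hapf
    rw [appears_iff_win] at hapf
    obtain ⟨i, hi⟩ := hapf
    exact (hbig i f.length).2 f hf (by rw [hi])
  have hwap : AppearsIn w c := hmin w hw c hcav
  rw [appears_iff_win] at hwap
  obtain ⟨i, hi⟩ := hwap
  exact (hbig i w.length).1 (by rw [hi])

end MainLemmas

end S6

namespace S6

section RS

variable {k : ℕ} (cd : Nat.Partrec.Code) {Fw : Set (List (Fin k))}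

/-- In a minimal aperiodic subshift, every word of the language extends to a
right-special word. -/
lemma exists_rs (hk : 0 < k)
    (hcd : ∀ f : List (Fin k), f ∈ Fw ↔ ∃ y, y ∈ Nat.Partrec.Code.eval cd (Encodable.encode f))
    (hne : (Avoiders Fw).Nonempty) (hmin : MinimalLang (Avoiders Fw))
    (hap : ∀ c ∈ Avoiders Fw, ¬ PeriodicConf c)
    {v : List (Fin k)} (hv : InLang (Avoiders Fw) v) :
    ∃ (s : List (Fin k)) (a b : Fin k), v <+: s ∧ a ≠ b ∧
      InLang (Avoiders Fw) (s ++ [a]) ∧ InLang (Avoiders Fw) (s ++ [b]) := by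
  by_contra hno
  push_neg at hno
  -- uniqueness of extensions of `v` of any given length
  have uniq : ∀ (n : ℕ) (t t' : List (Fin k)), t.length = n → t'.length = n →
      InLang (Avoiders Fw) t → InLang (Avoiders Fw) t' → v <+: t → v <+: t' → t = t' := by
    intro n
    induction n with
    | zero =>
      intro t t' ht ht' _ _ _ _
      rw [List.length_eq_zero_iff] at ht ht'
      rw [ht, ht']
    | succ n ih =>
      intro t t' ht ht' hlt hlt' hpre hpre'
      rcases Nat.lt_or_ge n v.length with hn | hn
      · -- here length t = n+1 ≤ v.length so t = v = t'
        have h1 : v.length ≤ t.length := hpre.length_le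
        have h2 : v.length ≤ t'.length := hpre'.length_le
        have e1 : t = v := (hpre.eq_of_length (by omega)).symm
        have e2 : t' = v := (hpre'.eq_of_length (by omega)).symm
        rw [e1, e2]
      · -- decompose as t₀ ++ [x]
        have htne : t ≠ [] := by intro h; rw [h] at ht; simp at ht
        have htne' : t' ≠ [] := by intro h; rw [h] at ht'; simp at ht'
        obtain ⟨t₀, x, rfl⟩ : ∃ t₀ x, t = t₀ ++ [x] :=
          ⟨t.dropLast, t.getLast htne, (List.dropLast_append_getLast htne).symm⟩
        obtain ⟨t₀', x', rfl⟩ : ∃ t₀' x', t' = t₀' ++ [x'] :=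
          ⟨t'.dropLast, t'.getLast htne', (List.dropLast_append_getLast htne').symm⟩
        have hl0 : t₀.length = n := by simp at ht; omega
        have hl0' : t₀'.length = n := by simp at ht'; omega
        have hpre0 : v <+: t₀ :=
          List.prefix_of_prefix_length_le hpre (List.prefix_append _ _) (by omega)
        have hpre0' : v <+: t₀' :=
          List.prefix_of_prefix_length_le hpre' (List.prefix_append _ _) (by omega)
        have hlng0 : InLang (Avoiders Fw) t₀ :=
          inLang_of_infix (List.prefix_append _ _).isInfix hlt
        have hlng0' : InLang (Avoiders Fw) t₀' :=
          inLang_of_infix (List.prefix_append _ _).isInfix hlt'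
        have heq0 : t₀ = t₀' := ih t₀ t₀' hl0 hl0' hlng0 hlng0' hpre0 hpre0'
        subst heq0
        by_cases hxx : x = x'
        · rw [hxx]
        · exact absurd hlt' (hno t₀ x x' hpre0 hxx hlt)
  -- a configuration and two occurrences of v
  obtain ⟨c, hcav⟩ := hne
  obtain ⟨N, st, hcert⟩ := certB_complete hk cd hcd hmin hv
  have occ : ∀ i : ℤ, ∃ d : ℕ, d + v.length ≤ N ∧ win c (i + d) v.length = v := by
    intro i
    have h1 := certB_sound hk cd hcd hcert hcav i
    rw [infix_iff_get?] at h1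
    obtain ⟨d, hd, hget⟩ := h1
    rw [win_length] at hd
    refine ⟨d, hd, ?_⟩
    apply List.ext_getElem?
    intro j
    by_cases hj : j < v.length
    · rw [win_get? _ _ _ _ hj, ← hget j hj, win_get? _ _ _ _ (by omega)]
      congr 2
      push_cast
      ring
    · rw [List.getElem?_eq_none_iff.2 (by simpa using le_of_not_gt hj), eq_comm, List.getElem?_eq_none_iff]
      omega
  obtain ⟨d₀, hd₀, hocc₀⟩ := occ 0
  obtain ⟨d₁, hd₁, hocc₁⟩ := occ ((0 : ℤ) + d₀ + 1)
  set i₀ : ℤ := (0 : ℤ) + d₀ with hi₀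
  set i₁ : ℤ := ((0 : ℤ) + d₀ + 1) + d₁ with hi₁
  -- all right extensions agree
  have ext_eq : ∀ ℓ : ℕ, win c i₀ (v.length + ℓ) = win c i₁ (v.length + ℓ) := by
    intro ℓ
    apply uniq (v.length + ℓ) _ _ (win_length _ _ _) (win_length _ _ _)
      (inLang_win hcav _ _) (inLang_win hcav _ _)
    · conv_lhs => rw [← hocc₀]
      exact win_prefix c i₀ (Nat.le_add_right _ _)
    · conv_lhs => rw [← hocc₁]
      exact win_prefix c i₁ (Nat.le_add_right _ _)
  have point : ∀ t : ℕ, c (i₀ + t) = c (i₁ + t) := by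
    intro t
    have h1 := congrArg (fun l => l[t]?) (ext_eq (t + 1))
    rw [win_get? _ _ _ _ (by omega), win_get? _ _ _ _ (by omega)] at h1
    exact Option.some_injective _ h1
  set p : ℤ := i₁ - i₀ with hp
  have hp0 : 0 < p := by rw [hp, hi₀, hi₁]; omega
  have hper : ∀ x : ℤ, i₀ ≤ x → c (x + p) = c x := by
    intro x hx
    have h1 := point (x - i₀).toNat
    have e1 : i₀ + (((x - i₀).toNat : ℕ) : ℤ) = x := by omega
    have e2 : i₁ + (((x - i₀).toNat : ℕ) : ℤ) = x + p := by rw [hp]; omega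
    rw [e1, e2] at h1
    exact h1.symm
  have hn : ∀ (n : ℕ) (x : ℤ), i₀ ≤ x → c (x + n * p) = c x := by
    intro n
    induction n with
    | zero => intro x _; simp
    | succ n ih =>
      intro x hx
      have h0 : (0:ℤ) ≤ (n : ℤ) * p := mul_nonneg (Int.natCast_nonneg n) hp0.le
      have e1 : x + (((n : ℕ) + 1 : ℕ) : ℤ) * p = (x + (n : ℤ) * p) + p := by push_cast; ring
      rw [e1, hper (x + (n : ℤ) * p) (by linarith), ih x hx]
  have hcong : ∀ x y : ℤ, i₀ ≤ x → i₀ ≤ y → p ∣ (x - y) → c x = c y := by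
    rintro x y hx hy ⟨m, hm⟩
    rw [mul_comm] at hm
    rcases le_or_gt 0 m with hm0 | hm0
    · have htm : ((m.toNat : ℕ) : ℤ) = m := Int.toNat_of_nonneg hm0
      have e : x = y + ((m.toNat : ℕ) : ℤ) * p := by rw [htm]; linarith
      rw [e]
      exact hn m.toNat y hy
    · have htm : (((-m).toNat : ℕ) : ℤ) = -m := Int.toNat_of_nonneg (by omega)
      have e : y = x + (((-m).toNat : ℕ) : ℤ) * p := by rw [htm]; linarith
      rw [e]
      exact (hn (-m).toNat x hx).symm
  set q : ℤ → Fin k := fun x => c (i₀ + x % p) with hq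
  have hq_av : q ∈ Avoiders Fw := by
    intro f hf hapf
    rw [appears_iff_win] at hapf
    obtain ⟨j, hj⟩ := hapf
    apply hcav f hf
    rw [appears_iff_win]
    refine ⟨i₀ + j % p, ?_⟩
    set n : ℕ := f.length with hnf
    rw [← hj]
    apply List.ext_getElem?
    intro t
    by_cases htl : t < n
    · rw [win_get? _ _ _ _ htl, win_get? _ _ _ _ htl]
      congr 1
      show c (i₀ + j % p + t) = q (j + t)
      show c (i₀ + j % p + t) = c (i₀ + (j + t) % p)
      apply hcong
      · have := Int.emod_nonneg j (ne_of_gt hp0); omega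
      · have := Int.emod_nonneg (j + t) (ne_of_gt hp0); omega
      · have h1 : ∀ a : ℤ, p ∣ (a % p - a) := by
          intro a
          rw [Int.emod_def]
          exact ⟨-(a / p), by ring⟩
        have h2 := h1 j
        have h3 := h1 (j + t)
        have e : (i₀ + j % p + t) - (i₀ + (j + t) % p) =
            (j % p - j) - ((j + t) % p - (j + t)) := by ring
        rw [e]
        exact dvd_sub h2 h3
    · have h4 : n ≤ t := le_of_not_gt htl
      rw [List.getElem?_eq_none_iff.2 (by rw [win_length]; exact h4), eq_comm, List.getElem?_eq_none_iff,
        win_length]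
      exact h4
  have hq_per : PeriodicConf q := by
    refine ⟨p, ne_of_gt hp0, fun x => ?_⟩
    show c (i₀ + (x + p) % p) = c (i₀ + x % p)
    have hxe : (x + p) % p = x % p := by simp
    rw [hxe]
  exact hap q hq_av hq_per

end RS

end S6

namespace S6

section OkB

variable {k : ℕ} (cd : Nat.Partrec.Code) {Fw : Set (List (Fin k))}

lemma okB_exists (hk : 0 < k)
    (hcd : ∀ f : List (Fin k), f ∈ Fw ↔ ∃ y, y ∈ Nat.Partrec.Code.eval cd (Encodable.encode f))
    (hne : (Avoiders Fw).Nonempty) (hmin : MinimalLang (Avoiders Fw))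
    (hap : ∀ c ∈ Avoiders Fw, ¬ PeriodicConf c)
    {v : List (Fin k)} (hv : InLang (Avoiders Fw) v) :
    ∃ x, okB hk cd v x = true := by
  obtain ⟨s, a, b, hpre, hab, hA, hB⟩ := exists_rs cd hk hcd hne hmin hap hv
  obtain ⟨N₁, st₁, h₁⟩ := certB_complete hk cd hcd hmin hA
  obtain ⟨N₂, st₂, h₂⟩ := certB_complete hk cd hcd hmin hB
  refine ⟨Encodable.encode (((s, a, b), (N₁, st₁), (N₂, st₂)) : Blk k), ?_⟩
  rw [okB, Encodable.encodek]
  show (prefB v s && !(decide (a = b)) && certB hk cd N₁ st₁ (s ++ [a]) &&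
    certB hk cd N₂ st₂ (s ++ [b])) = true
  simp [prefB_iff.2 hpre, hab, h₁, h₂]

lemma okB_spec (hk : 0 < k)
    (hcd : ∀ f : List (Fin k), f ∈ Fw ↔ ∃ y, y ∈ Nat.Partrec.Code.eval cd (Encodable.encode f))
    (hne : (Avoiders Fw).Nonempty)
    {v : List (Fin k)} {x : ℕ} (hx : okB hk cd v x = true) :
    ∃ p : Blk k, Encodable.decode (α := Blk k) x = some p ∧ v <+: p.1.1 ∧
      p.1.2.1 ≠ p.1.2.2 ∧ InLang (Avoiders Fw) (p.1.1 ++ [p.1.2.1]) ∧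
      InLang (Avoiders Fw) (p.1.1 ++ [p.1.2.2]) := by
  rw [okB] at hx
  rcases hd : Encodable.decode (α := Blk k) x with _ | p
  · rw [hd] at hx
    exact absurd hx (by simp)
  · rw [hd] at hx
    have hx' : (prefB v p.1.1 && !(decide (p.1.2.1 = p.1.2.2)) &&
        certB hk cd p.2.1.1 p.2.1.2 (p.1.1 ++ [p.1.2.1]) &&
        certB hk cd p.2.2.1 p.2.2.2 (p.1.1 ++ [p.1.2.2])) = true := hx
    simp only [Bool.and_eq_true, Bool.not_eq_true', decide_eq_false_iff_not] at hx'
    exact ⟨p, rfl, prefB_iff.1 hx'.1.1.1, hx'.1.1.2,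
      certB_inLang hk cd hcd hne hx'.1.2, certB_inLang hk cd hcd hne hx'.2⟩

end OkB

end S6


/-- For any non-empty minimal effective $1$-dimensional subshift with no periodic
configuration, there is a computable sequence of words of its language, no one of which
is a prefix of another. -/
theorem stmt6 (k : ℕ) (Fw : Set (List (Fin k))) (hre : REPred (· ∈ Fw))
    (X : Set (ℤ → Fin k)) (hX : X = Avoiders Fw)
    (hne : X.Nonempty) (hmin : MinimalLang X)
    (hap : ∀ c ∈ X, ¬ PeriodicConf c) :
    ∃ u : ℕ → List (Fin k), Computable u ∧
      (∀ n : ℕ, InLang X (u n)) ∧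
      ∀ n m : ℕ, n ≠ m → ¬ (u n <+: u m) := by
  classical
  subst hX
  rcases Nat.eq_zero_or_pos k with hk0 | hk
  · obtain ⟨c, _⟩ := hne
    subst hk0
    exact (c 0).elim0
  -- extract a code for the enumeration of Fw
  obtain ⟨cd, hcd_eval⟩ := Nat.Partrec.Code.exists_code.1 hre
  have hcd : ∀ f : List (Fin k), f ∈ Fw ↔
      ∃ y, y ∈ Nat.Partrec.Code.eval cd (Encodable.encode f) := by
    intro f
    have h1 : Nat.Partrec.Code.eval cd (Encodable.encode f) =
        Part.bind ((Encodable.decode (α := List (Fin k)) (Encodable.encode f) : Option (List (Fin k))) : Part (List (Fin k)))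
          (fun a => (Part.assert (a ∈ Fw) fun _ => Part.some ()).map Encodable.encode) :=
      congrFun hcd_eval _
    rw [h1, Encodable.encodek]
    simp only [Part.coe_some, Part.bind_some, Part.mem_map_iff, Part.mem_assert_iff,
      Part.mem_some_iff]
    constructor
    · intro hf
      exact ⟨Encodable.encode (), (), ⟨hf, trivial⟩, rfl⟩
    · rintro ⟨y, u, ⟨hf, -⟩, -⟩
      exact hf
  -- the greedy chain construction
  let step : List (Fin k) → List (Fin k) := fun v =>
    if h : ∃ x, S6.okB hk cd v x = true then
      ((Encodable.decode (α := S6.Blk k) (Nat.find h)).elim [] S6.stepV) else []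
  let V : ℕ → List (Fin k) := fun n => step^[n] []
  have hV0 : V 0 = [] := rfl
  have hstep : ∀ n, V (n + 1) = step (V n) := fun n => Function.iterate_succ_apply' step n []
  have hnil : InLang (Avoiders Fw) ([] : List (Fin k)) := by
    obtain ⟨c, hc⟩ := hne
    exact ⟨c, hc, 0, fun j => j.elim0⟩
  have hVlang : ∀ n, InLang (Avoiders Fw) (V n) := by
    intro n
    induction n with
    | zero => exact hnil
    | succ n ih =>
      have hEx := S6.okB_exists cd hk hcd hne hmin hap ih
      obtain ⟨p, hdec, hpre, hab, hA, hB⟩ := S6.okB_spec cd hk hcd hne (Nat.find_spec hEx)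
      have : V (n + 1) = p.1.1 ++ [p.1.2.2] := by
        rw [hstep n]
        show (if h : ∃ x, S6.okB hk cd (V n) x = true then
          ((Encodable.decode (α := S6.Blk k) (Nat.find h)).elim [] S6.stepV) else []) = _
        rw [dif_pos hEx, hdec]
        rfl
      rw [this]
      exact hB
  have hEx : ∀ n, ∃ x, S6.okB hk cd (V n) x = true :=
    fun n => S6.okB_exists cd hk hcd hne hmin hap (hVlang n)
  have key : ∀ n, ∃ p : S6.Blk k,
      Encodable.decode (α := S6.Blk k) (Nat.find (hEx n)) = some p ∧
      V n <+: p.1.1 ∧ p.1.2.1 ≠ p.1.2.2 ∧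
      InLang (Avoiders Fw) (p.1.1 ++ [p.1.2.1]) ∧
      InLang (Avoiders Fw) (p.1.1 ++ [p.1.2.2]) ∧
      V (n + 1) = p.1.1 ++ [p.1.2.2] := by
    intro n
    obtain ⟨p, hdec, hpre, hab, hA, hB⟩ := S6.okB_spec cd hk hcd hne (Nat.find_spec (hEx n))
    refine ⟨p, hdec, hpre, hab, hA, hB, ?_⟩
    rw [hstep n]
    show (if h : ∃ x, S6.okB hk cd (V n) x = true then
      ((Encodable.decode (α := S6.Blk k) (Nat.find h)).elim [] S6.stepV) else []) = _
    rw [dif_pos (hEx n), hdec]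
    rfl
  choose blk hdec hpre hab hlia hlib hVsucc using key
  set U : ℕ → List (Fin k) := fun n => (blk n).1.1 ++ [(blk n).1.2.1] with hU
  -- chain facts
  have hVchain : ∀ n, V n <+: V (n + 1) := by
    intro n
    rw [hVsucc n]
    exact (hpre n).trans (List.prefix_append _ _)
  have hVmono : ∀ n m, n ≤ m → V n <+: V m := by
    intro n m hnm
    induction m with
    | zero =>
      have : n = 0 := by omega
      rw [this]
    | succ m ih =>
      rcases Nat.lt_or_ge n (m + 1) with h | h
      · exact (ih (by omega)).trans (hVchain m)
      · have : n = m + 1 := by omega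
        rw [this]
  have hUlen : ∀ n, (U n).length = (V (n + 1)).length := by
    intro n
    rw [hU, hVsucc n]
    simp
  -- the antichain property, ordered case
  have hanti : ∀ n m, n < m → ¬ (U n <+: U m) ∧ ¬ (U m <+: U n) := by
    intro n m hnm
    have hVpreU : V (n + 1) <+: U m :=
      ((hVmono (n + 1) m hnm).trans (hpre m)).trans (List.prefix_append _ _)
    constructor
    · intro hcon
      have h1 : U n <+: V (n + 1) :=
        List.prefix_of_prefix_length_le hcon hVpreU (le_of_eq (hUlen n))
      have h2 : U n = V (n + 1) := h1.eq_of_length (hUlen n)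
      rw [hU, hVsucc n] at h2
      simp only [List.append_cancel_left_eq, List.cons.injEq] at h2
      exact hab n h2.1
    · intro hcon
      have h1 := hcon.length_le
      have h2 : (V (n + 1)).length ≤ (V m).length := (hVmono (n + 1) m hnm).length_le
      have h3 : (V m).length ≤ (blk m).1.1.length := (hpre m).length_le
      have h4 : (U m).length = (blk m).1.1.length + 1 := by rw [hU]; simp
      have h5 := hUlen n
      omega
  -- computability
  have hfuelV : ∀ n, ∃ fuel, S6.chainV hk cd fuel n = some (V n) := by
    intro n
    induction n with
    | zero => exact ⟨0, rfl⟩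
    | succ n ih =>
      obtain ⟨fuel, hf⟩ := ih
      refine ⟨max fuel (Nat.find (hEx n) + 1), ?_⟩
      rw [S6.chainV, S6.chainV_mono hk cd (le_max_left _ _) n hf]
      simp only [Option.bind_some]
      rw [S6.findB_eq_find hk cd (V n) (hEx n)
        (lt_of_lt_of_le (Nat.lt_succ_self _) (le_max_right _ _))]
      simp only [Option.bind_some]
      rw [hdec n]
      show some (S6.stepV (blk n)) = some (V (n + 1))
      rw [hVsucc n]
      rfl
  have hfuelU : ∀ n, ∃ fuel, S6.uF hk cd n fuel = some (U n) := by
    intro n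
    obtain ⟨fuel, hf⟩ := hfuelV n
    refine ⟨max fuel (Nat.find (hEx n) + 1), ?_⟩
    rw [S6.uF, S6.chainV_mono hk cd (le_max_left _ _) n hf]
    simp only [Option.bind_some]
    rw [S6.findB_eq_find hk cd (V n) (hEx n)
      (lt_of_lt_of_le (Nat.lt_succ_self _) (le_max_right _ _))]
    simp only [Option.bind_some]
    rw [hdec n]
    rfl
  have hcomp : Computable U := by
    have hpart : Partrec fun n => Nat.rfindOpt (S6.uF hk cd n) :=
      Partrec.rfindOpt (S6.computable_uF hk cd)
    apply Partrec.of_eq_tot hpart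
    intro n
    have hmono : ∀ {a : List (Fin k)} {m m' : ℕ}, m ≤ m' →
        a ∈ S6.uF hk cd n m → a ∈ S6.uF hk cd n m' := by
      intro a m m' hmm ham
      rw [Option.mem_def] at ham ⊢
      exact S6.uF_mono hk cd hmm ham
    rw [Nat.rfindOpt_mono hmono]
    obtain ⟨fuel, hf⟩ := hfuelU n
    exact ⟨fuel, Option.mem_def.2 hf⟩
  refine ⟨U, hcomp, fun n => hlia n, ?_⟩
  intro n m hnm
  rcases Nat.lt_or_ge n m with h | h
  · exact (hanti n m h).1
  · have h' : m < n := by omega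
    exact (hanti m n h').2
end

section
/- Fix an integer p ≥ 2 and let φ_p(n) denote the first nonzero digit of n in base p (i.e., the digit at the lowest position where the base-p expansion of n is nonzero — equivalently, (n / p^k) mod p where p^k is the largest power of p dividing n). Let w_p be the infinite word φ_p(1)φ_p(2)φ_p(3).... Then for every finite factor w of w_p there exists k such that w appears in w_p periodically with period p^k: there is a position i with w appearing at positions i + j·p^k for all j ≥ 0. -/
/-- The first nonzero digit in the base-`p` expansion of `n` (reading from the least
significant digit): `(n / p^k) % p` where `p^k` is the largest power of `p` dividing `n`. -/
def firstDigit (p n : ℕ) : ℕ := (n / p ^ padicValNat p n) % p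

/-- The Toeplitz-type word `w_p`: its `i`-th letter is the first nonzero base-`p` digit
of `i + 1`. -/
def wp (p : ℕ) (i : ℕ) : ℕ := firstDigit p (i + 1)

/-- The finite word `w` occurs in `w_p` at position `i`. -/
def OccursAtW (p : ℕ) (w : List ℕ) (i : ℕ) : Prop :=
  ∀ j : Fin w.length, wp p (i + (j : ℕ)) = w.get j

/-- The subshift `X_p`: all bi-infinite configurations all of whose finite factors are
factors of `w_p`. -/
def Xp (p : ℕ) : Set (ℤ → ℕ) :=
  {c | ∀ (i : ℤ) (n : ℕ), ∃ m : ℕ, ∀ j : ℕ, j < n → c (i + (j : ℕ)) = wp p (m + j)}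

lemma padicValNat_add_mul_pow (p : ℕ) (hp : 2 ≤ p) {n k : ℕ} (hn : 0 < n)
    (hnk : n < p ^ k) (j : ℕ) :
    padicValNat p (n + j * p ^ k) = padicValNat p n := by
  have hp1 : p ≠ 1 := by omega
  set v := padicValNat p n with hv
  have hdvd : p ^ v ∣ n := pow_padicValNat_dvd
  have hfin : FiniteMultiplicity p n := Nat.finiteMultiplicity_iff.2 ⟨hp1, hn⟩
  have hem : v = multiplicity p n := padicValNat_def' hp1 hn.ne'
  have hnot : ¬ p ^ (v + 1) ∣ n := by
    apply hfin.not_pow_dvd_of_multiplicity_lt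
    omega
  have hvk : v < k := by
    by_contra h
    push_neg at h
    have h1 : p ^ k ≤ p ^ v := pow_le_pow_right₀ (by omega) h
    have h2 : p ^ v ≤ n := Nat.le_of_dvd hn hdvd
    omega
  have hdvd2 : p ^ v ∣ n + j * p ^ k :=
    dvd_add hdvd (Dvd.dvd.mul_left (pow_dvd_pow p hvk.le) j)
  have hnot2 : ¬ p ^ (v + 1) ∣ n + j * p ^ k := by
    intro h
    apply hnot
    have h3 : p ^ (v + 1) ∣ j * p ^ k := Dvd.dvd.mul_left (pow_dvd_pow p (by omega)) j
    exact (Nat.dvd_add_iff_left h3).mpr h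
  have hm : 0 < n + j * p ^ k := by omega
  rw [padicValNat_def' hp1 hm.ne', multiplicity_eq_of_dvd_of_not_dvd hdvd2 hnot2]

lemma firstDigit_add_mul_pow (p : ℕ) (hp : 2 ≤ p) {n k : ℕ} (hn : 0 < n)
    (hnk : n < p ^ k) (j : ℕ) :
    firstDigit p (n + j * p ^ k) = firstDigit p n := by
  have hval := padicValNat_add_mul_pow p hp hn hnk j
  unfold firstDigit
  rw [hval]
  set v := padicValNat p n with hv
  have hdvd : p ^ v ∣ n := pow_padicValNat_dvd
  have hvk : v < k := by
    by_contra h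
    push_neg at h
    have : p ^ k ≤ p ^ v := pow_le_pow_right₀ (by omega) h
    have : p ^ v ≤ n := Nat.le_of_dvd hn hdvd
    omega
  -- rewrite j * p^k = (j * p^(k-v)) * p^v
  have hk : j * p ^ k = j * p ^ (k - v) * p ^ v := by
    rw [mul_assoc, ← pow_add]
    congr 2
    omega
  rw [hk, Nat.add_mul_div_right _ _ (Nat.pow_pos (n := v) (by omega))]
  have hkv : k - v = (k - v - 1) + 1 := by omega
  rw [hkv, pow_succ, ← mul_assoc, Nat.add_mul_mod_self_right]

/-- Every factor of `w_p` appears in `w_p` periodically with period `p^k` for some `k`. -/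
theorem stmt8 (p : ℕ) (hp : 2 ≤ p) (w : List ℕ) (hw : ∃ i : ℕ, OccursAtW p w i) :
    ∃ (k : ℕ) (i : ℕ), ∀ j : ℕ, OccursAtW p w (i + j * p ^ k) := by
  obtain ⟨i, hi⟩ := hw
  set k := i + w.length + 1 with hk
  refine ⟨k, i, fun j jj => ?_⟩
  have hbig : i + w.length + 1 < p ^ k :=
    Nat.lt_pow_self (by omega)
  have hjj : (jj : ℕ) < w.length := jj.2
  have key : wp p (i + j * p ^ k + jj) = wp p (i + jj) := by
    unfold wp
    have h1 : i + j * p ^ k + jj + 1 = (i + jj + 1) + j * p ^ k := by ring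
    rw [h1]
    exact firstDigit_add_mul_pow p hp (by omega) (by omega) j
  rw [key]
  exact hi jj
end

section
/- Let w_p be the Toeplitz-type word with w_p(n) = first nonzero base-p digit of n+1, and let X_p ⊆ ({1,...,p-1})^Z be the subshift of all bi-infinite configurations all of whose finite factors are factors of w_p. Then X_p is a minimal subshift. -/

lemma padic_eq (p n v : ℕ) (hp : 1 < p) (hn : 0 < n) (h1 : p ^ v ∣ n) (h2 : ¬ p ^ (v+1) ∣ n) :
    padicValNat p n = v := by
  have h3 := (Nat.pow_dvd_iff_le_padicValNat (by omega : p ≠ 1) (by omega : n ≠ 0)).mp h1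
  have h4 := Nat.maxPowDiv.pow_dvd (p := p) (n := n)
  by_contra hne
  have : v + 1 ≤ padicValNat p n := by omega
  exact h2 ((pow_dvd_pow p this).trans h4)

lemma firstDigit_add (p n L k : ℕ) (hp : 1 < p) (hn : 0 < n) (hnL : n < p ^ L) :
    firstDigit p (n + k * p ^ L) = firstDigit p n := by
  set v := padicValNat p n with hv
  have hdvd : p ^ v ∣ n := pow_padicValNat_dvd
  have hnd : ¬ p ^ (v+1) ∣ n := by
    intro h
    have := (Nat.pow_dvd_iff_le_padicValNat (by omega : p ≠ 1) (by omega : n ≠ 0)).mp h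
    rw [hv] at *
    omega
  have hvL : v < L := by
    have h1 : p ^ v ≤ n := Nat.le_of_dvd hn hdvd
    have := (Nat.pow_lt_pow_iff_right hp).mp (lt_of_le_of_lt h1 hnL)
    exact this
  have hdL : p ^ (v+1) ∣ p ^ L := pow_dvd_pow p hvL
  have hN : padicValNat p (n + k * p ^ L) = v := by
    apply padic_eq p _ v hp (by omega)
    · exact Nat.dvd_add hdvd (Dvd.dvd.mul_left ((pow_dvd_pow p hvL.le).trans dvd_rfl) k)
    · intro h
      exact hnd ((Nat.dvd_add_right (Dvd.dvd.mul_left hdL k)).mp (by simpa [Nat.add_comm] using h))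
  unfold firstDigit
  rw [hN, ← hv]
  obtain ⟨a, ha⟩ := hdvd
  have hL : p ^ L = p ^ v * p ^ (L - v) := by rw [← pow_add]; congr 1; omega
  have hdivN : (n + k * p ^ L) / p ^ v = a + k * p ^ (L - v) := by
    rw [ha, hL]
    rw [show p ^ v * a + k * (p ^ v * p ^ (L-v)) = p ^ v * (a + k * p ^ (L-v)) by ring]
    exact Nat.mul_div_cancel_left _ (pow_pos (by omega : 0 < p) v)
  rw [hdivN, ha, Nat.mul_div_cancel_left _ (pow_pos (by omega : 0 < p) v)]
  have hd : p ∣ k * p ^ (L - v) := Dvd.dvd.mul_left (dvd_pow_self p (by omega)) k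
  obtain ⟨t, ht⟩ := hd
  rw [ht, Nat.add_mul_mod_self_left]

/-- The subshift `X_p` is minimal: every finite factor of a configuration of `X_p`
appears in every configuration of `X_p`. -/
theorem stmt9 (p : ℕ) (hp : 2 ≤ p) :
    ∀ c ∈ Xp p, ∀ c' ∈ Xp p, ∀ (i : ℤ) (n : ℕ),
      ∃ i' : ℤ, ∀ j : ℕ, j < n → c' (i' + (j : ℕ)) = c (i + (j : ℕ)) := by
  intro c hc c' hc' i n
  have hp' : 1 < p := by omega
  obtain ⟨m, hm⟩ := hc i n
  set L := m + n with hL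
  have hPmn : m + n < p ^ L := lt_of_lt_of_le Nat.lt_two_pow_self (Nat.pow_le_pow_left hp L)
  set P := p ^ L with hPdef
  have hP0 : 0 < P := by positivity
  obtain ⟨m', hm'⟩ := hc' 0 (P + m + n)
  set k := m' / P + 1 with hk
  have h1 : P * (m' / P) + m' % P = m' := Nat.div_add_mod m' P
  have h2 : m' % P < P := Nat.mod_lt _ hP0
  have hkP : k * P = P * (m' / P) + P := by rw [hk]; ring
  have hks1 : m' < k * P := by omega
  have hks2 : k * P ≤ m' + P := by omega
  set d := m + k * P - m' with hd
  refine ⟨(d : ℤ), fun j hj => ?_⟩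
  have hdj : d + j < P + m + n := by omega
  have h3 := hm' (d + j) hdj
  have h4 := hm j hj
  have harg : (d : ℤ) + (j : ℕ) = 0 + ((d + j : ℕ) : ℤ) := by push_cast; ring
  rw [harg, h3, h4]
  have hmd : m' + (d + j) = (m + j) + k * P := by omega
  rw [hmd]
  show wp p ((m + j) + k * P) = wp p (m + j)
  unfold wp
  rw [show m + j + k * P + 1 = (m + j + 1) + k * P by ring]
  exact firstDigit_add p (m + j + 1) L k hp' (by omega) (by omega)
end
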